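/- arXiv:2401.02666 — 4 statements merged into one kernel-verified Lean document; each statement's English description precedes it below -/
import Mathlib

section
/- In the bounded-degree setting with a critical hospital, if for every element X ∈ V⁺ there exists an element Y ∈ V⁻ such that there is a directed path from X to Y in the directed graph 𝐃 = (V, A), then there exists a stable matching in G. -/
open Classical

variable {D H : Type}

def edgesD (E : Set (D × H)) (d : D) : Set (D × H) := {e ∈ E | e.1 = d}

def edgesH (E : Set (D × H)) (h : H) : Set (D × H) := {e ∈ E | e.2 = h}

def optD (E : Set (D × H)) (d : D) : Set (Option (D × H)) :=
  insert none (some '' edgesD E d)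

def optH (E : Set (D × H)) (h : H) : Set (Option (D × H)) :=
  insert none (some '' edgesH E h)

/-- An instance of the strongly stable matching problem with closures:
a bipartite graph between doctors `D` and hospitals `H` with edge set `E`,
a set `S` of closable hospitals, and for each vertex a transitive, total
preference relation on its incident edges together with `∅` (modelled by
`Option`, where `none` plays the role of `∅`), such that every incident
edge is strictly preferred to `∅`. -/
structure SSMC (D H : Type) where
  E : Set (D × H)
  S : Set H
  prefD : D → Option (D × H) → Option (D × H) → Prop
  prefH : H → Option (D × H) → Option (D × H) → Prop
  prefD_trans : ∀ d, ∀ e ∈ optD E d, ∀ f ∈ optD E d, ∀ g ∈ optD E d,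
    prefD d e f → prefD d f g → prefD d e g
  prefD_total : ∀ d, ∀ e ∈ optD E d, ∀ f ∈ optD E d, prefD d e f ∨ prefD d f e
  prefD_none : ∀ d, ∀ e ∈ edgesD E d, prefD d (some e) none ∧ ¬ prefD d none (some e)
  prefH_trans : ∀ h, ∀ e ∈ optH E h, ∀ f ∈ optH E h, ∀ g ∈ optH E h,
    prefH h e f → prefH h f g → prefH h e g
  prefH_total : ∀ h, ∀ e ∈ optH E h, ∀ f ∈ optH E h, prefH h e f ∨ prefH h f e
  prefH_none : ∀ h, ∀ e ∈ edgesH E h, prefH h (some e) none ∧ ¬ prefH h none (some e)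

namespace SSMC

variable (I : SSMC D H)

/-- `e ≻_d f` -/
def strictD (d : D) (e f : Option (D × H)) : Prop := I.prefD d e f ∧ ¬ I.prefD d f e

/-- `e ∼_d f` -/
def simD (d : D) (e f : Option (D × H)) : Prop := I.prefD d e f ∧ I.prefD d f e

/-- `e ≻_h f` -/
def strictH (h : H) (e f : Option (D × H)) : Prop := I.prefH h e f ∧ ¬ I.prefH h f e

/-- `e ∼_h f` -/
def simH (h : H) (e f : Option (D × H)) : Prop := I.prefH h e f ∧ I.prefH h f e

/-- A matching: a subset of `E` with at most one edge at each vertex. -/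
def isMatching (μ : Set (D × H)) : Prop :=
  μ ⊆ I.E ∧ (∀ e ∈ μ, ∀ f ∈ μ, e.1 = f.1 → e = f) ∧
    (∀ e ∈ μ, ∀ f ∈ μ, e.2 = f.2 → e = f)

end SSMC

/-- `μ(d)`: the edge of `μ` at doctor `d` (or `none`). -/
noncomputable def muD (μ : Set (D × H)) (d : D) : Option (D × H) :=
  if h : ∃ e, e ∈ μ ∧ e.1 = d then some h.choose else none

/-- `μ(h)`: the edge of `μ` at hospital `h` (or `none`). -/
noncomputable def muH (μ : Set (D × H)) (h : H) : Option (D × H) :=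
  if hh : ∃ e, e ∈ μ ∧ e.2 = h then some hh.choose else none

namespace SSMC

variable (I : SSMC D H)

/-- `e` blocks the matching `μ`: `e ∈ E \ μ`, `e` weakly blocks `μ` on both of its
endpoints and strongly blocks `μ` on at least one of them (where blocking on a
hospital `h ∈ S` additionally requires `μ(h) ≠ ∅`). -/
def blocks (μ : Set (D × H)) (e : D × H) : Prop :=
  e ∈ I.E ∧ e ∉ μ ∧
  I.prefD e.1 (some e) (muD μ e.1) ∧
  (I.prefH e.2 (some e) (muH μ e.2) ∧ (e.2 ∈ I.S → muH μ e.2 ≠ none)) ∧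
  (I.strictD e.1 (some e) (muD μ e.1) ∨
    (I.strictH e.2 (some e) (muH μ e.2) ∧ (e.2 ∈ I.S → muH μ e.2 ≠ none)))

/-- A stable matching: no edge blocks it. -/
def stable (μ : Set (D × H)) : Prop :=
  I.isMatching μ ∧ ∀ e, ¬ I.blocks μ e

/-- `Ch_D(F)`: union over doctors `d` of the most preferred edges of `F(d)`. -/
def ChD (F : Set (D × H)) : Set (D × H) :=
  {e ∈ F | ∀ f ∈ F, f.1 = e.1 → I.prefD e.1 (some e) (some f)}

/-- `Ch_H(F)`: union over hospitals `h` of the most preferred edges of `F(h)`. -/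
def ChH (F : Set (D × H)) : Set (D × H) :=
  {e ∈ F | ∀ f ∈ F, f.2 = e.2 → I.prefH e.2 (some e) (some f)}

/-- `Ch(F) = Ch_H(Ch_D(F))`. -/
def Ch (F : Set (D × H)) : Set (D × H) := I.ChH (I.ChD F)

/-- `e ≻_d F` for a flat set `F`. -/
def dSucc (F : Set (D × H)) (e : D × H) : Prop :=
  (∀ f ∈ F, f.1 ≠ e.1) ∨ ∃ f ∈ F, f.1 = e.1 ∧ I.strictD e.1 (some e) (some f)

/-- `e ∼_d F` for a flat set `F`. -/
def dSim (F : Set (D × H)) (e : D × H) : Prop :=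
  ∃ f ∈ F, f.1 = e.1 ∧ I.simD e.1 (some e) (some f)

/-- `block(F)` for a flat set `F ⊆ E`. -/
def setBlock (F : Set (D × H)) : Set (D × H) :=
  {e | e ∈ I.E ∧ e ∉ F ∧ (∃ f ∈ F, f.2 = e.2) ∧
    (I.dSucc F e ∨ I.dSim F e) ∧
    (I.dSucc F e → ∃ f ∈ F, f.2 = e.2 ∧ I.prefH e.2 (some e) (some f)) ∧
    (I.dSim F e → ∃ f ∈ F, f.2 = e.2 ∧ I.strictH e.2 (some e) (some f))}

/-- `L = Ch(E \ R)`. -/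
def Lset (R : Set (D × H)) : Set (D × H) := I.Ch (I.E \ R)

/-- The pre-processing conditions (R1)–(R5) on a pair `(R, μ)`. -/
def preproc (R μ : Set (D × H)) : Prop :=
  R ⊆ I.E ∧ I.isMatching μ ∧
  -- (R1)
  (∀ σ, I.stable σ → ∀ e ∈ R, e ∉ σ) ∧
  -- (R2)
  μ ⊆ I.Ch (I.E \ R) ∧
  -- (R3)
  (∀ d : D, (∃ e ∈ I.E \ R, e.1 = d) → ∃ e ∈ μ, e.1 = d) ∧
  -- (R4)
  R ∩ I.setBlock (I.Ch (I.E \ R)) = ∅ ∧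
  -- (R5)
  (∀ d : D, ∀ e ∈ R, e.1 = d → ∀ f ∈ I.E \ R, f.1 = d → I.prefD d (some e) (some f))

/-- `h` is a critical hospital with respect to `(R, μ)`. -/
def critical (R μ : Set (D × H)) (h : H) : Prop :=
  h ∉ I.S ∧ (∀ e ∈ μ, e.2 ≠ h) ∧
  ((∃ e ∈ I.Ch (I.E \ R), e.2 = h) ∨ (∃ e ∈ R, e.2 = h))

/-- Assumption (★): every doctor strictly prefers any acceptable hospital
outside `S` to any acceptable hospital in `S`. -/
def starAssumption : Prop :=
  ∀ (d : D) (h h' : H), (d, h) ∈ I.E → (d, h') ∈ I.E → h ∈ I.S → h' ∉ I.S →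
    I.strictD d (some (d, h')) (some (d, h))

end SSMC

/-- Adjacency relation on `D ⊕ H` induced by an edge set `L`. -/
def adjRel (L : Set (D × H)) : (D ⊕ H) → (D ⊕ H) → Prop
  | Sum.inl d, Sum.inr h => (d, h) ∈ L
  | Sum.inr h, Sum.inl d => (d, h) ∈ L
  | _, _ => False

/-- `X` is a connected component of the bipartite graph `(D, H; L)`. -/
def isComponent (L : Set (D × H)) (X : Set (D ⊕ H)) : Prop :=
  ∃ v ∈ X, X = {w | Relation.ReflTransGen (adjRel L) v w}

/-- `D_X`: the doctors in `X`. -/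
def Dside (X : Set (D ⊕ H)) : Set D := {d | Sum.inl d ∈ X}

/-- `H_X`: the hospitals in `X`. -/
def Hside (X : Set (D ⊕ H)) : Set H := {h | Sum.inr h ∈ X}

namespace SSMC

variable (I : SSMC D H)

/-- `Leaf_L(D_X)`: the doctors of `X` incident to exactly one edge of `L = Ch(E \ R)`. -/
def leafSet (R : Set (D × H)) (X : Set (D ⊕ H)) : Set D :=
  {d ∈ Dside X | (edgesD (I.Lset R) d).ncard = 1}

/-- `X ∈ 𝓒`: connected component of `G* = (D, H; Ch(E \ R))` with at least two vertices. -/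
def memC (R : Set (D × H)) (X : Set (D ⊕ H)) : Prop :=
  isComponent (I.Lset R) X ∧ 2 ≤ X.ncard

/-- `X ∈ 𝓟`. -/
def memP (R : Set (D × H)) (X : Set (D ⊕ H)) : Prop :=
  I.memC R X ∧ (Dside X).ncard = (Hside X).ncard

/-- `X ∈ 𝓠`. -/
def memQ (R : Set (D × H)) (X : Set (D ⊕ H)) : Prop :=
  I.memC R X ∧ (Dside X).ncard < (Hside X).ncard

/-- `X ∈ 𝓟*`. -/
def memPstar (R : Set (D × H)) (X : Set (D ⊕ H)) : Prop :=
  I.memP R X ∧ (I.leafSet R X).ncard = 1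

/-- `X ∈ 𝓡`: a component consisting of a single hospital `h ∈ H \ S` with `R(h) ≠ ∅`. -/
def memRcal (R : Set (D × H)) (X : Set (D ⊕ H)) : Prop :=
  isComponent (I.Lset R) X ∧
    ∃ h : H, X = {Sum.inr h} ∧ h ∉ I.S ∧ ∃ e ∈ R, e.2 = h

end SSMC

namespace SSMC

variable (I : SSMC D H)

/-- The vertex set `𝓥 = 𝓟* ∪ 𝓠 ∪ 𝓡` of the directed graph `𝐃`. -/
def memV (R : Set (D × H)) (X : Set (D ⊕ H)) : Prop :=
  I.memPstar R X ∨ I.memQ R X ∨ I.memRcal R X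

/-- The arc relation of the directed graph `𝐃 = (𝓥, A)`: there is an arc from `X`
to `Y` iff `X, Y ∈ 𝓥` are distinct and conditions (P1)–(P4) hold, phrased via the
(unique) leaf doctor `d_Y` of `Y`, the hospital `h_Y` with `(d_Y, h_Y) ∈ L`, and
the other hospital `h̄_Y` acceptable to `d_Y`. -/
def arc (R μ : Set (D × H)) (X Y : Set (D ⊕ H)) : Prop :=
  I.memV R X ∧ I.memV R Y ∧ X ≠ Y ∧ I.memPstar R Y ∧
  ∃ (dY : D) (hY hbY : H),
    dY ∈ I.leafSet R Y ∧ (dY, hY) ∈ I.Lset R ∧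
    hbY ≠ hY ∧ (dY, hbY) ∈ I.E ∧
    -- (P1)
    (edgesD I.E dY).ncard = 2 ∧
    Sum.inr hbY ∈ X ∧
    I.strictD dY (some (dY, hY)) (some (dY, hbY)) ∧
    -- (P2)
    (I.memPstar R X →
      ∃ (dX : D) (hX : H), dX ∈ I.leafSet R X ∧ (dX, hX) ∈ I.Lset R ∧ hX = hbY ∧
        I.strictH hbY (some (dY, hbY)) (some (dX, hbY))) ∧
    -- (P3)
    (I.memQ R X →
      ∃ e ∈ I.Lset R, e.2 = hbY ∧ I.prefH hbY (some (dY, hbY)) (some e)) ∧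
    -- (P4)
    (I.memRcal R X →
      ∀ e ∈ R, e.2 = hbY →
        (I.simD e.1 (some e) (muD μ e.1) → I.prefH hbY (some (dY, hbY)) (some e)) ∧
        (I.strictD e.1 (some e) (muD μ e.1) → I.strictH hbY (some (dY, hbY)) (some e)))

/-- `X ∈ 𝓥⁺`. -/
def memVplus (R : Set (D × H)) (X : Set (D ⊕ H)) : Prop :=
  (I.memQ R X ∧ ∀ h ∈ Hside X, h ∉ I.S) ∨ I.memRcal R X

/-- `X ∈ 𝓥⁻`. -/
def memVminus (R : Set (D × H)) (X : Set (D ⊕ H)) : Prop :=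
  I.memPstar R X ∧ ∃ dX ∈ I.leafSet R X, ∃ hX : H, (dX, hX) ∈ I.Lset R ∧ hX ∈ I.S

end SSMC

section AuxHelpers

open Classical

/-- maximum of a finite set under a total transitive relation -/
theorem myExistsMax {α : Type*} {r : α → α → Prop} :
    ∀ (s : Finset α), (∀ a ∈ s, ∀ b ∈ s, r a b ∨ r b a) →
    (∀ a ∈ s, ∀ b ∈ s, ∀ c ∈ s, r a b → r b c → r a c) →
    s.Nonempty → ∃ a ∈ s, ∀ b ∈ s, r a b := by
  classical
  intro s
  induction s using Finset.induction_on with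
  | empty => intro _ _ h; exact absurd h (by simp)
  | @insert x t hx ih =>
    intro htot htrans _
    by_cases ht : t.Nonempty
    · obtain ⟨m, hm, hmax⟩ := ih
        (fun a ha b hb => htot a (Finset.mem_insert_of_mem ha) b (Finset.mem_insert_of_mem hb))
        (fun a ha b hb c hc => htrans a (Finset.mem_insert_of_mem ha)
          b (Finset.mem_insert_of_mem hb) c (Finset.mem_insert_of_mem hc)) ht
      have hmi : m ∈ insert x t := Finset.mem_insert_of_mem hm
      have hxi : x ∈ insert x t := Finset.mem_insert_self x t
      rcases htot x hxi m hmi with hxm | hmx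
      · refine ⟨x, hxi, ?_⟩
        intro b hb
        rcases Finset.mem_insert.1 hb with rfl | hb'
        · rcases htot b hb b hb with h | h <;> exact h
        · exact htrans x hxi m hmi b (Finset.mem_insert_of_mem hb') hxm (hmax b hb')
      · refine ⟨m, hmi, ?_⟩
        intro b hb
        rcases Finset.mem_insert.1 hb with rfl | hb'
        · exact hmx
        · exact hmax b hb'
    · refine ⟨x, Finset.mem_insert_self x t, ?_⟩
      intro b hb
      rcases Finset.mem_insert.1 hb with rfl | hb'
      · rcases htot b hb b hb with h | h <;> exact h
      · exact absurd ⟨b, hb'⟩ ht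

theorem myExistsMaxSet {α : Type*} {r : α → α → Prop} {s : Set α} (hfin : s.Finite)
    (htot : ∀ a ∈ s, ∀ b ∈ s, r a b ∨ r b a)
    (htrans : ∀ a ∈ s, ∀ b ∈ s, ∀ c ∈ s, r a b → r b c → r a c)
    (hne : s.Nonempty) : ∃ a ∈ s, ∀ b ∈ s, r a b := by
  classical
  obtain ⟨a, ha, hmax⟩ := myExistsMax (r := r) hfin.toFinset
    (by simpa using htot) (by simpa using htrans) (by simpa using hne)
  exact ⟨a, by simpa using ha, fun b hb => hmax b (by simpa using hb)⟩

/-- chains of a given length -/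
def chainN {α : Type*} (r : α → α → Prop) : ℕ → α → α → Prop
  | 0, a, b => a = b
  | n+1, a, b => ∃ c, r a c ∧ chainN r n c b

theorem chainN_rtg {α : Type*} {r : α → α → Prop} :
    ∀ {n : ℕ} {a b : α}, chainN r n a b → Relation.ReflTransGen r a b := by
  intro n
  induction n with
  | zero => intro a b h; cases h; rfl
  | succ n ih =>
    rintro a b ⟨c, hac, hcb⟩
    exact Relation.ReflTransGen.head hac (ih hcb)

theorem chainN_snoc {α : Type*} {r : α → α → Prop} :
    ∀ {n : ℕ} {a b c : α}, chainN r n a b → r b c → chainN r (n + 1) a c := by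
  intro n
  induction n with
  | zero => intro a b c h hr; cases h; exact ⟨c, hr, rfl⟩
  | succ n ih =>
    rintro a b c ⟨x, hax, hxb⟩ hr
    exact ⟨x, hax, ih hxb hr⟩

theorem rtg_chainN {α : Type*} {r : α → α → Prop} {a b : α}
    (h : Relation.ReflTransGen r a b) : ∃ n, chainN r n a b := by
  induction h with
  | refl => exact ⟨0, rfl⟩
  | tail _ hbc ih => obtain ⟨n, hc⟩ := ih; exact ⟨n + 1, chainN_snoc hc hbc⟩

theorem chainN_last {α : Type*} {r : α → α → Prop} :
    ∀ {n : ℕ} {a b : α}, chainN r (n + 1) a b → ∃ c, chainN r n a c ∧ r c b := by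
  intro n
  induction n with
  | zero => rintro a b ⟨c, hac, hcb⟩; cases hcb; exact ⟨a, rfl, hac⟩
  | succ n ih =>
    rintro a b ⟨c, hac, hcb⟩
    obtain ⟨x, hcx, hxb⟩ := ih hcb
    exact ⟨x, ⟨c, hac, hcx⟩, hxb⟩

end AuxHelpers
section AuxGraph

open Classical

variable {D H : Type}

theorem adjRel_symm {L : Set (D × H)} {a b : D ⊕ H} (h : adjRel L a b) : adjRel L b a := by
  cases a <;> cases b <;> simp_all [adjRel]

theorem X_decomp (X : Set (D ⊕ H)) :
    X = (Sum.inl '' Dside X) ∪ (Sum.inr '' Hside X) := by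
  ext w
  cases w with
  | inl d => simp [Dside]
  | inr h => simp [Hside]

theorem rtg_symm {α : Type*} {r : α → α → Prop} (hs : ∀ a b, r a b → r b a) {a b : α}
    (h : Relation.ReflTransGen r a b) : Relation.ReflTransGen r b a := by
  induction h with
  | refl => exact Relation.ReflTransGen.refl
  | tail _ hbc ih => exact Relation.ReflTransGen.head (hs _ _ hbc) ih

theorem ncard_X [Fintype D] [Fintype H] (X : Set (D ⊕ H)) :
    X.ncard = (Dside X).ncard + (Hside X).ncard := by
  nth_rewrite 1 [X_decomp X]
  rw [Set.ncard_union_eq ?_ (Set.toFinite _) (Set.toFinite _)]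
  · rw [Set.ncard_image_of_injective _ Sum.inl_injective,
      Set.ncard_image_of_injective _ Sum.inr_injective]
  · rw [Set.disjoint_left]
    rintro a ⟨d, _, rfl⟩ ⟨h, _, hh⟩
    exact absurd hh (by simp)

/-- vertices of a component are mutually reachable -/
theorem comp_reach {L : Set (D × H)} {X : Set (D ⊕ H)} (hX : isComponent L X)
    {a b : D ⊕ H} (ha : a ∈ X) (hb : b ∈ X) :
    Relation.ReflTransGen (adjRel L) a b := by
  obtain ⟨v, hv, rfl⟩ := hX
  have hva : Relation.ReflTransGen (adjRel L) v a := ha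
  have hvb : Relation.ReflTransGen (adjRel L) v b := hb
  exact (rtg_symm (fun _ _ => adjRel_symm) hva).trans hvb

theorem comp_closed {L : Set (D × H)} {X : Set (D ⊕ H)} (hX : isComponent L X)
    {a b : D ⊕ H} (ha : a ∈ X) (hab : Relation.ReflTransGen (adjRel L) a b) : b ∈ X := by
  obtain ⟨v, hv, rfl⟩ := hX
  exact Relation.ReflTransGen.trans ha hab

theorem comp_unique {L : Set (D × H)} {X Y : Set (D ⊕ H)} (hX : isComponent L X)
    (hY : isComponent L Y) {a : D ⊕ H} (ha : a ∈ X) (ha' : a ∈ Y) : X = Y := by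
  ext w
  constructor
  · intro hw
    exact comp_closed hY ha' (comp_reach hX ha hw)
  · intro hw
    exact comp_closed hX ha (comp_reach hY ha' hw)

/-- edge of L with left endpoint in a component: both endpoints in it -/
theorem comp_edge_closed {L : Set (D × H)} {X : Set (D ⊕ H)} (hX : isComponent L X)
    {e : D × H} (he : e ∈ L) :
    (Sum.inl e.1 ∈ X ↔ Sum.inr e.2 ∈ X) := by
  have h1 : adjRel L (Sum.inl e.1) (Sum.inr e.2) := he
  have h2 : adjRel L (Sum.inr e.2) (Sum.inl e.1) := he
  constructor
  · intro h
    exact comp_closed hX h (Relation.ReflTransGen.single h1)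
  · intro h
    exact comp_closed hX h (Relation.ReflTransGen.single h2)

/-- key counting lemma: in a component of a graph whose doctors have degree at
most two, there is at most one more hospital than doctors. -/
theorem comp_bound [Fintype D] [Fintype H] {L : Set (D × H)}
    (hdeg2 : ∀ d : D, (edgesD L d).ncard ≤ 2)
    {X : Set (D ⊕ H)} (hX : isComponent L X) :
    (Hside X).ncard ≤ (Dside X).ncard + 1 := by
  classical
  obtain ⟨v, hvX, hXeq⟩ := hX
  by_cases hsing : X \ {v} = ∅
  · have hXv : X = {v} := by
      apply Set.eq_singleton_iff_unique_mem.2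
      exact ⟨hvX, fun w hw => by
        by_contra hne
        exact absurd (Set.mem_diff_singleton.2 ⟨hw, hne⟩) (by simp [hsing])⟩
    have : (Hside X).ncard ≤ 1 := by
      rcases v with d | h
      · have : Hside X = ∅ := by
          ext h; simp [Hside, hXv]
        simp [this]
      · have : Hside X = {h} := by
          ext h'; simp [Hside, hXv]
        simp [this]
    omega
  -- distance function
  set δ : (D ⊕ H) → ℕ := fun w => sInf {n | chainN (adjRel L) n v w} with hδ
  have hreach : ∀ w ∈ X, {n | chainN (adjRel L) n v w}.Nonempty := by
    intro w hw
    rw [hXeq] at hw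
    obtain ⟨n, hn⟩ := rtg_chainN hw
    exact ⟨n, hn⟩
  set LX : Set (D × H) := {e ∈ L | Sum.inl e.1 ∈ X ∧ Sum.inr e.2 ∈ X} with hLX
  have key : ∀ w ∈ X \ {v}, ∃ e ∈ LX,
      (w = Sum.inl e.1 ∧ δ (Sum.inr e.2) < δ w) ∨
      (w = Sum.inr e.2 ∧ δ (Sum.inl e.1) < δ w) := by
    rintro w ⟨hwX, hwv⟩
    have hne := hreach w hwX
    have hmem : chainN (adjRel L) (δ w) v w := Nat.sInf_mem hne
    have hδ0 : δ w ≠ 0 := by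
      intro h0
      rw [h0] at hmem
      exact hwv (by cases hmem; rfl)
    obtain ⟨m, hm⟩ := Nat.exists_eq_succ_of_ne_zero hδ0
    rw [hm] at hmem
    obtain ⟨c, hc, hcw⟩ := chainN_last hmem
    have hcX : c ∈ X := by
      rw [hXeq]; exact chainN_rtg hc
    have hδc : δ c < δ w := by
      have : δ c ≤ m := Nat.sInf_le hc
      omega
    rcases c with d | h
    · rcases w with d' | h'
      · exact absurd hcw (by simp [adjRel])
      · have heL : (d, h') ∈ L := hcw
        exact ⟨(d, h'), ⟨heL, hcX, hwX⟩, Or.inr ⟨rfl, hδc⟩⟩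
    · rcases w with d' | h'
      · have heL : (d', h) ∈ L := hcw
        exact ⟨(d', h), ⟨heL, hwX, hcX⟩, Or.inl ⟨rfl, hδc⟩⟩
      · exact absurd hcw (by simp [adjRel])
  -- the injection
  obtain ⟨w₀, hw₀⟩ := Set.nonempty_iff_ne_empty.2 hsing
  set F : (D ⊕ H) → D × H := fun w =>
    if hw : w ∈ X \ {v} then (key w hw).choose else (key w₀ hw₀).choose with hF
  have hFspec : ∀ w (hw : w ∈ X \ {v}), F w ∈ LX ∧
      ((w = Sum.inl (F w).1 ∧ δ (Sum.inr (F w).2) < δ w) ∨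
       (w = Sum.inr (F w).2 ∧ δ (Sum.inl (F w).1) < δ w)) := by
    intro w hw
    have := (key w hw).choose_spec
    rw [hF]
    simp only [dif_pos hw]
    exact this
  have hinj : Set.InjOn F (X \ {v}) := by
    intro w1 hw1 w2 hw2 heq
    obtain ⟨_, h1⟩ := hFspec w1 hw1
    obtain ⟨_, h2⟩ := hFspec w2 hw2
    rw [heq] at h1
    rcases h1 with ⟨e1, d1⟩ | ⟨e1, d1⟩ <;> rcases h2 with ⟨e2, d2⟩ | ⟨e2, d2⟩
    · exact e1.trans e2.symm
    · rw [← e2] at d1; rw [← e1] at d2; omega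
    · rw [← e2] at d1; rw [← e1] at d2; omega
    · exact e1.trans e2.symm
  have hmaps : ∀ w ∈ X \ {v}, F w ∈ LX := fun w hw => (hFspec w hw).1
  have hcard1 : (X \ {v}).ncard ≤ LX.ncard :=
    Set.ncard_le_ncard_of_injOn F hmaps hinj (Set.toFinite _)
  -- LX has at most 2 * |Dside X| elements
  have hcard2 : LX.ncard ≤ 2 * (Dside X).ncard := by
    classical
    have hsub : (Set.toFinite LX).toFinset ⊆
        (Set.toFinite (Dside X)).toFinset.biUnion
          (fun d => (Set.toFinite (edgesD L d)).toFinset) := by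
      intro e he
      simp only [Set.Finite.mem_toFinset] at he
      simp only [Finset.mem_biUnion, Set.Finite.mem_toFinset]
      exact ⟨e.1, he.2.1, he.1, rfl⟩
    have h1 := Finset.card_le_card hsub
    have h2 := Finset.card_biUnion_le (s := (Set.toFinite (Dside X)).toFinset)
      (t := fun d => (Set.toFinite (edgesD L d)).toFinset)
    have h3 : ∑ d ∈ (Set.toFinite (Dside X)).toFinset,
        ((Set.toFinite (edgesD L d)).toFinset).card ≤
        (Set.toFinite (Dside X)).toFinset.card * 2 := by
      apply Finset.sum_le_card_nsmul
      intro d _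
      rw [← Set.ncard_eq_toFinset_card (edgesD L d) (Set.toFinite _)]
      exact hdeg2 d
    rw [Set.ncard_eq_toFinset_card LX (Set.toFinite LX),
      Set.ncard_eq_toFinset_card (Dside X) (Set.toFinite (Dside X))]
    calc (Set.toFinite LX).toFinset.card ≤ _ := h1
      _ ≤ _ := h2
      _ ≤ _ := h3
      _ = 2 * (Set.toFinite (Dside X)).toFinset.card := by ring
  have hdiff : (X \ {v}).ncard = X.ncard - 1 := by
    rw [Set.ncard_diff_singleton_of_mem hvX]
  have hXpos : 0 < X.ncard := (Set.ncard_pos (Set.toFinite X)).2 ⟨v, hvX⟩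
  have hsum := ncard_X X
  omega

end AuxGraph
section AuxFlip

open Classical

variable {D H : Type}

theorem deg2_forces [Fintype D] [Fintype H] {E' : Set (D × H)} {d : D} (hdeg : (edgesD E' d).ncard ≤ 2)
    {a b c : H} (ha : (d, a) ∈ E') (hb : (d, b) ∈ E') (hc : (d, c) ∈ E')
    (hab : a ≠ b) : c = a ∨ c = b := by
  by_contra hcon
  push_neg at hcon
  obtain ⟨hca, hcb⟩ := hcon
  have hsub : ({(d, a), (d, b), (d, c)} : Set (D × H)) ⊆ edgesD E' d := by
    rintro e (rfl | rfl | rfl)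
    · exact ⟨ha, rfl⟩
    · exact ⟨hb, rfl⟩
    · exact ⟨hc, rfl⟩
  have h3 : ({(d, a), (d, b), (d, c)} : Set (D × H)).ncard = 3 := by
    rw [Set.ncard_insert_of_notMem (by simp [hab, Ne.symm hca]) (Set.toFinite _),
      Set.ncard_insert_of_notMem (by simp [Ne.symm hcb]) (Set.toFinite _),
      Set.ncard_singleton]
  have := Set.ncard_le_ncard hsub (Set.toFinite _)
  omega

theorem flipLemma [Fintype D] [Fintype H] {L : Set (D × H)}
    (hdeg2 : ∀ d : D, (edgesD L d).ncard ≤ 2) :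
    ∀ (n : ℕ) (ν : Set (D × H)) (h₀ hs : H),
    chainN (adjRel L) n (Sum.inr h₀) (Sum.inr hs) →
    ν ⊆ L →
    (∀ e ∈ ν, ∀ f ∈ ν, e.1 = f.1 → e = f) →
    (∀ e ∈ ν, ∀ f ∈ ν, e.2 = f.2 → e = f) →
    (∀ d : D, (edgesD L d).Nonempty → (edgesD ν d).Nonempty) →
    edgesH ν h₀ = ∅ →
    ∃ ν', ν' ⊆ L ∧
      (∀ e ∈ ν', ∀ f ∈ ν', e.1 = f.1 → e = f) ∧
      (∀ e ∈ ν', ∀ f ∈ ν', e.2 = f.2 → e = f) ∧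
      (∀ d : D, (edgesD ν' d).Nonempty ↔ (edgesD ν d).Nonempty) ∧
      (∀ h : H, edgesH ν' h = ∅ ↔ ((edgesH ν h = ∅ ∧ h ≠ h₀) ∨ h = hs)) := by
  intro n
  induction n using Nat.strong_induction_on with
  | _ n ih =>
    intro ν h₀ hs hchain hsub hlu hru hcov hempty
    match n, hchain with
    | 0, hchain =>
      have hh : h₀ = hs := by
        have : (Sum.inr h₀ : D ⊕ H) = Sum.inr hs := hchain
        exact Sum.inr.inj this
      subst hh
      refine ⟨ν, hsub, hlu, hru, fun d => Iff.rfl, ?_⟩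
      intro h
      constructor
      · intro hh
        by_cases hcase : h = h₀
        · exact Or.inr hcase
        · exact Or.inl ⟨hh, hcase⟩
      · rintro (⟨hh, _⟩ | rfl)
        · exact hh
        · exact hempty
    | (n + 1), hchain =>
      obtain ⟨c, hadj, hrest⟩ := hchain
      match c, hadj with
      | Sum.inl d₁, hadj =>
        have hd₁h₀ : (d₁, h₀) ∈ L := hadj
        match n, hrest with
        | 0, hrest =>
          exact absurd (hrest : (Sum.inl d₁ : D ⊕ H) = Sum.inr hs) (by intro hcon; cases hcon)
        | (m + 1), hrest =>
          obtain ⟨c₂, hadj₂, hrest₂⟩ := hrest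
          match c₂, hadj₂ with
          | Sum.inr h₁, hadj₂ =>
            have hd₁h₁ : (d₁, h₁) ∈ L := hadj₂
            have hLd₁ : (edgesD L d₁).Nonempty := ⟨(d₁, h₀), hd₁h₀, rfl⟩
            obtain ⟨em, hmem, hfst⟩ := hcov d₁ hLd₁
            obtain ⟨ed, eh⟩ := em
            replace hfst : ed = d₁ := hfst
            subst ed
            have hehh₀ : eh ≠ h₀ := by
              rintro rfl
              have : (d₁, eh) ∈ edgesH ν eh := ⟨hmem, rfl⟩
              rw [hempty] at this
              exact this
            by_cases hh : h₁ = h₀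
            · subst hh
              exact ih m (by omega) ν h₁ hs hrest₂ hsub hlu hru hcov hempty
            · have hmh : eh = h₁ := by
                rcases deg2_forces (hdeg2 d₁) hd₁h₀ hd₁h₁ (hsub hmem) (Ne.symm hh) with
                  h | h
                · exact absurd h hehh₀
                · exact h
              subst hmh
              set ν₁ : Set (D × H) := insert (d₁, h₀) (ν \ {(d₁, eh)}) with hν₁
              have hmemν₁ : (d₁, h₀) ∈ ν₁ := Set.mem_insert _ _
              have hsub₁ : ν₁ ⊆ L := by
                rintro e (rfl | ⟨he, _⟩)
                · exact hd₁h₀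
                · exact hsub he
              have hlu₁ : ∀ e ∈ ν₁, ∀ f ∈ ν₁, e.1 = f.1 → e = f := by
                rintro e (rfl | ⟨he, hne⟩) f (rfl | ⟨hf, hnf⟩) h1
                · rfl
                · exact absurd (hlu f hf (d₁, eh) hmem (by rw [← h1])) hnf
                · exact absurd (hlu e he (d₁, eh) hmem (by rw [h1])) hne
                · exact hlu e he f hf h1
              have hru₁ : ∀ e ∈ ν₁, ∀ f ∈ ν₁, e.2 = f.2 → e = f := by
                rintro e (rfl | ⟨he, hne⟩) f (rfl | ⟨hf, hnf⟩) h1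
                · rfl
                · exfalso
                  have : f ∈ edgesH ν h₀ := ⟨hf, by rw [← h1]⟩
                  rw [hempty] at this; exact this
                · exfalso
                  have : e ∈ edgesH ν h₀ := ⟨he, by rw [h1]⟩
                  rw [hempty] at this; exact this
                · exact hru e he f hf h1
              have hcov₁ : ∀ d : D, (edgesD ν₁ d).Nonempty ↔ (edgesD ν d).Nonempty := by
                intro d
                by_cases hd : d = d₁
                · rw [hd]
                  exact ⟨fun _ => ⟨(d₁, eh), hmem, rfl⟩, fun _ => ⟨(d₁, h₀), hmemν₁, rfl⟩⟩
                · have : edgesD ν₁ d = edgesD ν d := by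
                    ext e
                    constructor
                    · rintro ⟨rfl | ⟨he, _⟩, h2⟩
                      · exact absurd ((h2 : d₁ = d).symm) hd
                      · exact ⟨he, h2⟩
                    · rintro ⟨he, h2⟩
                      refine ⟨Or.inr ⟨he, ?_⟩, h2⟩
                      rintro rfl
                      exact hd ((h2 : d₁ = d).symm)
                  rw [this]
              have hνh₁ : edgesH ν eh ≠ ∅ :=
                Set.nonempty_iff_ne_empty.1 ⟨(d₁, eh), hmem, rfl⟩
              have hrel₁ : ∀ h : H, edgesH ν₁ h = ∅ ↔
                  ((edgesH ν h = ∅ ∧ h ≠ h₀) ∨ h = eh) := by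
                intro h
                by_cases hc1 : h = h₀
                · subst hc1
                  simp only [ne_eq, not_true_eq_false, and_false, false_or]
                  constructor
                  · intro hemp
                    exfalso
                    have : (d₁, h) ∈ edgesH ν₁ h := ⟨hmemν₁, rfl⟩
                    rw [hemp] at this; exact this
                  · intro hcon
                    exact absurd hcon.symm hh
                · by_cases hc2 : h = eh
                  · subst hc2
                    simp only [hc1, ne_eq, not_false_eq_true, and_true]
                    constructor
                    · intro _; exact Or.inr trivial
                    · intro _
                      ext e
                      simp only [Set.mem_empty_iff_false, iff_false]
                      rintro ⟨rfl | ⟨he, hne⟩, h2⟩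
                      · exact hc1 h2.symm
                      · exact hne (hru e he (d₁, h) hmem h2)
                  · have heq : edgesH ν₁ h = edgesH ν h := by
                      ext e
                      constructor
                      · rintro ⟨rfl | ⟨he, _⟩, h2⟩
                        · exact absurd h2.symm hc1
                        · exact ⟨he, h2⟩
                      · rintro ⟨he, h2⟩
                        refine ⟨Or.inr ⟨he, ?_⟩, h2⟩
                        rintro rfl
                        exact hc2 h2.symm
                    rw [heq]
                    simp [hc1, hc2]
              have hemp₁ : edgesH ν₁ eh = ∅ := (hrel₁ eh).2 (Or.inr rfl)
              obtain ⟨ν', hs1, hs2, hs3, hs4, hs5⟩ :=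
                ih m (by omega) ν₁ eh hs hrest₂ hsub₁ hlu₁ hru₁
                  (fun d hd => (hcov₁ d).mpr (hcov d hd)) hemp₁
              refine ⟨ν', hs1, hs2, hs3, fun d => (hs4 d).trans (hcov₁ d), ?_⟩
              intro h
              rw [hs5 h]
              constructor
              · rintro (⟨hemp, hne⟩ | rfl)
                · rw [hrel₁ h] at hemp
                  rcases hemp with ⟨h1, h2⟩ | rfl
                  · exact Or.inl ⟨h1, h2⟩
                  · exact absurd rfl hne
                · exact Or.inr rfl
              · rintro (⟨hemp, hne⟩ | rfl)
                · by_cases hch : h = eh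
                  · subst hch
                    exact absurd hemp hνh₁
                  · exact Or.inl ⟨(hrel₁ h).2 (Or.inl ⟨hemp, hne⟩), hch⟩
                · exact Or.inr rfl

end AuxFlip
section AuxSSMC

open Classical

variable {D H : Type}

theorem mem_optD_of_mem {I : SSMC D H} {e : D × H} {d : D} (he : e ∈ I.E) (hd : e.1 = d) :
    some e ∈ optD I.E d := Or.inr ⟨e, ⟨he, hd⟩, rfl⟩

theorem mem_optH_of_mem {I : SSMC D H} {e : D × H} {h : H} (he : e ∈ I.E) (hh : e.2 = h) :
    some e ∈ optH I.E h := Or.inr ⟨e, ⟨he, hh⟩, rfl⟩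

theorem none_mem_optD {I : SSMC D H} {d : D} : (none : Option (D × H)) ∈ optD I.E d :=
  Or.inl rfl

theorem none_mem_optH {I : SSMC D H} {h : H} : (none : Option (D × H)) ∈ optH I.E h :=
  Or.inl rfl

/-- two `ChD`-maximal edges at the same doctor are tied -/
theorem ChD_sim {I : SSMC D H} {F : Set (D × H)} {e f : D × H}
    (he : e ∈ I.ChD F) (hf : f ∈ I.ChD F) (hef : f.1 = e.1) :
    I.prefD e.1 (some e) (some f) ∧ I.prefD e.1 (some f) (some e) := by
  refine ⟨he.2 f hf.1 hef, ?_⟩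
  have := hf.2 e he.1 hef.symm
  rwa [hef] at this

theorem ChD_strict {I : SSMC D H} {F : Set (D × H)} (hFE : F ⊆ I.E) {e g : D × H}
    (he : e ∈ F) (heC : e ∉ I.ChD F) (hg : g ∈ I.ChD F) (hge : g.1 = e.1) :
    I.prefD e.1 (some g) (some e) ∧ ¬ I.prefD e.1 (some e) (some g) := by
  have hgF : g ∈ F := hg.1
  have heo : some e ∈ optD I.E e.1 := mem_optD_of_mem (hFE he) rfl
  have hgo : some g ∈ optD I.E e.1 := mem_optD_of_mem (hFE hgF) hge
  obtain ⟨f, hfF, hfe, hnp⟩ : ∃ f ∈ F, f.1 = e.1 ∧ ¬ I.prefD e.1 (some e) (some f) := by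
    by_contra hcon
    push_neg at hcon
    exact heC ⟨he, fun f hf hfe => hcon f hf hfe⟩
  have hfo : some f ∈ optD I.E e.1 := mem_optD_of_mem (hFE hfF) hfe
  have hfe' : I.prefD e.1 (some f) (some e) := by
    rcases I.prefD_total e.1 (some e) heo (some f) hfo with h | h
    · exact absurd h hnp
    · exact h
  have hgf : I.prefD e.1 (some g) (some f) := by
    have := hg.2 f hfF (hfe.trans hge.symm)
    rwa [hge] at this
  refine ⟨I.prefD_trans e.1 (some g) hgo (some f) hfo (some e) heo hgf hfe', ?_⟩
  intro hcon
  exact hnp (I.prefD_trans e.1 (some e) heo (some g) hgo (some f) hfo hcon hgf)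

/-- two `ChH`-maximal edges at the same hospital are tied -/
theorem ChH_sim {I : SSMC D H} {G : Set (D × H)} {e f : D × H}
    (he : e ∈ I.ChH G) (hf : f ∈ I.ChH G) (hef : f.2 = e.2) :
    I.prefH e.2 (some e) (some f) ∧ I.prefH e.2 (some f) (some e) := by
  refine ⟨he.2 f hf.1 hef, ?_⟩
  have := hf.2 e he.1 hef.symm
  rwa [hef] at this

theorem ChH_strict {I : SSMC D H} {G : Set (D × H)} (hGE : G ⊆ I.E) {e g : D × H}
    (he : e ∈ G) (heC : e ∉ I.ChH G) (hg : g ∈ I.ChH G) (hge : g.2 = e.2) :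
    I.prefH e.2 (some g) (some e) ∧ ¬ I.prefH e.2 (some e) (some g) := by
  have hgG : g ∈ G := hg.1
  have heo : some e ∈ optH I.E e.2 := mem_optH_of_mem (hGE he) rfl
  have hgo : some g ∈ optH I.E e.2 := mem_optH_of_mem (hGE hgG) hge
  obtain ⟨f, hfG, hfe, hnp⟩ : ∃ f ∈ G, f.2 = e.2 ∧ ¬ I.prefH e.2 (some e) (some f) := by
    by_contra hcon
    push_neg at hcon
    exact heC ⟨he, fun f hf hfe => hcon f hf hfe⟩
  have hfo : some f ∈ optH I.E e.2 := mem_optH_of_mem (hGE hfG) hfe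
  have hfe' : I.prefH e.2 (some f) (some e) := by
    rcases I.prefH_total e.2 (some e) heo (some f) hfo with h | h
    · exact absurd h hnp
    · exact h
  have hgf : I.prefH e.2 (some g) (some f) := by
    have := hg.2 f hfG (hfe.trans hge.symm)
    rwa [hge] at this
  refine ⟨I.prefH_trans e.2 (some g) hgo (some f) hfo (some e) heo hgf hfe', ?_⟩
  intro hcon
  exact hnp (I.prefH_trans e.2 (some e) heo (some g) hgo (some f) hfo hcon hgf)

theorem ChD_exists [Fintype D] [Fintype H] {I : SSMC D H} {F : Set (D × H)}
    (hFE : F ⊆ I.E) {d : D} (hne : (edgesD F d).Nonempty) :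
    ∃ e ∈ I.ChD F, e.1 = d := by
  obtain ⟨m, hm, hmax⟩ := myExistsMaxSet (r := fun e f => I.prefD d (some e) (some f))
    (Set.toFinite (edgesD F d))
    (fun a ha b hb => I.prefD_total d (some a) (mem_optD_of_mem (hFE ha.1) ha.2)
      (some b) (mem_optD_of_mem (hFE hb.1) hb.2))
    (fun a ha b hb c hc => I.prefD_trans d (some a) (mem_optD_of_mem (hFE ha.1) ha.2)
      (some b) (mem_optD_of_mem (hFE hb.1) hb.2) (some c) (mem_optD_of_mem (hFE hc.1) hc.2))
    hne
  refine ⟨m, ⟨hm.1, ?_⟩, hm.2⟩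
  intro f hf hfm
  have : f ∈ edgesD F d := ⟨hf, hfm.trans hm.2⟩
  have h := hmax f this
  rw [hm.2]
  exact h

theorem ChH_exists [Fintype D] [Fintype H] {I : SSMC D H} {G : Set (D × H)}
    (hGE : G ⊆ I.E) {h : H} (hne : (edgesH G h).Nonempty) :
    ∃ e ∈ I.ChH G, e.2 = h := by
  obtain ⟨m, hm, hmax⟩ := myExistsMaxSet (r := fun e f => I.prefH h (some e) (some f))
    (Set.toFinite (edgesH G h))
    (fun a ha b hb => I.prefH_total h (some a) (mem_optH_of_mem (hGE ha.1) ha.2)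
      (some b) (mem_optH_of_mem (hGE hb.1) hb.2))
    (fun a ha b hb c hc => I.prefH_trans h (some a) (mem_optH_of_mem (hGE ha.1) ha.2)
      (some b) (mem_optH_of_mem (hGE hb.1) hb.2) (some c) (mem_optH_of_mem (hGE hc.1) hc.2))
    hne
  refine ⟨m, ⟨hm.1, ?_⟩, hm.2⟩
  intro f hf hfm
  have : f ∈ edgesH G h := ⟨hf, hfm.trans hm.2⟩
  have h' := hmax f this
  rw [hm.2]
  exact h'

theorem Lset_sub_ChD {I : SSMC D H} {R : Set (D × H)} :
    I.Lset R ⊆ I.ChD (I.E \ R) := fun _ he => he.1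

theorem ChD_sub {I : SSMC D H} {F : Set (D × H)} : I.ChD F ⊆ F := fun _ he => he.1

theorem Lset_sub {I : SSMC D H} {R : Set (D × H)} : I.Lset R ⊆ I.E \ R :=
  fun e he => ChD_sub (Lset_sub_ChD he)

theorem Lset_sub_E {I : SSMC D H} {R : Set (D × H)} : I.Lset R ⊆ I.E :=
  fun e he => (Lset_sub he).1

/-- muD / muH computation lemmas -/
theorem muD_spec_some {ν : Set (D × H)} (hlu : ∀ e ∈ ν, ∀ f ∈ ν, e.1 = f.1 → e = f)
    {d : D} {e : D × H} (he : e ∈ ν) (hed : e.1 = d) : muD ν d = some e := by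
  unfold muD
  have hex : ∃ f, f ∈ ν ∧ f.1 = d := ⟨e, he, hed⟩
  rw [dif_pos hex]
  have := hex.choose_spec
  have heq : hex.choose = e := hlu _ this.1 _ he (this.2.trans hed.symm)
  rw [heq]

theorem muD_spec_none {ν : Set (D × H)} {d : D} (h : ∀ e ∈ ν, e.1 ≠ d) :
    muD ν d = none := by
  unfold muD
  rw [dif_neg]
  rintro ⟨f, hf, hfd⟩
  exact h f hf hfd

theorem muH_spec_some {ν : Set (D × H)} (hru : ∀ e ∈ ν, ∀ f ∈ ν, e.2 = f.2 → e = f)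
    {h : H} {e : D × H} (he : e ∈ ν) (heh : e.2 = h) : muH ν h = some e := by
  unfold muH
  have hex : ∃ f, f ∈ ν ∧ f.2 = h := ⟨e, he, heh⟩
  rw [dif_pos hex]
  have := hex.choose_spec
  have heq : hex.choose = e := hru _ this.1 _ he (this.2.trans heh.symm)
  rw [heq]

theorem muH_spec_none {ν : Set (D × H)} {h : H} (hh : ∀ e ∈ ν, e.2 ≠ h) :
    muH ν h = none := by
  unfold muH
  rw [dif_neg]
  rintro ⟨f, hf, hfd⟩
  exact hh f hf hfd

theorem muD_some_mem {ν : Set (D × H)} {d : D} {e : D × H}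
    (h : muD ν d = some e) : e ∈ ν ∧ e.1 = d := by
  unfold muD at h
  by_cases hex : ∃ f, f ∈ ν ∧ f.1 = d
  · rw [dif_pos hex] at h
    obtain rfl : hex.choose = e := Option.some.inj h
    exact hex.choose_spec
  · rw [dif_neg hex] at h
    cases h

theorem muH_some_mem {ν : Set (D × H)} {h : H} {e : D × H}
    (hh : muH ν h = some e) : e ∈ ν ∧ e.2 = h := by
  unfold muH at hh
  by_cases hex : ∃ f, f ∈ ν ∧ f.2 = h
  · rw [dif_pos hex] at hh
    obtain rfl : hex.choose = e := Option.some.inj hh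
    exact hex.choose_spec
  · rw [dif_neg hex] at hh
    cases hh

end AuxSSMC
section AuxComp

open Classical

variable {D H : Type}

def compOf (L : Set (D × H)) (w : D ⊕ H) : Set (D ⊕ H) :=
  {w' | Relation.ReflTransGen (adjRel L) w w'}

theorem compOf_isComponent (L : Set (D × H)) (w : D ⊕ H) : isComponent L (compOf L w) :=
  ⟨w, Relation.ReflTransGen.refl, rfl⟩

theorem mem_compOf (L : Set (D × H)) (w : D ⊕ H) : w ∈ compOf L w :=
  Relation.ReflTransGen.refl

theorem comp_single {L : Set (D × H)} {h : H} (hemp : ∀ e ∈ L, e.2 ≠ h) :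
    compOf L (Sum.inr h) = {Sum.inr h} := by
  apply Set.eq_singleton_iff_unique_mem.2
  refine ⟨mem_compOf L _, ?_⟩
  intro w hw
  have : ∀ w', Relation.ReflTransGen (adjRel L) (Sum.inr h) w' → w' = Sum.inr h := by
    intro w' hw'
    induction hw' with
    | refl => rfl
    | tail _ hbc ih =>
      subst ih
      rename_i c _
      cases c with
      | inl d => exact absurd rfl (hemp (d, h) hbc)
      | inr h' => exact hbc.elim
  exact this w hw

/-- a vertex of a component with at least 2 elements has an incident edge -/
theorem comp_mem_edge_D [Fintype D] [Fintype H] {L : Set (D × H)} {X : Set (D ⊕ H)}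
    (hX : isComponent L X) (h2 : 2 ≤ X.ncard) {d : D} (hd : Sum.inl d ∈ X) :
    ∃ h, (d, h) ∈ L := by
  have hne : (X \ {Sum.inl d}).Nonempty := by
    rw [Set.nonempty_iff_ne_empty]
    intro hcon
    have hXd : X ⊆ {Sum.inl d} := by
      intro w hw
      by_contra hne
      exact absurd (Set.mem_diff_singleton.2 ⟨hw, hne⟩) (by simp [hcon])
    have := Set.ncard_le_ncard hXd (Set.toFinite _)
    rw [Set.ncard_singleton] at this
    omega
  obtain ⟨w, hwX, hwd⟩ := hne
  have hreach := comp_reach hX hd hwX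
  obtain ⟨n, hn⟩ := rtg_chainN hreach
  match n, hn with
  | 0, hn => exact absurd hn (by simp at hwd ⊢; exact fun hcon => hwd hcon.symm)
  | (m + 1), hn =>
    obtain ⟨c, hc, _⟩ := hn
    cases c with
    | inl d' => exact hc.elim
    | inr h' => exact ⟨h', hc⟩

theorem comp_mem_edge_H [Fintype D] [Fintype H] {L : Set (D × H)} {X : Set (D ⊕ H)}
    (hX : isComponent L X) (h2 : 2 ≤ X.ncard) {h : H} (hh : Sum.inr h ∈ X) :
    ∃ d, (d, h) ∈ L := by
  have hne : (X \ {Sum.inr h}).Nonempty := by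
    rw [Set.nonempty_iff_ne_empty]
    intro hcon
    have hXd : X ⊆ {Sum.inr h} := by
      intro w hw
      by_contra hne
      exact absurd (Set.mem_diff_singleton.2 ⟨hw, hne⟩) (by simp [hcon])
    have := Set.ncard_le_ncard hXd (Set.toFinite _)
    rw [Set.ncard_singleton] at this
    omega
  obtain ⟨w, hwX, hwd⟩ := hne
  have hreach := comp_reach hX hh hwX
  obtain ⟨n, hn⟩ := rtg_chainN hreach
  match n, hn with
  | 0, hn => exact absurd hn (by simp at hwd ⊢; exact fun hcon => hwd hcon.symm)
  | (m + 1), hn =>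
    obtain ⟨c, hc, _⟩ := hn
    cases c with
    | inl d' => exact ⟨d', hc⟩
    | inr h' => exact hc.elim

theorem two_le_ncard_of_pair {α : Type*} {a b : α} {X : Set α} (hX : X.Finite)
    (ha : a ∈ X) (hb : b ∈ X) (hab : a ≠ b) : 2 ≤ X.ncard := by
  have hsub : ({a, b} : Set α) ⊆ X := by rintro x (rfl | rfl) <;> assumption
  have h2 : ({a, b} : Set α).ncard = 2 := Set.ncard_pair hab
  have := Set.ncard_le_ncard hsub hX
  omega

/-- the directed-graph machinery -/
def hasPathV (I : SSMC D H) (R μ : Set (D × H)) (a : Set (D ⊕ H)) : Prop :=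
  ∃ n Y, I.memVminus R Y ∧ chainN (I.arc R μ) n a Y

noncomputable def nextOf (I : SSMC D H) (R μ : Set (D × H)) (a : Set (D ⊕ H)) :
    Set (D ⊕ H) :=
  if h : ∃ b, I.arc R μ a b ∧ hasPathV I R μ b then h.choose else a

def stepRel (I : SSMC D H) (R μ : Set (D × H)) (a b : Set (D ⊕ H)) : Prop :=
  hasPathV I R μ a ∧ ¬ I.memVminus R a ∧ b = nextOf I R μ a

def ActSet (I : SSMC D H) (R μ : Set (D × H)) : Set (Set (D ⊕ H)) :=
  {Z | ∃ s, I.memVplus R s ∧ Relation.TransGen (stepRel I R μ) s Z}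

theorem nextOf_spec {I : SSMC D H} {R μ : Set (D × H)} {a : Set (D ⊕ H)}
    (hp : hasPathV I R μ a) (hnv : ¬ I.memVminus R a) :
    I.arc R μ a (nextOf I R μ a) ∧ hasPathV I R μ (nextOf I R μ a) := by
  obtain ⟨n, Y, hY, hchain⟩ := hp
  have hcond : ∃ b, I.arc R μ a b ∧ hasPathV I R μ b := by
    match n, hchain with
    | 0, hchain =>
      exact absurd hY (by rw [← (hchain : a = Y)] at hY ⊢; exact hnv)
    | (m + 1), hchain =>
      obtain ⟨b, hab, hrest⟩ := hchain
      exact ⟨b, hab, m, Y, hY, hrest⟩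
  rw [nextOf, dif_pos hcond]
  exact hcond.choose_spec

theorem act_props {I : SSMC D H} {R μ : Set (D × H)} :
    ∀ Z ∈ ActSet I R μ, hasPathV I R μ Z ∧
      ∃ a, I.arc R μ a Z ∧ Z = nextOf I R μ a ∧ ¬ I.memVminus R a ∧
        (a ∈ ActSet I R μ ∨ I.memVplus R a) := by
  rintro Z ⟨s, hs, htg⟩
  induction htg with
  | single hstep =>
    obtain ⟨hp, hnv, rfl⟩ := hstep
    obtain ⟨harc, hp'⟩ := nextOf_spec hp hnv
    exact ⟨hp', s, harc, rfl, hnv, Or.inr hs⟩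
  | tail htg' hstep ih =>
    rename_i b c
    obtain ⟨hp, hnv, rfl⟩ := hstep
    obtain ⟨harc, hp'⟩ := nextOf_spec hp hnv
    exact ⟨hp', b, harc, rfl, hnv, Or.inl ⟨s, hs, htg'⟩⟩

theorem act_succ_mem {I : SSMC D H} {R μ : Set (D × H)} {Z : Set (D ⊕ H)}
    (hZ : Z ∈ ActSet I R μ) (hnv : ¬ I.memVminus R Z) :
    nextOf I R μ Z ∈ ActSet I R μ ∧ I.arc R μ Z (nextOf I R μ Z) := by
  obtain ⟨hp, _⟩ := act_props Z hZ
  obtain ⟨s, hs, htg⟩ := hZ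
  exact ⟨⟨s, hs, htg.tail ⟨hp, hnv, rfl⟩⟩, (nextOf_spec hp hnv).1⟩

theorem act_source {I : SSMC D H} {R μ : Set (D × H)} {s : Set (D ⊕ H)}
    (hs : I.memVplus R s) (hp : hasPathV I R μ s) (hnv : ¬ I.memVminus R s) :
    nextOf I R μ s ∈ ActSet I R μ ∧ I.arc R μ s (nextOf I R μ s) :=
  ⟨⟨s, hs, Relation.TransGen.single ⟨hp, hnv, rfl⟩⟩, (nextOf_spec hp hnv).1⟩

theorem memV_isComponent {I : SSMC D H} {R : Set (D × H)} {X : Set (D ⊕ H)}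
    (hX : I.memV R X) : isComponent (I.Lset R) X := by
  rcases hX with h | h | h
  · exact h.1.1.1
  · exact h.1.1
  · exact h.1

theorem pstar_not_vplus {I : SSMC D H} {R : Set (D × H)} {X : Set (D ⊕ H)}
    (hX : I.memPstar R X) : ¬ I.memVplus R X := by
  rintro (⟨hQ, _⟩ | hR)
  · have := hX.1.2
    have := hQ.2
    omega
  · obtain ⟨h, hXh, _, _⟩ := hR.2
    have h2 := hX.1.1.2
    rw [hXh] at h2
    simp [Set.ncard_singleton] at h2

theorem vplus_not_vminus {I : SSMC D H} {R : Set (D × H)} {X : Set (D ⊕ H)}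
    (hX : I.memVplus R X) : ¬ I.memVminus R X := by
  intro hm
  exact pstar_not_vplus hm.1 hX

end AuxComp
section AuxCount

open Classical

variable {D H : Type}

theorem matched_count [Fintype D] [Fintype H] {L ν : Set (D × H)}
    (hνL : ν ⊆ L)
    (hlu : ∀ e ∈ ν, ∀ f ∈ ν, e.1 = f.1 → e = f)
    (hru : ∀ e ∈ ν, ∀ f ∈ ν, e.2 = f.2 → e = f)
    (hcov : ∀ d : D, (edgesD L d).Nonempty → (edgesD ν d).Nonempty)
    {X : Set (D ⊕ H)} (hX : isComponent L X) (h2 : 2 ≤ X.ncard) :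
    {h | Sum.inr h ∈ X ∧ (∃ e ∈ ν, e.2 = h)}.ncard = (Dside X).ncard := by
  classical
  set M : Set H := {h | Sum.inr h ∈ X ∧ (∃ e ∈ ν, e.2 = h)} with hM
  apply le_antisymm
  · -- M → Dside X
    by_cases hMne : M.Nonempty
    · obtain ⟨h₀, hh₀⟩ := hMne
      set g : H → D := fun h =>
        if hh : ∃ e, e ∈ ν ∧ e.2 = h then hh.choose.1 else hh₀.2.choose.1 with hg
      have hgspec : ∀ h ∈ M, (g h, h) ∈ ν := by
        intro h hh
        obtain ⟨-, e, he, heh⟩ := hh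
        have hex : ∃ e, e ∈ ν ∧ e.2 = h := ⟨e, he, heh⟩
        rw [hg]
        simp only [dif_pos hex]
        have hcs := hex.choose_spec
        have hpe : (hex.choose.1, h) = hex.choose := Prod.ext_iff.2 ⟨rfl, hcs.2.symm⟩
        rw [hpe]
        exact hcs.1
      apply Set.ncard_le_ncard_of_injOn g
      · intro h hh
        have := hgspec h hh
        have hinr : Sum.inr h ∈ X := hh.1
        have := (comp_edge_closed hX (hνL this)).2 hinr
        exact this
      · intro h1 hh1 h2' hh2 heq
        have he1 := hgspec h1 hh1
        have he2 := hgspec h2' hh2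
        have := hlu _ he1 _ he2 (by rw [heq])
        exact congrArg Prod.snd this
    · rw [Set.not_nonempty_iff_eq_empty] at hMne
      simp [hMne]
  · -- Dside X → M
    by_cases hDne : (Dside X).Nonempty
    · obtain ⟨d₀, hd₀⟩ := hDne
      have hedge : ∀ d, Sum.inl d ∈ X → ∃ e, e ∈ ν ∧ e.1 = d := by
        intro d hd
        obtain ⟨h, hh⟩ := comp_mem_edge_D hX h2 hd
        obtain ⟨e, he⟩ := hcov d ⟨(d, h), hh, rfl⟩
        exact ⟨e, he.1, he.2⟩
      set f : D → H := fun d =>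
        if hd : ∃ e, e ∈ ν ∧ e.1 = d then hd.choose.2 else (hedge d₀ hd₀).choose.2 with hf
      have hfspec : ∀ d ∈ Dside X, (d, f d) ∈ ν := by
        intro d hd
        have hex := hedge d hd
        rw [hf]
        simp only [dif_pos hex]
        have hcs := hex.choose_spec
        have hpe : (d, hex.choose.2) = hex.choose := Prod.ext_iff.2 ⟨hcs.2.symm, rfl⟩
        rw [hpe]
        exact hcs.1
      apply Set.ncard_le_ncard_of_injOn f
      · intro d hd
        have hin := hfspec d hd
        refine ⟨(comp_edge_closed hX (hνL hin)).1 hd, (d, f d), hin, rfl⟩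
      · intro d1 hd1 d2 hd2 heq
        have he1 := hfspec d1 hd1
        have he2 := hfspec d2 hd2
        have := hru _ he1 _ he2 (by rw [heq])
        exact congrArg Prod.fst this
    · rw [Set.not_nonempty_iff_eq_empty] at hDne
      have : M = ∅ := by
        rw [Set.eq_empty_iff_forall_notMem]
        rintro h ⟨hinr, e, he, heh⟩
        have : Sum.inl e.1 ∈ X := (comp_edge_closed hX (hνL he)).2 (heh ▸ hinr)
        exact absurd this (by rw [Set.eq_empty_iff_forall_notMem] at hDne; exact hDne e.1)
      simp [this, hDne]

theorem Q_unique_unmatched [Fintype D] [Fintype H] {L ν : Set (D × H)}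
    (hdeg2 : ∀ d : D, (edgesD L d).ncard ≤ 2)
    (hνL : ν ⊆ L)
    (hlu : ∀ e ∈ ν, ∀ f ∈ ν, e.1 = f.1 → e = f)
    (hru : ∀ e ∈ ν, ∀ f ∈ ν, e.2 = f.2 → e = f)
    (hcov : ∀ d : D, (edgesD L d).Nonempty → (edgesD ν d).Nonempty)
    {X : Set (D ⊕ H)} (hX : isComponent L X) (h2 : 2 ≤ X.ncard)
    (hQ : (Dside X).ncard < (Hside X).ncard) :
    ∃ u, {h | Sum.inr h ∈ X ∧ edgesH ν h = ∅} = {u} ∧ Sum.inr u ∈ X := by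
  have hMcard := matched_count hνL hlu hru hcov hX h2
  set M : Set H := {h | Sum.inr h ∈ X ∧ (∃ e ∈ ν, e.2 = h)} with hM
  have hUM : {h | Sum.inr h ∈ X ∧ edgesH ν h = ∅} = Hside X \ M := by
    ext h
    simp only [Set.mem_setOf_eq, Set.mem_diff, hM]
    constructor
    · rintro ⟨h1, h2'⟩
      refine ⟨h1, fun hcon => ?_⟩
      obtain ⟨-, e, he, heh⟩ := hcon
      have : e ∈ edgesH ν h := ⟨he, heh⟩
      rw [h2'] at this
      exact this
    · rintro ⟨h1, h2'⟩
      refine ⟨h1, ?_⟩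
      rw [Set.eq_empty_iff_forall_notMem]
      rintro e ⟨he, heh⟩
      exact h2' ⟨h1, e, he, heh⟩
  have hMsub : M ⊆ Hside X := fun h hh => hh.1
  have hdiff : (Hside X \ M).ncard = (Hside X).ncard - M.ncard :=
    Set.ncard_diff hMsub (Set.toFinite _)
  have hbound := comp_bound hdeg2 hX
  have h1 : (Hside X \ M).ncard = 1 := by omega
  obtain ⟨u, hu⟩ := Set.ncard_eq_one.1 (hUM ▸ h1)
  refine ⟨u, hu, ?_⟩
  have : u ∈ {h | Sum.inr h ∈ X ∧ edgesH ν h = ∅} := by rw [hu]; rfl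
  exact this.1

theorem P_all_matched [Fintype D] [Fintype H] {L ν : Set (D × H)}
    (hνL : ν ⊆ L)
    (hlu : ∀ e ∈ ν, ∀ f ∈ ν, e.1 = f.1 → e = f)
    (hru : ∀ e ∈ ν, ∀ f ∈ ν, e.2 = f.2 → e = f)
    (hcov : ∀ d : D, (edgesD L d).Nonempty → (edgesD ν d).Nonempty)
    {X : Set (D ⊕ H)} (hX : isComponent L X) (h2 : 2 ≤ X.ncard)
    (hP : (Dside X).ncard = (Hside X).ncard) :
    ∀ h, Sum.inr h ∈ X → ∃ e ∈ ν, e.2 = h := by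
  have hMcard := matched_count hνL hlu hru hcov hX h2
  set M : Set H := {h | Sum.inr h ∈ X ∧ (∃ e ∈ ν, e.2 = h)} with hM
  have hMsub : M ⊆ Hside X := fun h hh => hh.1
  have hMeq : M = Hside X := by
    apply Set.eq_of_subset_of_ncard_le hMsub (by omega) (Set.toFinite _)
  intro h hh
  have : h ∈ M := hMeq ▸ (hh : h ∈ Hside X)
  exact this.2

end AuxCount
/-- in the bounded-degree setting with a critical hospital, if
every `X ∈ 𝓥⁺` has a directed path in `𝐃` to some `Y ∈ 𝓥⁻`, then there exists
a stable matching in `G`. -/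
theorem paths_imply_stable {D H : Type} [Fintype D] [Fintype H]
    (I : SSMC D H) (hdeg : ∀ d : D, (edgesD I.E d).ncard ≤ 2)
    (R μ : Set (D × H)) (hpre : I.preproc R μ)
    (hcrit : ∃ h : H, I.critical R μ h)
    (hpath : ∀ X : Set (D ⊕ H), I.memVplus R X →
      ∃ Y : Set (D ⊕ H), I.memVminus R Y ∧
        Relation.ReflTransGen (I.arc R μ) X Y) :
    ∃ σ : Set (D × H), I.stable σ := by
  classical
  obtain ⟨hRE, hμmat, hR1, hR2, hR3, hR4, hR5⟩ := hpre
  obtain ⟨hμE, hμlu, hμru⟩ := hμmat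
  -- degenerate case : no doctors
  by_cases hDne : Nonempty D
  swap
  · refine ⟨∅, ⟨Set.empty_subset _, by simp, by simp⟩, ?_⟩
    intro e he
    exact hDne ⟨e.1⟩
  obtain ⟨d₀⟩ := hDne
  obtain ⟨hstar, -⟩ := hcrit
  haveI : Inhabited D := ⟨d₀⟩
  haveI : Inhabited H := ⟨hstar⟩
  have hLE : I.Lset R ⊆ I.E := Lset_sub_E
  have hLF : I.Lset R ⊆ I.E \ R := Lset_sub
  have hμL : μ ⊆ I.Lset R := hR2
  have hdegL : ∀ d, (edgesD (I.Lset R) d).ncard ≤ 2 := by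
    intro d
    have hsub : edgesD (I.Lset R) d ⊆ edgesD I.E d := fun e he => ⟨hLE he.1, he.2⟩
    exact le_trans (Set.ncard_le_ncard hsub (Set.toFinite _)) (hdeg d)
  -- μ covers every doctor with an edge in E \ R, within L
  have hcovL : ∀ d, (edgesD (I.Lset R) d).Nonempty → (edgesD μ d).Nonempty := by
    rintro d ⟨e, he, hed⟩
    obtain ⟨f, hf, hfd⟩ := hR3 d ⟨e, hLF he, hed⟩
    exact ⟨f, hf, hfd⟩
  -- data extraction functions
  set dOf : Set (D ⊕ H) → D := fun Y =>
    if h : ∃ d, I.leafSet R Y = {d} then h.choose else default with hdOfdef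
  set hOf : Set (D ⊕ H) → H := fun Y =>
    if h : ∃ e, edgesD (I.Lset R) (dOf Y) = {e} then h.choose.2 else default with hhOfdef
  set hbOf : Set (D ⊕ H) → H := fun Y =>
    if h : ∃ hb, hb ≠ hOf Y ∧ (dOf Y, hb) ∈ I.E then h.choose else default with hhbOfdef
  -- singleton data for P* components
  have hPdata : ∀ Y, I.memPstar R Y → I.leafSet R Y = {dOf Y} ∧
      edgesD (I.Lset R) (dOf Y) = {(dOf Y, hOf Y)} := by
    intro Y hps
    have hex : ∃ d, I.leafSet R Y = {d} := Set.ncard_eq_one.1 hps.2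
    have hd1 : I.leafSet R Y = {dOf Y} := by
      rw [hdOfdef]
      simp only [dif_pos hex]
      exact hex.choose_spec
    have hdY : dOf Y ∈ I.leafSet R Y := by rw [hd1]; rfl
    have hcard : (edgesD (I.Lset R) (dOf Y)).ncard = 1 := hdY.2
    have hex2 : ∃ e, edgesD (I.Lset R) (dOf Y) = {e} := Set.ncard_eq_one.1 hcard
    have he2 : edgesD (I.Lset R) (dOf Y) = {hex2.choose} := hex2.choose_spec
    have hfst : hex2.choose.1 = dOf Y := by
      have hm : hex2.choose ∈ edgesD (I.Lset R) (dOf Y) :=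
        (Set.ext_iff.1 he2 hex2.choose).2 rfl
      exact hm.2
    have hsnd : hOf Y = hex2.choose.2 := by
      rw [hhOfdef]
      simp only [dif_pos hex2]
    have hpe : (dOf Y, hOf Y) = hex2.choose := Prod.ext_iff.2 ⟨hfst.symm, hsnd⟩
    exact ⟨hd1, by rw [he2, hpe]⟩
  -- full arc data lemma
  have harcData : ∀ X Y, I.arc R μ X Y →
      (dOf Y, hOf Y) ∈ I.Lset R ∧
      hbOf Y ≠ hOf Y ∧ (dOf Y, hbOf Y) ∈ I.E ∧ Sum.inr (hbOf Y) ∈ X ∧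
      I.strictD (dOf Y) (some (dOf Y, hOf Y)) (some (dOf Y, hbOf Y)) ∧
      (I.memPstar R X →
        hOf X = hbOf Y ∧
        I.strictH (hbOf Y) (some (dOf Y, hbOf Y)) (some (dOf X, hbOf Y))) ∧
      (I.memQ R X →
        ∃ f ∈ I.Lset R, f.2 = hbOf Y ∧
          I.prefH (hbOf Y) (some (dOf Y, hbOf Y)) (some f)) ∧
      (I.memRcal R X →
        ∀ f ∈ R, f.2 = hbOf Y →
          (I.simD f.1 (some f) (muD μ f.1) →
            I.prefH (hbOf Y) (some (dOf Y, hbOf Y)) (some f)) ∧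
          (I.strictD f.1 (some f) (muD μ f.1) →
            I.strictH (hbOf Y) (some (dOf Y, hbOf Y)) (some f))) := by
    intro X Y harc
    obtain ⟨hVX, hVY, hXY, hpsY, dY, hY, hbY, hdYl, hYL, hbneq, hbE, hcnt2, hbin,
      hP1, hP2, hP3, hP4⟩ := harc
    obtain ⟨hleaf, hedges⟩ := hPdata Y hpsY
    have hdYeq : dY = dOf Y := by rw [hleaf] at hdYl; exact hdYl
    rw [hdYeq] at hYL hbE hP1 hP2 hP3 hP4
    have hYmem : (dOf Y, hY) ∈ edgesD (I.Lset R) (dOf Y) := ⟨hYL, rfl⟩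
    rw [hedges] at hYmem
    have hYeq : hY = hOf Y := congrArg Prod.snd hYmem
    rw [hYeq] at hYL hbneq hP1
    have hex3 : ∃ hb, hb ≠ hOf Y ∧ (dOf Y, hb) ∈ I.E := ⟨hbY, hbneq, hbE⟩
    have hbspec : hbOf Y ≠ hOf Y ∧ (dOf Y, hbOf Y) ∈ I.E := by
      rw [hhbOfdef]
      simp only [dif_pos hex3]
      exact hex3.choose_spec
    have hYE : (dOf Y, hOf Y) ∈ I.E := hLE hYL
    have hbeq : hbY = hbOf Y := by
      rcases deg2_forces (hdeg (dOf Y)) (a := hOf Y) (b := hbOf Y) hYE hbspec.2 hbE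
        (Ne.symm hbspec.1) with hcon | hgood
      · exact absurd hcon hbneq
      · exact hgood
    rw [hbeq] at hbin hP1 hP2 hP3 hP4
    refine ⟨hYL, hbspec.1, hbspec.2, hbin, hP1, ?_, hP3, hP4⟩
    intro hpsX
    obtain ⟨dX, hX, hdXl, hXL2, hXeq, hstr⟩ := hP2 hpsX
    obtain ⟨hleafX, hedgesX⟩ := hPdata X hpsX
    have hdXeq : dX = dOf X := by rw [hleafX] at hdXl; exact hdXl
    rw [hdXeq] at hXL2 hstr
    have hXmem : (dOf X, hX) ∈ edgesD (I.Lset R) (dOf X) := ⟨hXL2, rfl⟩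
    rw [hedgesX] at hXmem
    have hXeq2 : hX = hOf X := congrArg Prod.snd hXmem
    exact ⟨hXeq2.symm.trans hXeq, hstr⟩
  -- basic facts about Act members
  have hActP : ∀ Y ∈ ActSet I R μ, I.memPstar R Y := by
    intro Y hY
    obtain ⟨-, a, harc, -, -, -⟩ := act_props Y hY
    exact harc.2.2.2.1
  have hActpred : ∀ Y ∈ ActSet I R μ, ∃ a, I.arc R μ a Y ∧ Y = nextOf I R μ a ∧
      ¬ I.memVminus R a ∧ (a ∈ ActSet I R μ ∨ I.memVplus R a) := by
    intro Y hY
    obtain ⟨-, a, h1, h2, h3, h4⟩ := act_props Y hY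
    exact ⟨a, h1, h2, h3, h4⟩
  have hActdata : ∀ Y ∈ ActSet I R μ,
      (dOf Y, hOf Y) ∈ I.Lset R ∧ hbOf Y ≠ hOf Y ∧ (dOf Y, hbOf Y) ∈ I.E ∧
      I.strictD (dOf Y) (some (dOf Y, hOf Y)) (some (dOf Y, hbOf Y)) ∧
      edgesD (I.Lset R) (dOf Y) = {(dOf Y, hOf Y)} ∧
      Sum.inl (dOf Y) ∈ Y ∧ Sum.inr (hOf Y) ∈ Y := by
    intro Y hY
    obtain ⟨a, harc, -, -, -⟩ := hActpred Y hY
    obtain ⟨h1, h2, h3, -, h5, -, -, -⟩ := harcData a Y harc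
    have hps := hActP Y hY
    obtain ⟨hleaf, hedges⟩ := hPdata Y hps
    have hdY : dOf Y ∈ I.leafSet R Y := by rw [hleaf]; rfl
    have hdYin : Sum.inl (dOf Y) ∈ Y := hdY.1
    have hcomp : isComponent (I.Lset R) Y := hps.1.1.1
    have hinr : Sum.inr (hOf Y) ∈ Y := (comp_edge_closed hcomp h1).1 hdYin
    exact ⟨h1, h2, h3, h5, hedges, hdYin, hinr⟩
  -- (dOf Y, hbOf Y) is not an R edge
  have hAddnotR : ∀ Y ∈ ActSet I R μ, (dOf Y, hbOf Y) ∉ R := by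
    intro Y hY hcon
    obtain ⟨h1, h2, h3, h4, -, -, -⟩ := hActdata Y hY
    have := hR5 (dOf Y) (dOf Y, hbOf Y) hcon rfl (dOf Y, hOf Y) (hLF h1) rfl
    exact h4.2 this
  -- doctor and hospital injectivity on Act
  have hActdinj : ∀ Y ∈ ActSet I R μ, ∀ Z ∈ ActSet I R μ, dOf Y = dOf Z → Y = Z := by
    intro Y hY Z hZ heq
    have h1 := (hActdata Y hY).2.2.2.2.2.1
    have h2 := (hActdata Z hZ).2.2.2.2.2.1
    rw [heq] at h1
    exact comp_unique (memV_isComponent (Or.inl (hActP Y hY)))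
      (memV_isComponent (Or.inl (hActP Z hZ))) h1 h2
  have hActbinj : ∀ Y ∈ ActSet I R μ, ∀ Z ∈ ActSet I R μ, hbOf Y = hbOf Z → Y = Z := by
    intro Y hY Z hZ heq
    obtain ⟨a, harcY, hnY, -, -⟩ := hActpred Y hY
    obtain ⟨b, harcZ, hnZ, -, -⟩ := hActpred Z hZ
    have hina := (harcData a Y harcY).2.2.2.1
    have hinb := (harcData b Z harcZ).2.2.2.1
    rw [heq] at hina
    have hab : a = b := comp_unique (memV_isComponent harcY.1)
      (memV_isComponent harcZ.1) hina hinb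
    rw [hnY, hnZ, hab]
  -- incoming arc determination
  have hIncoming : ∀ Z ∈ ActSet I R μ, ∀ a, I.arc R μ a Z →
      Z = nextOf I R μ a ∧ ¬ I.memVminus R a := by
    intro Z hZ a harc
    obtain ⟨b, harcb, hnb, hnv, -⟩ := hActpred Z hZ
    have hina := (harcData a Z harc).2.2.2.1
    have hinb := (harcData b Z harcb).2.2.2.1
    have hab : a = b := comp_unique (memV_isComponent harc.1)
      (memV_isComponent harcb.1) hina hinb
    rw [hab]
    exact ⟨hnb, hnv⟩
  -- V⁺ vertices send arcs into Act
  have hVplusAct : ∀ X, I.memVplus R X →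
      nextOf I R μ X ∈ ActSet I R μ ∧ I.arc R μ X (nextOf I R μ X) := by
    intro X hX
    obtain ⟨Y, hYm, hrtg⟩ := hpath X hX
    obtain ⟨n, hn⟩ := rtg_chainN hrtg
    exact act_source hX ⟨n, Y, hYm, hn⟩ (vplus_not_vminus hX)
  -- vacated hospitals of terminal Act elements are in S
  have hActVac : ∀ Y ∈ ActSet I R μ, I.memVminus R Y → hOf Y ∈ I.S := by
    intro Y hY hm
    obtain ⟨hps, dX, hdX, hX, hXL, hXS⟩ := hm
    obtain ⟨hleaf, hedges⟩ := hPdata Y hps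
    rw [hleaf] at hdX
    have hdXeq : dX = dOf Y := hdX
    have h1 : (dX, hX) ∈ edgesD (I.Lset R) (dOf Y) := by
      rw [← hdXeq]; exact ⟨hXL, rfl⟩
    rw [hedges] at h1
    have h2 : hX = hOf Y := congrArg Prod.snd h1
    rwa [h2] at hXS
  -- Q components: unique unmatched hospital
  have hQuniq : ∀ X, I.memQ R X → ∃ u, {h | Sum.inr h ∈ X ∧ edgesH μ h = ∅} = {u} ∧
      Sum.inr u ∈ X := by
    intro X hX
    exact Q_unique_unmatched hdegL hμL hμlu hμru hcovL hX.1.1 hX.1.2 hX.2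
  set uOf : Set (D ⊕ H) → H := fun X =>
    if h : ∃ u, {h | Sum.inr h ∈ X ∧ edgesH μ h = ∅} = {u} then h.choose else default
    with huOfdef
  have huOf : ∀ X, I.memQ R X → Sum.inr (uOf X) ∈ X ∧ edgesH μ (uOf X) = ∅ ∧
      (∀ h', Sum.inr h' ∈ X → edgesH μ h' = ∅ → h' = uOf X) := by
    intro X hX
    obtain ⟨u, hu, huin⟩ := hQuniq X hX
    have hex : ∃ u, {h | Sum.inr h ∈ X ∧ edgesH μ h = ∅} = {u} := ⟨u, hu⟩
    have he : {h | Sum.inr h ∈ X ∧ edgesH μ h = ∅} = {uOf X} := by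
      rw [huOfdef]; simp only [dif_pos hex]; exact hex.choose_spec
    have hm : uOf X ∈ {h | Sum.inr h ∈ X ∧ edgesH μ h = ∅} := (Set.ext_iff.1 he _).2 rfl
    exact ⟨hm.1, hm.2, fun h' h1 h2 => (Set.ext_iff.1 he h').1 ⟨h1, h2⟩⟩
  -- unique incoming moved doctor for any component
  have hUniqInc : ∀ X, isComponent (I.Lset R) X → ∀ Z ∈ ActSet I R μ,
      Sum.inr (hbOf Z) ∈ X → Z = nextOf I R μ X ∧ I.arc R μ X Z ∧ ¬ I.memVminus R X := by
    intro X hXc Z hZ hin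
    obtain ⟨a, harc, hna, hnv, -⟩ := hActpred Z hZ
    have hina := (harcData a Z harc).2.2.2.1
    have hax : a = X := comp_unique (memV_isComponent harc.1) hXc hina hin
    rw [← hax]
    exact ⟨hna, harc, hnv⟩
  -- targets for Q components
  set tOf : Set (D ⊕ H) → H := fun X =>
    if h : ∃ Z, Z ∈ ActSet I R μ ∧ Sum.inr (hbOf Z) ∈ X then hbOf h.choose
    else if h2 : ∃ hS, Sum.inr hS ∈ X ∧ hS ∈ I.S then h2.choose else default
    with htOfdef
  have htOf : ∀ X, I.memQ R X → Sum.inr (tOf X) ∈ X ∧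
      ((∃ Z ∈ ActSet I R μ, hbOf Z = tOf X) ∨ tOf X ∈ I.S ∧
        ¬ ∃ Z, Z ∈ ActSet I R μ ∧ Sum.inr (hbOf Z) ∈ X) := by
    intro X hX
    by_cases hc : ∃ Z, Z ∈ ActSet I R μ ∧ Sum.inr (hbOf Z) ∈ X
    · have ht : tOf X = hbOf hc.choose := by rw [htOfdef]; simp only [dif_pos hc]
      obtain ⟨hZact, hZin⟩ := hc.choose_spec
      exact ⟨ht ▸ hZin, Or.inl ⟨hc.choose, hZact, ht.symm⟩⟩
    · have hnv : ¬ I.memVplus R X := by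
        intro hv
        obtain ⟨hZ, harc⟩ := hVplusAct X hv
        exact hc ⟨nextOf I R μ X, hZ, (harcData X _ harc).2.2.2.1⟩
      have hS : ∃ hS, Sum.inr hS ∈ X ∧ hS ∈ I.S := by
        by_contra hno
        push_neg at hno
        exact hnv (Or.inl ⟨hX, fun h hh hhS => hno h hh hhS⟩)
      have ht : tOf X = hS.choose := by
        rw [htOfdef]; simp only [dif_neg hc, dif_pos hS]
      exact ⟨ht ▸ hS.choose_spec.1, Or.inr ⟨ht ▸ hS.choose_spec.2, hc⟩⟩
  -- a Q component with an incoming moved doctor has it as its target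
  have htOfA : ∀ X, I.memQ R X → ∀ Z ∈ ActSet I R μ, Sum.inr (hbOf Z) ∈ X →
      tOf X = hbOf Z := by
    intro X hX Z hZ hin
    have hc : ∃ Z, Z ∈ ActSet I R μ ∧ Sum.inr (hbOf Z) ∈ X := ⟨Z, hZ, hin⟩
    have ht : tOf X = hbOf hc.choose := by rw [htOfdef]; simp only [dif_pos hc]
    obtain ⟨hZact, hZin⟩ := hc.choose_spec
    have h1 := hUniqInc X hX.1.1 Z hZ hin
    have h2 := hUniqInc X hX.1.1 hc.choose hZact hZin
    rw [ht, h2.1, ← h1.1]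
  -- the flipped matching ν
  have hflip : ∀ T : Finset (Set (D ⊕ H)), (∀ X ∈ T, I.memQ R X) →
      ∃ ν, ν ⊆ I.Lset R ∧
        (∀ e ∈ ν, ∀ f ∈ ν, e.1 = f.1 → e = f) ∧
        (∀ e ∈ ν, ∀ f ∈ ν, e.2 = f.2 → e = f) ∧
        (∀ d : D, (edgesD ν d).Nonempty ↔ (edgesD μ d).Nonempty) ∧
        (∀ h : H, edgesH ν h = ∅ ↔
          ((edgesH μ h = ∅ ∧ ∀ X ∈ T, Sum.inr h ∉ X) ∨ ∃ X ∈ T, tOf X = h)) := by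
    intro T
    induction T using Finset.induction_on with
    | empty => intro _; exact ⟨μ, hμL, hμlu, hμru, fun d => Iff.rfl, by simp⟩
    | @insert X T hXT ih =>
      intro hQall
      have hQX : I.memQ R X := hQall X (Finset.mem_insert_self X T)
      obtain ⟨ν, hν1, hν2, hν3, hν4, hν5⟩ :=
        ih (fun X' hX' => hQall X' (Finset.mem_insert_of_mem hX'))
      obtain ⟨huin, humu, huuniq⟩ := huOf X hQX
      have hcompX : isComponent (I.Lset R) X := hQX.1.1
      have hνu : edgesH ν (uOf X) = ∅ := by
        rw [hν5]
        left
        refine ⟨humu, ?_⟩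
        intro X' hX'T hin
        have hXX : X' = X := comp_unique
          (memV_isComponent (Or.inr (Or.inl (hQall X' (Finset.mem_insert_of_mem hX'T)))))
          hcompX hin huin
        rw [hXX] at hX'T
        exact hXT hX'T
      obtain ⟨n, hchain⟩ := rtg_chainN (comp_reach hcompX huin (htOf X hQX).1)
      obtain ⟨ν', h1, h2, h3, h4, h5⟩ := flipLemma hdegL n ν (uOf X) (tOf X) hchain
        hν1 hν2 hν3 (fun d hd => (hν4 d).2 (hcovL d hd)) hνu
      refine ⟨ν', h1, h2, h3, fun d => (h4 d).trans (hν4 d), ?_⟩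
      intro h
      rw [h5 h]
      constructor
      · rintro (⟨hemp, hne⟩ | rfl)
        · rw [hν5] at hemp
          rcases hemp with ⟨hmu0, hall⟩ | ⟨X', hX'T, htX'⟩
          · left
            refine ⟨hmu0, ?_⟩
            intro X' hX'
            rcases Finset.mem_insert.1 hX' with rfl | hX'T
            · intro hin
              exact hne (huuniq h hin hmu0)
            · exact hall X' hX'T
          · exact Or.inr ⟨X', Finset.mem_insert_of_mem hX'T, htX'⟩
        · exact Or.inr ⟨X, Finset.mem_insert_self X T, rfl⟩
      · rintro (⟨hmu0, hall⟩ | ⟨X', hX', htX'⟩)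
        · left
          constructor
          · rw [hν5]
            left
            exact ⟨hmu0, fun X' hX' => hall X' (Finset.mem_insert_of_mem hX')⟩
          · intro heq
            exact hall X (Finset.mem_insert_self X T) (heq ▸ huin)
        · rcases Finset.mem_insert.1 hX' with rfl | hX'T
          · exact Or.inr htX'.symm
          · left
            have hQX' : I.memQ R X' := hQall X' (Finset.mem_insert_of_mem hX'T)
            constructor
            · rw [hν5]; right; exact ⟨X', hX'T, htX'⟩
            · intro heq
              have hinX' : Sum.inr h ∈ X' := htX' ▸ (htOf X' hQX').1
              have hXX : X' = X := comp_unique (memV_isComponent (Or.inr (Or.inl hQX')))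
                hcompX hinX' (heq ▸ huin)
              rw [hXX] at hX'T
              exact hXT hX'T
  obtain ⟨ν, hνL, hνlu, hνru, hνcov, hνemp0⟩ :=
    hflip (Set.toFinite {X | I.memQ R X}).toFinset (fun X hX => by simpa using hX)
  have hνemp : ∀ h, edgesH ν h = ∅ ↔
      ((edgesH μ h = ∅ ∧ ∀ X, I.memQ R X → Sum.inr h ∉ X) ∨
        ∃ X, I.memQ R X ∧ tOf X = h) := by
    intro h
    rw [hνemp0 h]
    constructor
    · rintro (⟨ha, hb⟩ | ⟨X, hX, hb⟩)
      · exact Or.inl ⟨ha, fun X hX => hb X (by simpa using hX)⟩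
      · exact Or.inr ⟨X, by simpa using hX, hb⟩
    · rintro (⟨ha, hb⟩ | ⟨X, hX, hb⟩)
      · exact Or.inl ⟨ha, fun X hX => hb X (by simpa using hX)⟩
      · exact Or.inr ⟨X, by simpa using hX, hb⟩
  have hνcovL : ∀ d, (edgesD (I.Lset R) d).Nonempty → (edgesD ν d).Nonempty :=
    fun d hd => (hνcov d).2 (hcovL d hd)
  have hνdY : ∀ Y ∈ ActSet I R μ, (dOf Y, hOf Y) ∈ ν := by
    intro Y hY
    obtain ⟨h1, -, -, -, hedges, -, -⟩ := hActdata Y hY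
    obtain ⟨f, hf, hfd⟩ := hνcovL (dOf Y) ⟨(dOf Y, hOf Y), h1, rfl⟩
    have hfm : f ∈ edgesD (I.Lset R) (dOf Y) := ⟨hνL hf, hfd⟩
    rw [hedges] at hfm
    rw [← hfm]
    exact hf
  -- the final matching σ
  set Rem : Set (D × H) := {e | ∃ Y ∈ ActSet I R μ, e = (dOf Y, hOf Y)} with hRemdef
  set Add : Set (D × H) := {e | ∃ Y ∈ ActSet I R μ, e = (dOf Y, hbOf Y)} with hAdddef
  set σ : Set (D × H) := (ν \ Rem) ∪ Add with hσdef
  have hAddσ : ∀ Y ∈ ActSet I R μ, (dOf Y, hbOf Y) ∈ σ := fun Y hY => Or.inr ⟨Y, hY, rfl⟩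
  have hσER : σ ⊆ I.E \ R := by
    rintro e (⟨he, -⟩ | ⟨Y, hY, rfl⟩)
    · exact hLF (hνL he)
    · exact ⟨(hActdata Y hY).2.2.1, hAddnotR Y hY⟩
  have hσE : σ ⊆ I.E := fun e he => (hσER he).1
  have hσlu : ∀ e ∈ σ, ∀ f ∈ σ, e.1 = f.1 → e = f := by
    rintro e (⟨he, hre⟩ | ⟨Y, hY, rfl⟩) f (⟨hf, hrf⟩ | ⟨Z, hZ, rfl⟩) h1
    · exact hνlu e he f hf h1
    · exfalso
      obtain ⟨-, -, -, -, hedges, -, -⟩ := hActdata Z hZ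
      have hm : e ∈ edgesD (I.Lset R) (dOf Z) := ⟨hνL he, h1⟩
      rw [hedges] at hm
      exact hre ⟨Z, hZ, hm⟩
    · exfalso
      obtain ⟨-, -, -, -, hedges, -, -⟩ := hActdata Y hY
      have hm : f ∈ edgesD (I.Lset R) (dOf Y) := ⟨hνL hf, h1.symm⟩
      rw [hedges] at hm
      exact hrf ⟨Y, hY, hm⟩
    · rw [hActdinj Y hY Z hZ h1]
  have hkeyru : ∀ e ∈ ν, e ∉ Rem → ∀ Z ∈ ActSet I R μ, e.2 = hbOf Z → False := by
    intro e he hre Z hZ h2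
    obtain ⟨a, harc, -, -, hor⟩ := hActpred Z hZ
    have hdata := harcData a Z harc
    have hina := hdata.2.2.2.1
    rcases harc.1 with hPa | hQa | hRa
    · have haAct : a ∈ ActSet I R μ := by
        rcases hor with h | h
        · exact h
        · exact absurd h (pstar_not_vplus hPa)
      have hP2 := hdata.2.2.2.2.2.1 hPa
      have := hνru e he (dOf a, hOf a) (hνdY a haAct) (by rw [h2, ← hP2.1])
      apply hre
      rw [this]
      exact ⟨a, haAct, rfl⟩
    · have hemp : edgesH ν (hbOf Z) = ∅ :=
        (hνemp (hbOf Z)).2 (Or.inr ⟨a, hQa, htOfA a hQa Z hZ hina⟩)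
      have : e ∈ edgesH ν (hbOf Z) := ⟨he, h2⟩
      rw [hemp] at this
      exact this
    · obtain ⟨hcompa, h', haeq, -, -⟩ := hRa
      have hbh : (Sum.inr (hbOf Z) : D ⊕ H) = Sum.inr h' := by rw [haeq] at hina; exact hina
      have hinr2 : Sum.inr e.2 ∈ a := by rw [h2, hbh, haeq]; rfl
      have hinl : Sum.inl e.1 ∈ a := (comp_edge_closed hcompa (hνL he)).2 hinr2
      rw [haeq] at hinl
      exact absurd hinl (by simp)
  have hσru : ∀ e ∈ σ, ∀ f ∈ σ, e.2 = f.2 → e = f := by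
    rintro e (⟨he, hre⟩ | ⟨Y, hY, rfl⟩) f (⟨hf, hrf⟩ | ⟨Z, hZ, rfl⟩) h1
    · exact hνru e he f hf h1
    · exact absurd (hkeyru e he hre Z hZ h1) (by simp)
    · exact absurd (hkeyru f hf hrf Y hY h1.symm) (by simp)
    · rw [hActbinj Y hY Z hZ h1]
  have hmuDAct : ∀ Y ∈ ActSet I R μ, muD σ (dOf Y) = some (dOf Y, hbOf Y) :=
    fun Y hY => muD_spec_some hσlu (hAddσ Y hY) rfl
  have hedgesDσ : ∀ d : D, (∀ Y ∈ ActSet I R μ, d ≠ dOf Y) → edgesD σ d = edgesD ν d := by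
    intro d hd
    ext e
    constructor
    · rintro ⟨(⟨he, -⟩ | ⟨Y, hY, rfl⟩), h2⟩
      · exact ⟨he, h2⟩
      · exact absurd h2.symm (hd Y hY)
    · rintro ⟨he, h2⟩
      refine ⟨Or.inl ⟨he, ?_⟩, h2⟩
      rintro ⟨Y, hY, heq⟩
      rw [heq] at h2
      exact hd Y hY h2.symm
  have hmuHAdd : ∀ Y ∈ ActSet I R μ, muH σ (hbOf Y) = some (dOf Y, hbOf Y) :=
    fun Y hY => muH_spec_some hσru (hAddσ Y hY) rfl
  have hmuHVacS : ∀ Y ∈ ActSet I R μ, I.memVminus R Y →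
      muH σ (hOf Y) = none ∧ hOf Y ∈ I.S := by
    intro Y hY hm
    refine ⟨muH_spec_none ?_, hActVac Y hY hm⟩
    rintro g (⟨hg, hrg⟩ | ⟨Z, hZ, rfl⟩) h2
    · have heq := hνru g hg (dOf Y, hOf Y) (hνdY Y hY) h2
      exact hrg (by rw [heq]; exact ⟨Y, hY, rfl⟩)
    · have hin : Sum.inr (hbOf Z) ∈ Y := by
        rw [show (dOf Z, hbOf Z).2 = hbOf Z from rfl] at h2
        rw [h2]
        exact (hActdata Y hY).2.2.2.2.2.2
      exact (hUniqInc Y (memV_isComponent (Or.inl (hActP Y hY))) Z hZ hin).2.2 hm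
  have hmuHVacN : ∀ Y ∈ ActSet I R μ, ¬ I.memVminus R Y →
      muH σ (hOf Y) = some (dOf (nextOf I R μ Y), hOf Y) ∧
      I.strictH (hOf Y) (some (dOf (nextOf I R μ Y), hOf Y)) (some (dOf Y, hOf Y)) := by
    intro Y hY hnm
    obtain ⟨hZ, harc⟩ := act_succ_mem hY hnm
    have hP2 := (harcData Y (nextOf I R μ Y) harc).2.2.2.2.2.1 (hActP Y hY)
    have hmem : (dOf (nextOf I R μ Y), hbOf (nextOf I R μ Y)) ∈ σ := hAddσ _ hZ
    have hsome := muH_spec_some hσru hmem hP2.1.symm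
    constructor
    · rw [hsome, ← hP2.1]
    · have h2 := hP2.2
      rw [← hP2.1] at h2
      exact h2
  have hPredType : ∀ Z ∈ ActSet I R μ,
      (∃ f ∈ I.Lset R, f.2 = hbOf Z ∧ I.prefH (hbOf Z) (some (dOf Z, hbOf Z)) (some f)) ∨
      ((∀ f ∈ I.Lset R, f.2 ≠ hbOf Z) ∧ ∀ f ∈ R, f.2 = hbOf Z →
        (I.simD f.1 (some f) (muD μ f.1) →
          I.prefH (hbOf Z) (some (dOf Z, hbOf Z)) (some f)) ∧
        (I.strictD f.1 (some f) (muD μ f.1) →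
          I.strictH (hbOf Z) (some (dOf Z, hbOf Z)) (some f))) := by
    intro Z hZ
    obtain ⟨a, harc, -, -, hor⟩ := hActpred Z hZ
    have hdata := harcData a Z harc
    have hina := hdata.2.2.2.1
    rcases harc.1 with hPa | hQa | hRa
    · have haAct : a ∈ ActSet I R μ := by
        rcases hor with h | h
        · exact h
        · exact absurd h (pstar_not_vplus hPa)
      have hP2 := hdata.2.2.2.2.2.1 hPa
      left
      refine ⟨(dOf a, hbOf Z), ?_, rfl, hP2.2.1⟩
      have hpe : (dOf a, hbOf Z) = (dOf a, hOf a) := by rw [hP2.1]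
      rw [hpe]
      exact (hActdata a haAct).1
    · left
      exact hdata.2.2.2.2.2.2.1 hQa
    · right
      have hP4 := hdata.2.2.2.2.2.2.2 hRa
      obtain ⟨hcompa, h', haeq, -, -⟩ := hRa
      refine ⟨?_, hP4⟩
      intro f hf hf2
      have hbh : (Sum.inr (hbOf Z) : D ⊕ H) = Sum.inr h' := by rw [haeq] at hina; exact hina
      have hinr2 : Sum.inr f.2 ∈ a := by rw [hf2, hbh, haeq]; rfl
      have hinl : Sum.inl f.1 ∈ a := (comp_edge_closed hcompa hf).2 hinr2
      rw [haeq] at hinl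
      exact absurd hinl (by simp)
  have hYcompmem : ∀ Y ∈ ActSet I R μ, Sum.inr (hOf Y) ∈ Y :=
    fun Y hY => (hActdata Y hY).2.2.2.2.2.2
  have hcoverage : ∀ h : H, h ∉ I.S →
      ((∃ f ∈ I.Lset R, f.2 = h) ∨ ∃ f ∈ R, f.2 = h) → muH σ h ≠ none := by
    intro h hns hdem
    by_cases hLh : ∃ f ∈ I.Lset R, f.2 = h
    · obtain ⟨f, hfL, hfh⟩ := hLh
      set X := compOf (I.Lset R) (Sum.inr h) with hXdef
      have hXc : isComponent (I.Lset R) X := compOf_isComponent _ _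
      have hinh : Sum.inr h ∈ X := mem_compOf _ _
      have hind : Sum.inl f.1 ∈ X := (comp_edge_closed hXc hfL).2 (hfh ▸ hinh)
      have hX2 : 2 ≤ X.ncard := two_le_ncard_of_pair (Set.toFinite X) hind hinh (by simp)
      have hDH : (Dside X).ncard ≤ (Hside X).ncard := by
        have hcnt := matched_count hνL hνlu hνru hνcovL hXc hX2
        rw [← hcnt]
        exact Set.ncard_le_ncard (fun x hx => hx.1) (Set.toFinite _)
      rcases eq_or_lt_of_le hDH with hPeq | hQlt
      · obtain ⟨g, hg, hgh⟩ := P_all_matched hνL hνlu hνru hνcovL hXc hX2 hPeq h hinh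
        by_cases hgR : g ∈ Rem
        · obtain ⟨Y, hY, rfl⟩ := hgR
          by_cases hm : I.memVminus R Y
          · exact absurd (hgh ▸ hActVac Y hY hm) hns
          · obtain ⟨hsome, -⟩ := hmuHVacN Y hY hm
            rw [← hgh, hsome]
            simp
        · rw [muH_spec_some hσru (Or.inl ⟨hg, hgR⟩) hgh]
          simp
      · have hQX : I.memQ R X := ⟨⟨hXc, hX2⟩, hQlt⟩
        by_cases hνh : edgesH ν h = ∅
        · rw [hνemp] at hνh
          rcases hνh with ⟨-, hall⟩ | ⟨X', hX', htX⟩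
          · exact absurd hinh (hall X hQX)
          · have hinX' : Sum.inr h ∈ X' := htX ▸ (htOf X' hX').1
            rcases (htOf X' hX').2 with ⟨Z, hZ, hbZ⟩ | ⟨htS, -⟩
            · have hbh : hbOf Z = h := hbZ.trans htX
              rw [← hbh, hmuHAdd Z hZ]
              simp
            · exact absurd (htX ▸ htS) hns
        · obtain ⟨g, hg, hgh⟩ := Set.nonempty_iff_ne_empty.2 hνh
          by_cases hgR : g ∈ Rem
          · exfalso
            obtain ⟨Y, hY, rfl⟩ := hgR
            have hinY : Sum.inr h ∈ Y := hgh ▸ hYcompmem Y hY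
            have hYX : Y = X :=
              comp_unique (memV_isComponent (Or.inl (hActP Y hY))) hXc hinY hinh
            have hPY := (hActP Y hY).1.2
            rw [hYX] at hPY
            omega
          · rw [muH_spec_some hσru (Or.inl ⟨hg, hgR⟩) hgh]
            simp
    · have hRe : ∃ f ∈ R, f.2 = h := by
        rcases hdem with hc | hc
        · exact absurd hc hLh
        · exact hc
      have hLempty : ∀ e ∈ I.Lset R, e.2 ≠ h := fun e he heh => hLh ⟨e, he, heh⟩
      have hsing : compOf (I.Lset R) (Sum.inr h) = {Sum.inr h} := comp_single hLempty
      have hRcal : I.memRcal R (compOf (I.Lset R) (Sum.inr h)) :=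
        ⟨compOf_isComponent _ _, h, hsing, hns, hRe⟩
      obtain ⟨hZ, harc⟩ := hVplusAct _ (Or.inr hRcal)
      have hin := (harcData _ _ harc).2.2.2.1
      have hin2 := (Set.ext_iff.1 hsing _).1 hin
      have hbh : hbOf (nextOf I R μ (compOf (I.Lset R) (Sum.inr h))) = h :=
        Sum.inr.inj hin2
      rw [← hbh, hmuHAdd _ hZ]
      simp
  have htransD : ∀ (d : D) (a b c : D × H), a ∈ I.E → a.1 = d → b ∈ I.E → b.1 = d →
      c ∈ I.E → c.1 = d → I.prefD d (some a) (some b) → I.prefD d (some b) (some c) →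
      I.prefD d (some a) (some c) := fun d a b c ha1 ha2 hb1 hb2 hc1 hc2 =>
    I.prefD_trans d (some a) (mem_optD_of_mem ha1 ha2) (some b) (mem_optD_of_mem hb1 hb2)
      (some c) (mem_optD_of_mem hc1 hc2)
  have htransH : ∀ (h : H) (a b c : D × H), a ∈ I.E → a.2 = h → b ∈ I.E → b.2 = h →
      c ∈ I.E → c.2 = h → I.prefH h (some a) (some b) → I.prefH h (some b) (some c) →
      I.prefH h (some a) (some c) := fun h a b c ha1 ha2 hb1 hb2 hc1 hc2 =>
    I.prefH_trans h (some a) (mem_optH_of_mem ha1 ha2) (some b) (mem_optH_of_mem hb1 hb2)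
      (some c) (mem_optH_of_mem hc1 hc2)
  have htotH : ∀ (h : H) (a b : D × H), a ∈ I.E → a.2 = h → b ∈ I.E → b.2 = h →
      I.prefH h (some a) (some b) ∨ I.prefH h (some b) (some a) :=
    fun h a b ha1 ha2 hb1 hb2 =>
    I.prefH_total h (some a) (mem_optH_of_mem ha1 ha2) (some b) (mem_optH_of_mem hb1 hb2)
  refine ⟨σ, ⟨hσE, hσlu, hσru⟩, ?_⟩
  rintro e ⟨heE, heσ, hwd, ⟨hwh, hScl⟩, hstr⟩
  by_cases hMov : ∃ Y ∈ ActSet I R μ, e.1 = dOf Y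
  · obtain ⟨Y, hY, hed⟩ := hMov
    obtain ⟨hLY, hbne, hbE, hstrict1, hedgesY, -, -⟩ := hActdata Y hY
    have heYE : (dOf Y, e.2) ∈ I.E := by
      have hpe : e = (dOf Y, e.2) := Prod.ext_iff.2 ⟨hed, rfl⟩
      rw [← hpe]; exact heE
    rcases deg2_forces (hdeg (dOf Y)) (hLE hLY) hbE heYE (Ne.symm hbne) with h2 | h2
    · have hee2 : e = (dOf Y, hOf Y) := Prod.ext_iff.2 ⟨hed, h2⟩
      by_cases hm : I.memVminus R Y
      · obtain ⟨hnone, hS⟩ := hmuHVacS Y hY hm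
        apply hScl (h2.symm ▸ hS)
        rw [h2, hnone]
      · obtain ⟨hsome, hstrg⟩ := hmuHVacN Y hY hm
        apply hstrg.2
        have hwh' := hwh
        rw [hee2] at hwh'
        dsimp only at hwh'
        rw [hsome] at hwh'
        exact hwh'
    · exact heσ (by
        rw [show e = (dOf Y, hbOf Y) from Prod.ext_iff.2 ⟨hed, h2⟩]
        exact hAddσ Y hY)
  · push_neg at hMov
    have hedges_e : edgesD σ e.1 = edgesD ν e.1 := hedgesDσ e.1 hMov
    by_cases heR : e ∈ R
    · -- R edges
      rcases hcase : muH σ e.2 with _ | g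
      · by_cases hs : e.2 ∈ I.S
        · exact hScl hs hcase
        · exact hcoverage e.2 hs (Or.inr ⟨e, heR, rfl⟩) hcase
      · obtain ⟨hgσ, hg2⟩ := muH_some_mem hcase
        rw [hcase] at hwh
        have hgE : g ∈ I.E := hσE hgσ
        by_cases hmat : (edgesD ν e.1).Nonempty
        · obtain ⟨fν, hfνν, hfν1⟩ := hmat
          have hfνR : fν ∉ Rem := by
            rintro ⟨Z, hZ, hfeq⟩
            exact hMov Z hZ (by rw [← hfν1, hfeq])
          have hfνσ : fν ∈ σ := Or.inl ⟨hfνν, hfνR⟩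
          have hmuσ : muD σ e.1 = some fν := muD_spec_some hσlu hfνσ hfν1
          have hfνL : fν ∈ I.Lset R := hνL hfνν
          obtain ⟨fμ, hfμμ, hfμ1⟩ := (hνcov e.1).1 ⟨fν, hfνν, hfν1⟩
          have hmuμ : muD μ e.1 = some fμ := muD_spec_some hμlu hfμμ hfμ1
          have hfμL : fμ ∈ I.Lset R := hμL hfμμ
          have hR5e : I.prefD e.1 (some e) (some fμ) := hR5 e.1 e heR rfl fμ (hLF hfμL) hfμ1
          have hsimfνμ : I.prefD e.1 (some fν) (some fμ) ∧
              I.prefD e.1 (some fμ) (some fν) := by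
            have hh := ChD_sim (Lset_sub_ChD hfνL) (Lset_sub_ChD hfμL)
              (hfμ1.trans hfν1.symm)
            rw [hfν1] at hh
            exact hh
          by_cases hsim : I.prefD e.1 (some fμ) (some e)
          · have hprefνe : I.prefD e.1 (some fν) (some e) :=
              htransD e.1 fν fμ e (hLE hfνL) hfν1 (hLE hfμL) hfμ1 heE rfl hsimfνμ.1 hsim
            have hnsd : ¬ I.strictD e.1 (some e) (muD σ e.1) := by
              rw [hmuσ]; rintro ⟨-, hc⟩; exact hc hprefνe
            have hnotSucc : ¬ I.dSucc (I.Ch (I.E \ R)) e := by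
              rintro (hall | ⟨f', hf'L, hf'1, hstrict⟩)
              · exact hall fμ hfμL hfμ1
              · have hsimf' := ChD_sim (Lset_sub_ChD hf'L) (Lset_sub_ChD hfμL)
                  (hfμ1.trans hf'1.symm)
                rw [hf'1] at hsimf'
                exact hstrict.2 (htransD e.1 f' fμ e (hLE hf'L) hf'1 (hLE hfμL) hfμ1
                  heE rfl hsimf'.1 hsim)
            have hdSim : I.dSim (I.Ch (I.E \ R)) e := ⟨fμ, hfμL, hfμ1, hR5e, hsim⟩
            have hno : ∀ f ∈ I.Ch (I.E \ R), f.2 = e.2 →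
                ¬ I.strictH e.2 (some e) (some f) := by
              intro f hf hf2 hstrictH
              have hmem : e ∈ R ∩ I.setBlock (I.Ch (I.E \ R)) :=
                ⟨heR, heE, fun hc => (hLF hc).2 heR, ⟨f, hf, hf2⟩, Or.inr hdSim,
                  fun hd => absurd hd hnotSucc, fun _ => ⟨f, hf, hf2, hstrictH⟩⟩
              rw [hR4] at hmem
              exact hmem
            rcases hgσ with ⟨hgν, hgR⟩ | ⟨Z, hZ, rfl⟩
            · rcases hstr with hsd | ⟨hsh, -⟩
              · exact hnsd hsd
              · rw [hcase] at hsh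
                exact hno g (hνL hgν) hg2 hsh
            · rcases hPredType Z hZ with ⟨f₀, hf₀L, hf₀2, hpref⟩ | ⟨hLempty, hP4⟩
              · have hf₀e : I.prefH e.2 (some f₀) (some e) := by
                  by_cases hpf : I.prefH e.2 (some f₀) (some e)
                  · exact hpf
                  · exfalso
                    rcases htotH e.2 e f₀ heE rfl (hLE hf₀L) (hf₀2.trans hg2) with hc | hc
                    · exact hno f₀ hf₀L (hf₀2.trans hg2) ⟨hc, hpf⟩
                    · exact hpf hc
                have hbe : hbOf Z = e.2 := hg2
                have hidxP : ∀ (p q : Option (D × H)), I.prefH (hbOf Z) p q →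
                    I.prefH e.2 p q := by
                  intro p q hp; rw [← hbe]; exact hp
                have hidxS : ∀ (p q : Option (D × H)), I.strictH (hbOf Z) p q →
                    I.strictH e.2 p q := by
                  intro p q hp
                  exact ⟨by rw [← hbe]; exact hp.1, by rw [← hbe]; exact hp.2⟩
                have hge : I.prefH e.2 (some (dOf Z, hbOf Z)) (some e) :=
                  htransH e.2 _ f₀ e (hσE (hAddσ Z hZ)) hg2 (hLE hf₀L)
                    (hf₀2.trans hg2) heE rfl (hidxP _ _ hpref) hf₀e
                rcases hstr with hsd | ⟨hsh, -⟩
                · exact hnsd hsd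
                · rw [hcase] at hsh
                  exact hsh.2 hge
              · have hbe : hbOf Z = e.2 := hg2
                have hidxP : ∀ (p q : Option (D × H)), I.prefH (hbOf Z) p q →
                    I.prefH e.2 p q := by
                  intro p q hp; rw [← hbe]; exact hp
                have hidxS : ∀ (p q : Option (D × H)), I.strictH (hbOf Z) p q →
                    I.strictH e.2 p q := by
                  intro p q hp
                  exact ⟨by rw [← hbe]; exact hp.1, by rw [← hbe]; exact hp.2⟩
                have hsime : I.simD e.1 (some e) (muD μ e.1) := by
                  rw [hmuμ]; exact ⟨hR5e, hsim⟩
                have hkey := (hP4 e heR hbe.symm).1 hsime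
                rcases hstr with hsd | ⟨hsh, -⟩
                · exact hnsd hsd
                · rw [hcase] at hsh
                  exact hsh.2 (hidxP _ _ hkey)
          · have hdSucc : I.dSucc (I.Ch (I.E \ R)) e :=
              Or.inr ⟨fμ, hfμL, hfμ1, hR5e, hsim⟩
            have hnotSim : ¬ I.dSim (I.Ch (I.E \ R)) e := by
              rintro ⟨f', hf'L, hf'1, -, hf'pref⟩
              have hsimf' := ChD_sim (Lset_sub_ChD hfμL) (Lset_sub_ChD hf'L)
                (hf'1.trans hfμ1.symm)
              rw [hfμ1] at hsimf'
              exact hsim (htransD e.1 fμ f' e (hLE hfμL) hfμ1 (hLE hf'L) hf'1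
                heE rfl hsimf'.1 hf'pref)
            have hno : ∀ f ∈ I.Ch (I.E \ R), f.2 = e.2 →
                ¬ I.prefH e.2 (some e) (some f) := by
              intro f hf hf2 hprefH
              have hmem : e ∈ R ∩ I.setBlock (I.Ch (I.E \ R)) :=
                ⟨heR, heE, fun hc => (hLF hc).2 heR, ⟨f, hf, hf2⟩, Or.inl hdSucc,
                  fun _ => ⟨f, hf, hf2, hprefH⟩, fun hd => absurd hd hnotSim⟩
              rw [hR4] at hmem
              exact hmem
            rcases hgσ with ⟨hgν, hgR⟩ | ⟨Z, hZ, rfl⟩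
            · exact hno g (hνL hgν) hg2 hwh
            · rcases hPredType Z hZ with ⟨f₀, hf₀L, hf₀2, hpref⟩ | ⟨hLempty, hP4⟩
              · apply hno f₀ hf₀L (hf₀2.trans hg2)
                have hbe : hbOf Z = e.2 := hg2
                have hidxP : ∀ (p q : Option (D × H)), I.prefH (hbOf Z) p q →
                    I.prefH e.2 p q := by
                  intro p q hp; rw [← hbe]; exact hp
                have hidxS : ∀ (p q : Option (D × H)), I.strictH (hbOf Z) p q →
                    I.strictH e.2 p q := by
                  intro p q hp
                  exact ⟨by rw [← hbe]; exact hp.1, by rw [← hbe]; exact hp.2⟩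
                exact htransH e.2 e _ f₀ heE rfl (hσE (hAddσ Z hZ)) hg2 (hLE hf₀L)
                  (hf₀2.trans hg2) hwh (hidxP _ _ hpref)
              · have hbe : hbOf Z = e.2 := hg2
                have hidxP : ∀ (p q : Option (D × H)), I.prefH (hbOf Z) p q →
                    I.prefH e.2 p q := by
                  intro p q hp; rw [← hbe]; exact hp
                have hidxS : ∀ (p q : Option (D × H)), I.strictH (hbOf Z) p q →
                    I.strictH e.2 p q := by
                  intro p q hp
                  exact ⟨by rw [← hbe]; exact hp.1, by rw [← hbe]; exact hp.2⟩
                have hstricte : I.strictD e.1 (some e) (muD μ e.1) := by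
                  rw [hmuμ]; exact ⟨hR5e, hsim⟩
                have hkey := (hP4 e heR hbe.symm).2 hstricte
                exact (hidxS _ _ hkey).2 hwh
        · -- unmatched doctor
          have hμnone : muD μ e.1 = none := by
            apply muD_spec_none
            intro f hf hfd
            exact hmat ((hνcov e.1).2 ⟨f, hf, hfd⟩)
          have hLd : ∀ f ∈ I.Lset R, f.1 ≠ e.1 := by
            intro f hf hfd
            exact hmat (hνcovL e.1 ⟨f, hf, hfd⟩)
          have hdSucc : I.dSucc (I.Ch (I.E \ R)) e := Or.inl hLd
          have hnotSim : ¬ I.dSim (I.Ch (I.E \ R)) e := by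
            rintro ⟨f', hf'L, hf'1, -⟩
            exact hLd f' hf'L hf'1
          have hno : ∀ f ∈ I.Ch (I.E \ R), f.2 = e.2 →
              ¬ I.prefH e.2 (some e) (some f) := by
            intro f hf hf2 hprefH
            have hmem : e ∈ R ∩ I.setBlock (I.Ch (I.E \ R)) :=
              ⟨heR, heE, fun hc => (hLF hc).2 heR, ⟨f, hf, hf2⟩, Or.inl hdSucc,
                fun _ => ⟨f, hf, hf2, hprefH⟩, fun hd => absurd hd hnotSim⟩
            rw [hR4] at hmem
            exact hmem
          rcases hgσ with ⟨hgν, hgR⟩ | ⟨Z, hZ, rfl⟩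
          · exact hno g (hνL hgν) hg2 hwh
          · rcases hPredType Z hZ with ⟨f₀, hf₀L, hf₀2, hpref⟩ | ⟨hLempty, hP4⟩
            · apply hno f₀ hf₀L (hf₀2.trans hg2)
              have hbe : hbOf Z = e.2 := hg2
              have hidxP : ∀ (p q : Option (D × H)), I.prefH (hbOf Z) p q →
                  I.prefH e.2 p q := by
                intro p q hp; rw [← hbe]; exact hp
              have hidxS : ∀ (p q : Option (D × H)), I.strictH (hbOf Z) p q →
                  I.strictH e.2 p q := by
                intro p q hp
                exact ⟨by rw [← hbe]; exact hp.1, by rw [← hbe]; exact hp.2⟩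
              exact htransH e.2 e _ f₀ heE rfl (hσE (hAddσ Z hZ)) hg2 (hLE hf₀L)
                (hf₀2.trans hg2) hwh (hidxP _ _ hpref)
            · have hbe : hbOf Z = e.2 := hg2
              have hidxP : ∀ (p q : Option (D × H)), I.prefH (hbOf Z) p q →
                  I.prefH e.2 p q := by
                intro p q hp; rw [← hbe]; exact hp
              have hidxS : ∀ (p q : Option (D × H)), I.strictH (hbOf Z) p q →
                  I.strictH e.2 p q := by
                intro p q hp
                exact ⟨by rw [← hbe]; exact hp.1, by rw [← hbe]; exact hp.2⟩
              have hstricte : I.strictD e.1 (some e) (muD μ e.1) := by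
                rw [hμnone]
                exact ⟨(I.prefD_none e.1 e ⟨heE, rfl⟩).1, (I.prefD_none e.1 e ⟨heE, rfl⟩).2⟩
              have hkey := (hP4 e heR hbe.symm).2 hstricte
              exact (hidxS _ _ hkey).2 hwh
    · -- edges of E \ R
      have heER : e ∈ I.E \ R := ⟨heE, heR⟩
      have hmat : (edgesD ν e.1).Nonempty := by
        obtain ⟨f, hf, hfd⟩ := hR3 e.1 ⟨e, heER, rfl⟩
        exact (hνcov e.1).2 ⟨f, hf, hfd⟩
      obtain ⟨fν, hfνν, hfν1⟩ := hmat
      have hfνR : fν ∉ Rem := by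
        rintro ⟨Z, hZ, hfeq⟩
        exact hMov Z hZ (by rw [← hfν1, hfeq])
      have hfνσ : fν ∈ σ := Or.inl ⟨hfνν, hfνR⟩
      have hmuσ : muD σ e.1 = some fν := muD_spec_some hσlu hfνσ hfν1
      have hfνL : fν ∈ I.Lset R := hνL hfνν
      rw [hmuσ] at hwd
      by_cases heChD : e ∈ I.ChD (I.E \ R)
      · have hsimeν : I.prefD e.1 (some fν) (some e) ∧ I.prefD e.1 (some e) (some fν) := by
          have hh := ChD_sim (Lset_sub_ChD hfνL) heChD (show e.1 = fν.1 from hfν1.symm)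
          rw [hfν1] at hh
          exact hh
        have hnsd : ¬ I.strictD e.1 (some e) (muD σ e.1) := by
          rw [hmuσ]; rintro ⟨-, hc⟩; exact hc hsimeν.1
        rcases hcase : muH σ e.2 with _ | g
        · by_cases hs : e.2 ∈ I.S
          · exact hScl hs hcase
          · obtain ⟨f₀, hf₀L, hf₀2⟩ := ChH_exists (G := I.ChD (I.E \ R))
              (fun x hx => (ChD_sub hx).1) ⟨e, heChD, rfl⟩
            exact hcoverage e.2 hs (Or.inl ⟨f₀, hf₀L, hf₀2⟩) hcase
        · obtain ⟨hgσ, hg2⟩ := muH_some_mem hcase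
          rw [hcase] at hwh
          by_cases heL : e ∈ I.Lset R
          · rcases hgσ with ⟨hgν, hgR⟩ | ⟨Z, hZ, rfl⟩
            · have hh := ChH_sim heL (hνL hgν) hg2
              rcases hstr with hsd | ⟨hsh, -⟩
              · exact hnsd hsd
              · rw [hcase] at hsh
                exact hsh.2 hh.2
            · rcases hPredType Z hZ with ⟨f₀, hf₀L, hf₀2, hpref⟩ | ⟨hLempty, hP4⟩
              · have hbe : hbOf Z = e.2 := hg2
                have hidxP : ∀ (p q : Option (D × H)), I.prefH (hbOf Z) p q →
                    I.prefH e.2 p q := by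
                  intro p q hp; rw [← hbe]; exact hp
                have hf₀e : I.prefH e.2 (some f₀) (some e) :=
                  (ChH_sim heL hf₀L (hf₀2.trans hg2)).2
                have hge : I.prefH e.2 (some (dOf Z, hbOf Z)) (some e) :=
                  htransH e.2 _ f₀ e (hσE (hAddσ Z hZ)) hg2 (hLE hf₀L)
                    (hf₀2.trans hg2) heE rfl (hidxP _ _ hpref) hf₀e
                rcases hstr with hsd | ⟨hsh, -⟩
                · exact hnsd hsd
                · rw [hcase] at hsh
                  exact hsh.2 hge
              · exact absurd hg2.symm (hLempty e heL)
          · have hstrictHf : ∀ g' ∈ I.Lset R, g'.2 = e.2 →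
                I.prefH e.2 (some g') (some e) ∧ ¬ I.prefH e.2 (some e) (some g') :=
              fun g' hg' hg'2 => ChH_strict (G := I.ChD (I.E \ R))
                (fun x hx => (ChD_sub hx).1) heChD heL hg' hg'2
            rcases hgσ with ⟨hgν, hgR⟩ | ⟨Z, hZ, rfl⟩
            · exact (hstrictHf g (hνL hgν) hg2).2 hwh
            · rcases hPredType Z hZ with ⟨f₀, hf₀L, hf₀2, hpref⟩ | ⟨hLempty, hP4⟩
              · have hbe : hbOf Z = e.2 := hg2
                have hidxP : ∀ (p q : Option (D × H)), I.prefH (hbOf Z) p q →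
                    I.prefH e.2 p q := by
                  intro p q hp; rw [← hbe]; exact hp
                exact (hstrictHf f₀ hf₀L (hf₀2.trans hg2)).2
                  (htransH e.2 e _ f₀ heE rfl (hσE (hAddσ Z hZ)) hg2 (hLE hf₀L)
                    (hf₀2.trans hg2) hwh (hidxP _ _ hpref))
              · obtain ⟨f₀, hf₀L, hf₀2⟩ := ChH_exists (G := I.ChD (I.E \ R))
                  (fun x hx => (ChD_sub hx).1) ⟨e, heChD, rfl⟩
                exact hLempty f₀ hf₀L (hf₀2.trans hg2.symm)
      · have hh := ChD_strict (F := I.E \ R) (fun x hx => hx.1) heER heChD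
          (Lset_sub_ChD hfνL) hfν1
        exact hh.2 hwd
end

section
/- In the bounded-degree setting with a critical hospital, if there exists a stable matching in G, then for every element X ∈ V⁺ there exists an element Y ∈ V⁻ such that there is a directed path from X to Y in the directed graph 𝐃 = (V, A). -/
open Classical

variable {D H : Type}

/- ======================= auxiliary development ======================= -/

namespace SSMCaux

open SSMC

variable {D H : Type}

/-! ### Basic option/preference helpers -/

lemma mem_optD_none (E : Set (D × H)) (d : D) : (none : Option (D × H)) ∈ optD E d :=
  Set.mem_insert _ _

lemma mem_optD_some {E : Set (D × H)} {d : D} {e : D × H} (he : e ∈ E) (hd : e.1 = d) :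
    some e ∈ optD E d :=
  Set.mem_insert_iff.mpr (Or.inr ⟨e, ⟨he, hd⟩, rfl⟩)

lemma mem_optH_none (E : Set (D × H)) (h : H) : (none : Option (D × H)) ∈ optH E h :=
  Set.mem_insert _ _

lemma mem_optH_some {E : Set (D × H)} {h : H} {e : D × H} (he : e ∈ E) (hd : e.2 = h) :
    some e ∈ optH E h :=
  Set.mem_insert_iff.mpr (Or.inr ⟨e, ⟨he, hd⟩, rfl⟩)

lemma prefD_refl (I : SSMC D H) {d : D} {e : Option (D × H)} (he : e ∈ optD I.E d) :
    I.prefD d e e :=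
  (I.prefD_total d e he e he).elim id id

lemma prefH_refl (I : SSMC D H) {h : H} {e : Option (D × H)} (he : e ∈ optH I.E h) :
    I.prefH h e e :=
  (I.prefH_total h e he e he).elim id id

/-! ### `muD` / `muH` -/

lemma muD_eq_some {σ : Set (D × H)} (hm : ∀ e ∈ σ, ∀ f ∈ σ, e.1 = f.1 → e = f)
    {e : D × H} (he : e ∈ σ) : muD σ e.1 = some e := by
  have hex : ∃ f, f ∈ σ ∧ f.1 = e.1 := ⟨e, he, rfl⟩
  rw [muD, dif_pos hex]
  exact congrArg some (hm _ hex.choose_spec.1 _ he hex.choose_spec.2)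

lemma muD_spec {σ : Set (D × H)} {d : D} {e : D × H} (h : muD σ d = some e) :
    e ∈ σ ∧ e.1 = d := by
  by_cases hex : ∃ f, f ∈ σ ∧ f.1 = d
  · rw [muD, dif_pos hex] at h
    obtain rfl : hex.choose = e := Option.some_injective _ h
    exact hex.choose_spec
  · rw [muD, dif_neg hex] at h; cases h

lemma muH_eq_some {σ : Set (D × H)} (hm : ∀ e ∈ σ, ∀ f ∈ σ, e.2 = f.2 → e = f)
    {e : D × H} (he : e ∈ σ) : muH σ e.2 = some e := by
  have hex : ∃ f, f ∈ σ ∧ f.2 = e.2 := ⟨e, he, rfl⟩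
  rw [muH, dif_pos hex]
  exact congrArg some (hm _ hex.choose_spec.1 _ he hex.choose_spec.2)

lemma muH_spec {σ : Set (D × H)} {h0 : H} {e : D × H} (h : muH σ h0 = some e) :
    e ∈ σ ∧ e.2 = h0 := by
  by_cases hex : ∃ f, f ∈ σ ∧ f.2 = h0
  · rw [muH, dif_pos hex] at h
    obtain rfl : hex.choose = e := Option.some_injective _ h
    exact hex.choose_spec
  · rw [muH, dif_neg hex] at h; cases h

/-! ### generic max over a finite set for a total transitive relation -/

lemma finset_exists_max {α : Type} (r : α → α → Prop) (s : Finset α) :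
    (∀ a ∈ s, ∀ b ∈ s, r a b ∨ r b a) →
    (∀ a ∈ s, ∀ b ∈ s, ∀ c ∈ s, r a b → r b c → r a c) →
    s.Nonempty → ∃ m ∈ s, ∀ b ∈ s, r m b := by
  classical
  induction s using Finset.induction_on with
  | empty => intro _ _ hne; exact absurd hne (by simp)
  | @insert a t ha ih =>
    intro htot htrans _
    by_cases ht : t.Nonempty
    · obtain ⟨m, hm, hmax⟩ := ih
        (fun x hx y hy => htot x (Finset.mem_insert_of_mem hx) y (Finset.mem_insert_of_mem hy))
        (fun x hx y hy z hz => htrans x (Finset.mem_insert_of_mem hx) y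
          (Finset.mem_insert_of_mem hy) z (Finset.mem_insert_of_mem hz)) ht
      rcases htot m (Finset.mem_insert_of_mem hm) a (Finset.mem_insert_self a t) with hma | ham
      · refine ⟨m, Finset.mem_insert_of_mem hm, ?_⟩
        intro b hb
        rcases Finset.mem_insert.mp hb with rfl | hb'
        · exact hma
        · exact hmax b hb'
      · refine ⟨a, Finset.mem_insert_self a t, ?_⟩
        intro b hb
        rcases Finset.mem_insert.mp hb with rfl | hb'
        · exact (htot b (Finset.mem_insert_self b t) b (Finset.mem_insert_self b t)).elim id id
        · exact htrans a (Finset.mem_insert_self a t) m (Finset.mem_insert_of_mem hm) b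
            (Finset.mem_insert_of_mem hb') ham (hmax b hb')
    · refine ⟨a, Finset.mem_insert_self a t, ?_⟩
      intro b hb
      rcases Finset.mem_insert.mp hb with rfl | hb'
      · exact (htot b (Finset.mem_insert_self b t) b (Finset.mem_insert_self b t)).elim id id
      · exact absurd ⟨b, hb'⟩ ht

/-! ### components of the bipartite graph -/

def comp (L : Set (D × H)) (v : D ⊕ H) : Set (D ⊕ H) :=
  {w | Relation.ReflTransGen (adjRel L) v w}

lemma adjRel_symm (L : Set (D × H)) : Symmetric (adjRel L) := by
  rintro (d | h) (d' | h') hab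
  · exact hab.elim
  · exact hab
  · exact hab
  · exact hab.elim

lemma comp_mem_self (L : Set (D × H)) (v : D ⊕ H) : v ∈ comp L v :=
  Relation.ReflTransGen.refl

lemma comp_eq_of_mem {L : Set (D × H)} {v w : D ⊕ H} (h : w ∈ comp L v) :
    comp L w = comp L v := by
  ext u
  constructor
  · intro hu; exact Relation.ReflTransGen.trans h hu
  · intro hu
    exact Relation.ReflTransGen.trans (by haveI : Std.Symm (adjRel L) := ⟨adjRel_symm L⟩; exact Std.Symm.symm _ _ h) hu

lemma isComponent_comp (L : Set (D × H)) (v : D ⊕ H) : isComponent L (comp L v) :=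
  ⟨v, comp_mem_self L v, rfl⟩

lemma isComponent_eq_comp {L : Set (D × H)} {X : Set (D ⊕ H)} (hX : isComponent L X)
    {v : D ⊕ H} (hv : v ∈ X) : X = comp L v := by
  obtain ⟨v₀, hv₀, rfl⟩ := hX
  exact (comp_eq_of_mem hv).symm

lemma component_eq {L : Set (D × H)} {X Y : Set (D ⊕ H)} (hX : isComponent L X)
    (hY : isComponent L Y) {v : D ⊕ H} (hvX : v ∈ X) (hvY : v ∈ Y) : X = Y :=
  (isComponent_eq_comp hX hvX).trans (isComponent_eq_comp hY hvY).symm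

lemma comp_closed {L : Set (D × H)} {X : Set (D ⊕ H)} (hX : isComponent L X)
    {v w : D ⊕ H} (hv : v ∈ X) (hadj : adjRel L v w) : w ∈ X := by
  rw [isComponent_eq_comp hX hv]
  exact Relation.ReflTransGen.single hadj

lemma mem_of_edge_l {L : Set (D × H)} {X : Set (D ⊕ H)} (hX : isComponent L X)
    {e : D × H} (he : e ∈ L) (h1 : Sum.inl e.1 ∈ X) : Sum.inr e.2 ∈ X :=
  comp_closed hX h1 (show adjRel L (Sum.inl e.1) (Sum.inr e.2) from he)

lemma mem_of_edge_r {L : Set (D × H)} {X : Set (D ⊕ H)} (hX : isComponent L X)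
    {e : D × H} (he : e ∈ L) (h2 : Sum.inr e.2 ∈ X) : Sum.inl e.1 ∈ X :=
  comp_closed hX h2 (show adjRel L (Sum.inr e.2) (Sum.inl e.1) from he)

lemma exists_adj {L : Set (D × H)} {X : Set (D ⊕ H)} (hX : isComponent L X)
    (h2 : 2 ≤ X.ncard) {v : D ⊕ H} (hv : v ∈ X) : ∃ w ∈ X, adjRel L v w := by
  obtain ⟨u, hu, hne⟩ := Set.exists_ne_of_one_lt_ncard (s := X) (by omega) v
  have hX' : X = comp L v := isComponent_eq_comp hX hv
  have hu' : u ∈ comp L v := hX' ▸ hu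
  rcases Relation.ReflTransGen.cases_head hu' with heq | ⟨w, hadj, _⟩
  · exact absurd heq.symm hne
  · exact ⟨w, comp_closed hX hv hadj, hadj⟩

/-! ### n-step reachability, for the edge-count lower bound -/

def nrel {α : Type} (r : α → α → Prop) : ℕ → α → α → Prop
  | 0, a, b => a = b
  | (n + 1), a, b => ∃ c, nrel r n a c ∧ r c b

lemma rtg_nrel {α : Type} {r : α → α → Prop} {a b : α} (h : Relation.ReflTransGen r a b) :
    ∃ n, nrel r n a b := by
  induction h with
  | refl => exact ⟨0, rfl⟩
  | tail _ hbc ih =>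
    obtain ⟨n, hn⟩ := ih
    exact ⟨n + 1, _, hn, hbc⟩

lemma nrel_rtg {α : Type} {r : α → α → Prop} :
    ∀ {n : ℕ} {a b : α}, nrel r n a b → Relation.ReflTransGen r a b := by
  intro n
  induction n with
  | zero => intro a b h; exact h ▸ Relation.ReflTransGen.refl
  | succ n ih =>
    rintro a b ⟨c, hc, hcb⟩
    exact (ih hc).tail hcb

end SSMCaux
namespace SSMCaux

open SSMC

variable {D H : Type}

/-! ### bundled context -/

structure Ctx (D H : Type) [Fintype D] [Fintype H] : Type where
  I : SSMC D H
  R : Set (D × H)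
  mu : Set (D × H)
  sg : Set (D × H)
  hdeg : ∀ d : D, (edgesD I.E d).ncard ≤ 2
  hpre : I.preproc R mu
  hst : I.stable sg

namespace Ctx

variable {D H : Type} [Fintype D] [Fintype H] (C : Ctx D H)

abbrev L : Set (D × H) := C.I.Lset C.R

lemma R_sub : C.R ⊆ C.I.E := C.hpre.1
lemma mu_sub_E : C.mu ⊆ C.I.E := C.hpre.2.1.1
lemma mu_matchD : ∀ e ∈ C.mu, ∀ f ∈ C.mu, e.1 = f.1 → e = f := C.hpre.2.1.2.1
lemma mu_matchH : ∀ e ∈ C.mu, ∀ f ∈ C.mu, e.2 = f.2 → e = f := C.hpre.2.1.2.2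
lemma sg_sub : C.sg ⊆ C.I.E := C.hst.1.1
lemma sg_matchD : ∀ e ∈ C.sg, ∀ f ∈ C.sg, e.1 = f.1 → e = f := C.hst.1.2.1
lemma sg_matchH : ∀ e ∈ C.sg, ∀ f ∈ C.sg, e.2 = f.2 → e = f := C.hst.1.2.2
lemma not_blocks (e : D × H) : ¬ C.I.blocks C.sg e := C.hst.2 e
lemma sg_notR : ∀ e ∈ C.R, e ∉ C.sg := fun e he => C.hpre.2.2.1 C.sg C.hst e he
lemma sg_sub_ER : C.sg ⊆ C.I.E \ C.R :=
  fun e he => ⟨C.sg_sub he, fun hR => C.sg_notR e hR he⟩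
lemma mu_sub_L : C.mu ⊆ C.L := C.hpre.2.2.2.1
lemma R3 : ∀ d : D, (∃ e ∈ C.I.E \ C.R, e.1 = d) → ∃ e ∈ C.mu, e.1 = d :=
  C.hpre.2.2.2.2.1
lemma R5 : ∀ d : D, ∀ e ∈ C.R, e.1 = d → ∀ f ∈ C.I.E \ C.R, f.1 = d →
    C.I.prefD d (some e) (some f) := C.hpre.2.2.2.2.2.2

lemma L_sub_ER : C.L ⊆ C.I.E \ C.R := fun _ he => he.1.1
lemma L_sub_E : C.L ⊆ C.I.E := fun e he => (C.L_sub_ER he).1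
lemma L_mem_ChD {e : D × H} (he : e ∈ C.L) : e ∈ C.I.ChD (C.I.E \ C.R) := he.1
lemma ChD_prefD {e f : D × H} (he : e ∈ C.I.ChD (C.I.E \ C.R)) (hf : f ∈ C.I.E \ C.R)
    (h1 : f.1 = e.1) : C.I.prefD e.1 (some e) (some f) := he.2 f hf h1
lemma L_prefH {e f : D × H} (he : e ∈ C.L) (hf : f ∈ C.L) (h2 : f.2 = e.2) :
    C.I.prefH e.2 (some e) (some f) := he.2 f hf.1 h2

lemma muEdge {d : D} {f : D × H} (hf : f ∈ C.I.E \ C.R) (h1 : f.1 = d) :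
    ∃ m, muD C.mu d = some m ∧ m ∈ C.mu ∧ m ∈ C.L ∧ m.1 = d := by
  obtain ⟨m, hm, hm1⟩ := C.R3 d ⟨f, hf, h1⟩
  refine ⟨m, ?_, hm, C.mu_sub_L hm, hm1⟩
  rw [← hm1]
  exact muD_eq_some C.mu_matchD hm

lemma ChD_pref_sg {e : D × H} (he : e ∈ C.I.ChD (C.I.E \ C.R)) :
    C.I.prefD e.1 (some e) (muD C.sg e.1) := by
  cases hmu : muD C.sg e.1 with
  | none => exact (C.I.prefD_none e.1 e ⟨he.1.1, rfl⟩).1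
  | some s =>
    obtain ⟨hs, hs1⟩ := muD_spec hmu
    exact he.2 s (C.sg_sub_ER hs) hs1

lemma L_pref_sg {e : D × H} (he : e ∈ C.L) :
    C.I.prefD e.1 (some e) (muD C.sg e.1) := C.ChD_pref_sg (C.L_mem_ChD he)

lemma R_pref_sg {e : D × H} (he : e ∈ C.R) :
    C.I.prefD e.1 (some e) (muD C.sg e.1) := by
  cases hmu : muD C.sg e.1 with
  | none => exact (C.I.prefD_none e.1 e ⟨C.R_sub he, rfl⟩).1
  | some s =>
    obtain ⟨hs, hs1⟩ := muD_spec hmu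
    exact C.R5 e.1 e he rfl s (C.sg_sub_ER hs) hs1

lemma muD_mem_opt (σ : Set (D × H)) (hσ : σ ⊆ C.I.E) (d : D) :
    muD σ d ∈ optD C.I.E d := by
  cases h : muD σ d with
  | none => exact mem_optD_none _ _
  | some s =>
    obtain ⟨hs, h1⟩ := muD_spec h
    exact mem_optD_some (hσ hs) h1

lemma strictD_pref_trans {d : D} {a b c : Option (D × H)} (ha : a ∈ optD C.I.E d)
    (hb : b ∈ optD C.I.E d) (hc : c ∈ optD C.I.E d)
    (h1 : C.I.strictD d a b) (h2 : C.I.prefD d b c) : C.I.strictD d a c :=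
  ⟨C.I.prefD_trans d a ha b hb c hc h1.1 h2,
    fun hca => h1.2 (C.I.prefD_trans d b hb c hc a ha h2 hca)⟩

lemma muMu_pref_sg (d : D) : C.I.prefD d (muD C.mu d) (muD C.sg d) := by
  cases hm : muD C.mu d with
  | some m =>
    obtain ⟨hmμ, hm1⟩ := muD_spec hm
    have := C.ChD_pref_sg (C.L_mem_ChD (C.mu_sub_L hmμ))
    rwa [hm1] at this
  | none =>
    have hσ : muD C.sg d = none := by
      cases hs : muD C.sg d with
      | none => rfl
      | some s =>
        obtain ⟨hsσ, hs1⟩ := muD_spec hs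
        obtain ⟨m', hm', hm1'⟩ := C.R3 d ⟨s, C.sg_sub_ER hsσ, hs1⟩
        have h2 := muD_eq_some C.mu_matchD hm'
        rw [hm1'] at h2
        rw [h2] at hm
        cases hm
    rw [hσ]
    exact prefD_refl C.I (mem_optD_none _ _)

/-! ### max element of `ChD` at a hospital is in `L` -/

lemma max_mem_L {h : H} (hne : ∃ e ∈ C.I.ChD (C.I.E \ C.R), e.2 = h) :
    ∃ mx ∈ C.L, mx.2 = h ∧
      ∀ f ∈ C.I.ChD (C.I.E \ C.R), f.2 = h → C.I.prefH h (some mx) (some f) := by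
  classical
  set F : Set (D × H) := {e ∈ C.I.ChD (C.I.E \ C.R) | e.2 = h} with hF
  have hmemF : ∀ e, e ∈ F ↔ e ∈ C.I.ChD (C.I.E \ C.R) ∧ e.2 = h := fun e => Iff.rfl
  have hFne : F.toFinset.Nonempty := by
    obtain ⟨e, he, he2⟩ := hne
    exact ⟨e, by rw [Set.mem_toFinset]; exact ⟨he, he2⟩⟩
  have hopt : ∀ a ∈ F.toFinset, some a ∈ optH C.I.E h := by
    intro a ha
    rw [Set.mem_toFinset] at ha
    exact mem_optH_some ha.1.1.1 ha.2
  obtain ⟨mx, hmx, hmax⟩ := finset_exists_max (fun a b => C.I.prefH h (some a) (some b))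
    F.toFinset
    (fun a ha b hb => C.I.prefH_total h _ (hopt a ha) _ (hopt b hb))
    (fun a ha b hb c hc => C.I.prefH_trans h _ (hopt a ha) _ (hopt b hb) _ (hopt c hc))
    hFne
  rw [Set.mem_toFinset] at hmx
  refine ⟨mx, ⟨hmx.1, ?_⟩, hmx.2, ?_⟩
  · intro f hf hf2
    have hmem : f ∈ F.toFinset := by
      rw [Set.mem_toFinset]; exact ⟨hf, hf2.trans hmx.2⟩
    have := hmax f hmem
    rw [hmx.2]
    exact this
  · intro f hf hf2
    exact hmax f (by rw [Set.mem_toFinset]; exact ⟨hf, hf2⟩)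

end Ctx

end SSMCaux
namespace SSMCaux

open SSMC

namespace Ctx

variable {D H : Type} [Fintype D] [Fintype H] (C : Ctx D H)

/-! ### stability case analysis -/

lemma stabB {e : D × H} (heE : e ∈ C.I.E) (hes : e ∉ C.sg)
    (hweak : C.I.prefD e.1 (some e) (muD C.sg e.1)) :
    (e.2 ∈ C.I.S ∧ muH C.sg e.2 = none) ∨
      ∃ w, muH C.sg e.2 = some w ∧ w ∈ C.sg ∧ w.2 = e.2 ∧
        C.I.prefH e.2 (some w) (some e) := by
  by_cases hSn : e.2 ∈ C.I.S ∧ muH C.sg e.2 = none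
  · exact Or.inl hSn
  right
  have hsc : e.2 ∈ C.I.S → muH C.sg e.2 ≠ none := fun hs hn => hSn ⟨hs, hn⟩
  have hnb := C.not_blocks e
  have hnstrH : ¬ C.I.strictH e.2 (some e) (muH C.sg e.2) := by
    intro hstrH
    by_cases hstrD : C.I.strictD e.1 (some e) (muD C.sg e.1)
    · exact hnb ⟨heE, hes, hweak, ⟨hstrH.1, hsc⟩, Or.inl hstrD⟩
    · exact hnb ⟨heE, hes, hweak, ⟨hstrH.1, hsc⟩, Or.inr ⟨hstrH, hsc⟩⟩
  cases hmu : muH C.sg e.2 with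
  | none =>
    exfalso
    rw [hmu] at hnstrH
    exact hnstrH ⟨(C.I.prefH_none e.2 e ⟨heE, rfl⟩).1, (C.I.prefH_none e.2 e ⟨heE, rfl⟩).2⟩
  | some w =>
    obtain ⟨hwσ, hw2⟩ := muH_spec hmu
    rw [hmu] at hnstrH
    have hwopt : some w ∈ optH C.I.E e.2 := mem_optH_some (C.sg_sub hwσ) hw2
    have heopt : some e ∈ optH C.I.E e.2 := mem_optH_some heE rfl
    by_cases hpw : C.I.prefH e.2 (some w) (some e)
    · exact ⟨w, rfl, hwσ, hw2, hpw⟩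
    · exact absurd ⟨(C.I.prefH_total e.2 _ heopt _ hwopt).resolve_right hpw, hpw⟩ hnstrH

lemma stabA {e : D × H} (heE : e ∈ C.I.E) (hes : e ∉ C.sg)
    (hweak : C.I.prefD e.1 (some e) (muD C.sg e.1))
    (hstr : C.I.strictD e.1 (some e) (muD C.sg e.1)) :
    (e.2 ∈ C.I.S ∧ muH C.sg e.2 = none) ∨
      ∃ w, muH C.sg e.2 = some w ∧ w ∈ C.sg ∧ w.2 = e.2 ∧
        C.I.strictH e.2 (some w) (some e) := by
  by_cases hSn : e.2 ∈ C.I.S ∧ muH C.sg e.2 = none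
  · exact Or.inl hSn
  right
  have hsc : e.2 ∈ C.I.S → muH C.sg e.2 ≠ none := fun hs hn => hSn ⟨hs, hn⟩
  have hnb := C.not_blocks e
  have hnprefH : ¬ C.I.prefH e.2 (some e) (muH C.sg e.2) :=
    fun hH => hnb ⟨heE, hes, hweak, ⟨hH, hsc⟩, Or.inl hstr⟩
  cases hmu : muH C.sg e.2 with
  | none =>
    exfalso
    rw [hmu] at hnprefH
    exact hnprefH (C.I.prefH_none e.2 e ⟨heE, rfl⟩).1
  | some w =>
    obtain ⟨hwσ, hw2⟩ := muH_spec hmu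
    rw [hmu] at hnprefH
    have hwopt : some w ∈ optH C.I.E e.2 := mem_optH_some (C.sg_sub hwσ) hw2
    have heopt : some e ∈ optH C.I.E e.2 := mem_optH_some heE rfl
    exact ⟨w, rfl, hwσ, hw2,
      ⟨(C.I.prefH_total e.2 _ hwopt _ heopt).resolve_right hnprefH, hnprefH⟩⟩

/-- stability at a hospital incident to an `R`-edge outside `S`. -/
lemma R_hosp {e : D × H} (heR : e ∈ C.R) (hS : e.2 ∉ C.I.S) :
    ∃ w, muH C.sg e.2 = some w ∧ w ∈ C.sg ∧ w.2 = e.2 ∧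
      C.I.prefH e.2 (some w) (some e) ∧
      (C.I.strictD e.1 (some e) (muD C.mu e.1) → C.I.strictH e.2 (some w) (some e)) := by
  have heE := C.R_sub heR
  have hes : e ∉ C.sg := C.sg_notR e heR
  have hweak := C.R_pref_sg heR
  rcases C.stabB heE hes hweak with ⟨hS', _⟩ | ⟨w, hw1, hw2, hw3, hw4⟩
  · exact absurd hS' hS
  refine ⟨w, hw1, hw2, hw3, hw4, ?_⟩
  intro hstrμ
  have hstr : C.I.strictD e.1 (some e) (muD C.sg e.1) :=
    C.strictD_pref_trans (mem_optD_some heE rfl)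
      (C.muD_mem_opt C.mu C.mu_sub_E e.1) (C.muD_mem_opt C.sg C.sg_sub e.1)
      hstrμ (C.muMu_pref_sg e.1)
  rcases C.stabA heE hes hweak hstr with ⟨hS', _⟩ | ⟨w', hw1', _, _, hw4'⟩
  · exact absurd hS' hS
  · rw [hw1] at hw1'
    obtain rfl : w = w' := Option.some_injective _ hw1'
    exact hw4'

/-- stability at a hospital incident to an `L`-edge outside `S`. -/
lemma L_hosp {e : D × H} (heL : e ∈ C.L) (hS : e.2 ∉ C.I.S) :
    ∃ w, muH C.sg e.2 = some w ∧ w ∈ C.sg ∧ w.2 = e.2 ∧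
      C.I.prefH e.2 (some w) (some e) := by
  by_cases hes : e ∈ C.sg
  · exact ⟨e, muH_eq_some C.sg_matchH hes, hes, rfl,
      prefH_refl C.I (mem_optH_some (C.L_sub_E heL) rfl)⟩
  rcases C.stabB (C.L_sub_E heL) hes (C.L_pref_sg heL) with ⟨hS', _⟩ | ⟨w, hw1, hw2, hw3, hw4⟩
  · exact absurd hS' hS
  · exact ⟨w, hw1, hw2, hw3, hw4⟩

end Ctx

end SSMCaux
namespace SSMCaux

open SSMC

namespace Ctx

variable {D H : Type} [Fintype D] [Fintype H] (C : Ctx D H)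

/-! ### counting in components -/

lemma comp_has_doctor {X : Set (D ⊕ H)} (hX : isComponent C.L X) (h2 : 2 ≤ X.ncard) :
    ∃ d : D, d ∈ Dside X := by
  obtain ⟨v, hv⟩ : X.Nonempty := by
    rw [← Set.ncard_pos (Set.toFinite _)]; omega
  obtain ⟨w, hw, hadj⟩ := exists_adj hX h2 hv
  cases v with
  | inl d => exact ⟨d, hv⟩
  | inr h =>
    cases w with
    | inl d => exact ⟨d, hw⟩
    | inr h' => exact hadj.elim

lemma Dside_edge {X : Set (D ⊕ H)} (hX : isComponent C.L X) (h2 : 2 ≤ X.ncard)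
    {d : D} (hd : d ∈ Dside X) : ∃ h : H, (d, h) ∈ C.L ∧ Sum.inr h ∈ X := by
  obtain ⟨w, hw, hadj⟩ := exists_adj hX h2 hd
  cases w with
  | inl d' => exact hadj.elim
  | inr h => exact ⟨h, hadj, hw⟩

lemma Hside_edge {X : Set (D ⊕ H)} (hX : isComponent C.L X) (h2 : 2 ≤ X.ncard)
    {h : H} (hh : h ∈ Hside X) : ∃ e ∈ C.L, e.2 = h ∧ Sum.inl e.1 ∈ X := by
  obtain ⟨w, hw, hadj⟩ := exists_adj hX h2 hh
  cases w with
  | inl d => exact ⟨(d, h), hadj, rfl, hw⟩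
  | inr h' => exact hadj.elim

/-- a connected component has at least `|X| - 1` edges. -/
lemma comp_card_le {X : Set (D ⊕ H)} (hX : isComponent C.L X) :
    X.ncard ≤ {e ∈ C.L | Sum.inl e.1 ∈ X}.ncard + 1 := by
  classical
  obtain ⟨v₀, hv₀, hXeq⟩ := hX
  set dist : (D ⊕ H) → ℕ :=
    fun w => if hw : ∃ n, nrel (adjRel C.L) n v₀ w then Nat.find hw else 0 with hdistdef
  have claim : ∀ w ∈ X, w ≠ v₀ → ∃ e : D × H, (e ∈ C.L ∧ Sum.inl e.1 ∈ X) ∧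
      ((w = Sum.inl e.1 ∧ dist (Sum.inr e.2) < dist w) ∨
        (w = Sum.inr e.2 ∧ dist (Sum.inl e.1) < dist w)) := by
    intro w hw hne
    have hex : ∃ n, nrel (adjRel C.L) n v₀ w := rtg_nrel (by rw [hXeq] at hw; exact hw)
    have hn0 : Nat.find hex ≠ 0 := by
      intro h0
      have hsp := Nat.find_spec hex
      rw [h0] at hsp
      exact hne hsp.symm
    obtain ⟨k, hk⟩ : ∃ k, Nat.find hex = k + 1 := ⟨Nat.find hex - 1, by omega⟩
    have hspec := Nat.find_spec hex
    rw [hk] at hspec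
    obtain ⟨u, hu, hadj⟩ := hspec
    have hexu : ∃ n, nrel (adjRel C.L) n v₀ u := ⟨k, hu⟩
    have hudist : dist u ≤ k := by
      simp only [hdistdef]
      rw [dif_pos hexu]
      exact Nat.find_min' hexu hu
    have hwdist : dist w = k + 1 := by
      simp only [hdistdef]
      rw [dif_pos hex]
      exact hk
    have huX : u ∈ X := by rw [hXeq]; exact nrel_rtg hu
    cases u with
    | inl d =>
      cases w with
      | inl d' => exact hadj.elim
      | inr h =>
        exact ⟨(d, h), ⟨hadj, huX⟩, Or.inr ⟨rfl, by
          show dist (Sum.inl d) < dist (Sum.inr h); omega⟩⟩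
    | inr h =>
      cases w with
      | inl d =>
        exact ⟨(d, h), ⟨hadj, hw⟩, Or.inl ⟨rfl, by
          show dist (Sum.inr h) < dist (Sum.inl d); omega⟩⟩
      | inr h' => exact hadj.elim
  by_cases hX1 : X \ {v₀} = ∅
  · have hsub : X ⊆ {v₀} := Set.diff_eq_empty.mp hX1
    have := Set.ncard_le_ncard hsub (Set.toFinite _)
    rw [Set.ncard_singleton] at this
    omega
  · obtain ⟨w₁, hw₁⟩ := Set.nonempty_iff_ne_empty.mpr hX1
    have hw₁' : w₁ ∈ X ∧ w₁ ≠ v₀ := ⟨hw₁.1, by simpa using hw₁.2⟩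
    obtain ⟨e₁, -, -⟩ := claim w₁ hw₁'.1 hw₁'.2
    have hle : (X \ {v₀}).ncard ≤ {e ∈ C.L | Sum.inl e.1 ∈ X}.ncard := by
      apply Set.ncard_le_ncard_of_injOn
        (fun w => if hw : w ∈ X ∧ w ≠ v₀ then (claim w hw.1 hw.2).choose else e₁)
      · intro w hw
        have hw' : w ∈ X ∧ w ≠ v₀ := ⟨hw.1, by simpa using hw.2⟩
        show (if hww : w ∈ X ∧ w ≠ v₀ then (claim w hww.1 hww.2).choose else e₁)
            ∈ {e ∈ C.L | Sum.inl e.1 ∈ X}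
        rw [dif_pos hw']
        exact (claim w hw'.1 hw'.2).choose_spec.1
      · intro w hw w' hw' heq
        have hwm : w ∈ X ∧ w ≠ v₀ := ⟨hw.1, by simpa using hw.2⟩
        have hwm' : w' ∈ X ∧ w' ≠ v₀ := ⟨hw'.1, by simpa using hw'.2⟩
        have heq' : (claim w hwm.1 hwm.2).choose = (claim w' hwm'.1 hwm'.2).choose := by
          simpa [dif_pos hwm, dif_pos hwm'] using heq
        have hsp := (claim w hwm.1 hwm.2).choose_spec.2
        have hsp' := (claim w' hwm'.1 hwm'.2).choose_spec.2
        rw [← heq'] at hsp'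
        by_contra hne
        rcases hsp with ⟨hw1, hd1⟩ | ⟨hw1, hd1⟩ <;>
          rcases hsp' with ⟨hw2, hd2⟩ | ⟨hw2, hd2⟩ <;>
          first
            | exact hne (hw1.trans hw2.symm)
            | (rw [← hw1] at hd2; rw [← hw2] at hd1; omega)
    have hdiff := Set.ncard_diff_singleton_add_one hv₀ (Set.toFinite _)
    omega

/-- edge count of a component equals `2 |D_X| - #leaves`. -/
lemma comp_edge_card {X : Set (D ⊕ H)} (hX : isComponent C.L X) (h2 : 2 ≤ X.ncard) :
    {e ∈ C.L | Sum.inl e.1 ∈ X}.ncard + (C.I.leafSet C.R X).ncard = 2 * (Dside X).ncard := by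
  classical
  set p : D → Prop := fun d => (edgesD C.L d).ncard = 1 with hp
  have hEZ : {e ∈ C.L | Sum.inl e.1 ∈ X}.toFinset
      = (Dside X).toFinset.biUnion (fun d => (edgesD C.L d).toFinset) := by
    ext e
    simp only [Set.mem_toFinset, Finset.mem_biUnion]
    simp only [Set.mem_setOf_eq, edgesD, Dside]
    constructor
    · rintro ⟨hL, hXx⟩
      exact ⟨e.1, hXx, hL, rfl⟩
    · rintro ⟨d, hd, hL, h1⟩
      exact ⟨hL, by rw [h1]; exact hd⟩
  have hdisj : ∀ x ∈ (Dside X).toFinset, ∀ y ∈ (Dside X).toFinset, x ≠ y →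
      Disjoint ((edgesD C.L x).toFinset) ((edgesD C.L y).toFinset) := by
    intro x _ y _ hxy
    rw [Finset.disjoint_left]
    intro e he he'
    rw [Set.mem_toFinset] at he he'
    exact hxy (he.2.symm.trans he'.2)
  have hcard : {e ∈ C.L | Sum.inl e.1 ∈ X}.ncard
      = ∑ d ∈ (Dside X).toFinset, (edgesD C.L d).ncard := by
    rw [Set.ncard_eq_toFinset_card', hEZ, Finset.card_biUnion hdisj]
    apply Finset.sum_congr rfl
    intro d _
    exact (Set.ncard_eq_toFinset_card' _).symm
  have hdeg12 : ∀ d ∈ (Dside X).toFinset, 1 ≤ (edgesD C.L d).ncard ∧ (edgesD C.L d).ncard ≤ 2 := by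
    intro d hd
    rw [Set.mem_toFinset] at hd
    obtain ⟨h, hL, -⟩ := C.Dside_edge hX h2 hd
    constructor
    · have hpos : 0 < (edgesD C.L d).ncard :=
        (Set.ncard_pos (Set.toFinite _)).mpr ⟨(d, h), hL, rfl⟩
      omega
    · refine le_trans (Set.ncard_le_ncard ?_ (Set.toFinite _)) (C.hdeg d)
      intro e he
      exact ⟨C.L_sub_E he.1, he.2⟩
  have hleaf : (C.I.leafSet C.R X).toFinset = (Dside X).toFinset.filter p := by
    ext d
    simp only [Set.mem_toFinset, Finset.mem_filter]
    simp only [SSMC.leafSet, Set.mem_setOf_eq, hp]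
  have hsplit := Finset.sum_filter_add_sum_filter_not (Dside X).toFinset p
    (fun d => (edgesD C.L d).ncard)
  have h1 : ∑ d ∈ (Dside X).toFinset.filter p, (edgesD C.L d).ncard
      = ((Dside X).toFinset.filter p).card := by
    rw [Finset.card_eq_sum_ones]
    apply Finset.sum_congr rfl
    intro d hd
    exact (Finset.mem_filter.mp hd).2
  have h2' : ∑ d ∈ (Dside X).toFinset.filter (fun d => ¬ p d), (edgesD C.L d).ncard
      = 2 * ((Dside X).toFinset.filter (fun d => ¬ p d)).card := by
    have hcongr : ∀ d ∈ (Dside X).toFinset.filter (fun d => ¬ p d), (edgesD C.L d).ncard = 2 := by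
      intro d hd
      rw [Finset.mem_filter] at hd
      have h12 := hdeg12 d hd.1
      have hnp := hd.2
      rw [hp] at hnp
      omega
    rw [Finset.sum_congr rfl hcongr, Finset.sum_const, smul_eq_mul, Nat.mul_comm]
  have hpart := Finset.card_filter_add_card_filter_not
    (s := (Dside X).toFinset) (p := p)
  rw [hcard, ← hsplit, h1, h2', Set.ncard_eq_toFinset_card' (C.I.leafSet C.R X), hleaf,
    Set.ncard_eq_toFinset_card' (Dside X)]
  omega

/-- a component with a leaf doctor is in `P*` (counting part). -/
lemma comp_P {X : Set (D ⊕ H)} (hX : isComponent C.L X) (h2 : 2 ≤ X.ncard)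
    {d₀ : D} (hd₀ : d₀ ∈ C.I.leafSet C.R X) :
    (Dside X).ncard = (Hside X).ncard ∧ (C.I.leafSet C.R X).ncard = 1 := by
  classical
  have hcard1 := C.comp_card_le hX
  have hcard2 := C.comp_edge_card hX h2
  -- D ≤ H via μ
  obtain ⟨h₀, -, -⟩ := C.Dside_edge hX h2 hd₀.1
  have hDH : (Dside X).ncard ≤ (Hside X).ncard := by
    apply Set.ncard_le_ncard_of_injOn (fun d => (muD C.mu d).elim h₀ Prod.snd)
    · intro d hd
      obtain ⟨h, hL, hXh⟩ := C.Dside_edge hX h2 hd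
      obtain ⟨m, hmeq, hmμ, hmL, hm1⟩ := C.muEdge (C.L_sub_ER hL) (rfl : ((d, h) : D × H).1 = d)
      have hmeq' : muD C.mu d = some m := hmeq
      have hm1' : m.1 = d := hm1
      show ((muD C.mu d).elim h₀ Prod.snd) ∈ Hside X
      rw [hmeq']
      show Sum.inr m.2 ∈ X
      exact mem_of_edge_l hX hmL (by rw [hm1']; exact hd)
    · intro d₁ hd₁ d₂ hd₂ heq
      obtain ⟨h1', hL1, -⟩ := C.Dside_edge hX h2 hd₁
      obtain ⟨h2', hL2, -⟩ := C.Dside_edge hX h2 hd₂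
      obtain ⟨m₁, hmeq₁, hmμ₁, -, hm11⟩ := C.muEdge (C.L_sub_ER hL1) (rfl : ((d₁, h1') : D × H).1 = d₁)
      obtain ⟨m₂, hmeq₂, hmμ₂, -, hm21⟩ := C.muEdge (C.L_sub_ER hL2) (rfl : ((d₂, h2') : D × H).1 = d₂)
      have heq' : (muD C.mu d₁).elim h₀ Prod.snd = (muD C.mu d₂).elim h₀ Prod.snd := heq
      have hmeq₁' : muD C.mu d₁ = some m₁ := hmeq₁
      have hmeq₂' : muD C.mu d₂ = some m₂ := hmeq₂
      rw [hmeq₁', hmeq₂'] at heq'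
      have hm12 : m₁.2 = m₂.2 := heq'
      have hmm := C.mu_matchH m₁ hmμ₁ m₂ hmμ₂ hm12
      have hm11' : m₁.1 = d₁ := hm11
      have hm21' : m₂.1 = d₂ := hm21
      rw [← hm11', ← hm21', hmm]
  -- |X| = |D| + |H|
  have hun : X = (Sum.inl '' Dside X) ∪ (Sum.inr '' Hside X) := by
    ext w
    cases w with
    | inl d =>
      simp only [Set.mem_union, Set.mem_image, Dside, Hside, Set.mem_setOf_eq]
      constructor
      · intro h; exact Or.inl ⟨d, h, rfl⟩
      · rintro (⟨d', hd', heq⟩ | ⟨h', hh', heq⟩)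
        · obtain rfl : d' = d := Sum.inl_injective heq
          exact hd'
        · cases heq
    | inr h =>
      simp only [Set.mem_union, Set.mem_image, Dside, Hside, Set.mem_setOf_eq]
      constructor
      · intro hh; exact Or.inr ⟨h, hh, rfl⟩
      · rintro (⟨d', hd', heq⟩ | ⟨h', hh', heq⟩)
        · cases heq
        · obtain rfl : h' = h := Sum.inr_injective heq
          exact hh'
  have hdis : Disjoint (Sum.inl '' Dside X) (Sum.inr '' Hside X) := by
    rw [Set.disjoint_left]
    rintro w ⟨d, -, rfl⟩ ⟨h, -, heq⟩
    cases heq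
  have hXsplit : X.ncard = (Dside X).ncard + (Hside X).ncard := by
    have hcardun := Set.ncard_union_eq hdis (Set.toFinite _) (Set.toFinite _)
    rw [← hun, Set.ncard_image_of_injective _ Sum.inl_injective,
      Set.ncard_image_of_injective _ Sum.inr_injective] at hcardun
    exact hcardun
  have hl1 : 1 ≤ (C.I.leafSet C.R X).ncard :=
    (Set.ncard_pos (Set.toFinite _)).mpr ⟨d₀, hd₀⟩
  omega

/-- doctor degree-2 helper -/
lemma edges_pair {d : D} {e₁ e₂ : D × H} (h₁ : e₁ ∈ C.I.E) (h₂ : e₂ ∈ C.I.E)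
    (h11 : e₁.1 = d) (h21 : e₂.1 = d) (hne : e₁ ≠ e₂) :
    edgesD C.I.E d = {e₁, e₂} ∧ (edgesD C.I.E d).ncard = 2 := by
  have hsub : ({e₁, e₂} : Set (D × H)) ⊆ edgesD C.I.E d := by
    rintro e (rfl | rfl)
    · exact ⟨h₁, h11⟩
    · exact ⟨h₂, h21⟩
  have hp : ({e₁, e₂} : Set (D × H)).ncard = 2 := Set.ncard_pair hne
  have heq := Set.eq_of_subset_of_ncard_le hsub (by rw [hp]; exact C.hdeg d) (Set.toFinite _)
  exact ⟨heq.symm, by rw [← heq, hp]⟩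

end Ctx

end SSMCaux
namespace SSMCaux

open SSMC

namespace Ctx

variable {D H : Type} [Fintype D] [Fintype H] (C : Ctx D H)

/-- The key structural lemma: a doctor matched in `σ` along a non-`L` edge is a
`B`-leaf whose component is in `P*`. -/
lemma bleaf {d : D} {h' : H} (heσ : (d, h') ∈ C.sg) (heL : (d, h') ∉ C.L) :
    ∃ m : D × H, muD C.mu d = some m ∧ m ∈ C.L ∧ m.1 = d ∧ m.2 ≠ h' ∧
      C.I.strictD d (some m) (some (d, h')) ∧
      edgesD C.L d = {m} ∧ (edgesD C.I.E d).ncard = 2 ∧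
      muD C.sg d = some (d, h') ∧
      d ∈ C.I.leafSet C.R (comp C.L (Sum.inl d)) ∧
      C.I.memPstar C.R (comp C.L (Sum.inl d)) ∧
      C.I.leafSet C.R (comp C.L (Sum.inl d)) = {d} := by
  have heER : (d, h') ∈ C.I.E \ C.R := C.sg_sub_ER heσ
  obtain ⟨m, hμm, hmμ, hmL, hm1⟩ := C.muEdge heER (rfl : ((d, h') : D × H).1 = d)
  have hμσ : muD C.sg d = some (d, h') := muD_eq_some C.sg_matchD heσ
  have hmne : m ≠ (d, h') := fun h => heL (h ▸ hmL)
  have hmE : m ∈ C.I.E := C.L_sub_E hmL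
  have hoptm : some m ∈ optD C.I.E d := mem_optD_some hmE hm1
  have hopte : some (d, h') ∈ optD C.I.E d := mem_optD_some heER.1 rfl
  have hpref : C.I.prefD d (some m) (some (d, h')) := by
    have := C.ChD_prefD (C.L_mem_ChD hmL) heER (show ((d, h') : D × H).1 = m.1 by rw [hm1])
    rwa [hm1] at this
  have hstrict : C.I.strictD d (some m) (some (d, h')) := by
    by_contra hns
    have hem : C.I.prefD d (some (d, h')) (some m) := by
      by_contra hem
      exact hns ⟨hpref, hem⟩
    have heChD : (d, h') ∈ C.I.ChD (C.I.E \ C.R) := by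
      refine ⟨heER, ?_⟩
      intro f hf hf1
      have hmf : C.I.prefD d (some m) (some f) := by
        have := C.ChD_prefD (C.L_mem_ChD hmL) hf (by rw [hf1, ← hm1])
        rwa [hm1] at this
      exact C.I.prefD_trans d _ hopte _ hoptm _ (mem_optD_some hf.1 hf1) hem hmf
    obtain ⟨mx, hmxL, hmx2, hmxmax⟩ := C.max_mem_L (h := h') ⟨(d, h'), heChD, rfl⟩
    have hmxe : mx ≠ (d, h') := fun h => heL (h ▸ hmxL)
    have hmxσ : mx ∉ C.sg := fun hc => hmxe (C.sg_matchH mx hc (d, h') heσ hmx2)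
    have hmuHe : muH C.sg h' = some (d, h') := muH_eq_some C.sg_matchH heσ
    have hblocks : C.I.blocks C.sg mx := by
      have hw : C.I.prefH mx.2 (some mx) (muH C.sg mx.2) := by
        rw [hmx2, hmuHe]
        exact hmxmax (d, h') heChD rfl
      have hsc : mx.2 ∈ C.I.S → muH C.sg mx.2 ≠ none := by
        rw [hmx2, hmuHe]
        exact fun _ hcc => Option.some_ne_none _ hcc
      have hstrH : C.I.strictH mx.2 (some mx) (muH C.sg mx.2) := by
        rw [hmx2, hmuHe]
        refine ⟨hmxmax (d, h') heChD rfl, ?_⟩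
        intro hcon
        apply heL
        refine ⟨heChD, ?_⟩
        intro f hfChD hf2
        have hx1 : C.I.prefH h' (some (d, h')) (some mx) := hcon
        have hx2 : C.I.prefH h' (some mx) (some f) := hmxmax f hfChD hf2
        exact C.I.prefH_trans h' _ (mem_optH_some heER.1 rfl) _
          (mem_optH_some (C.L_sub_E hmxL) hmx2) _ (mem_optH_some hfChD.1.1 hf2) hx1 hx2
      exact ⟨C.L_sub_E hmxL, hmxσ, C.L_pref_sg hmxL, ⟨hw, hsc⟩, Or.inr ⟨hstrH, hsc⟩⟩
    exact C.not_blocks mx hblocks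
  have hEpair := C.edges_pair hmE heER.1 hm1 rfl hmne
  have hLsing : edgesD C.L d = {m} := by
    ext f
    constructor
    · rintro ⟨hfL, hf1⟩
      have hfE : f ∈ edgesD C.I.E d := ⟨C.L_sub_E hfL, hf1⟩
      rw [hEpair.1] at hfE
      rcases hfE with rfl | hfE
      · rfl
      · rw [Set.mem_singleton_iff] at hfE
        exact absurd (hfE ▸ hfL) heL
    · intro hf
      rw [Set.mem_singleton_iff] at hf
      subst hf
      exact ⟨hmL, hm1⟩
  have hm2ne : m.2 ≠ h' := fun hc => hmne (Prod.ext hm1 hc)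
  have hYc : isComponent C.L (comp C.L (Sum.inl d)) := isComponent_comp _ _
  have hdY : Sum.inl d ∈ comp C.L (Sum.inl d) := comp_mem_self _ _
  have hmY : Sum.inr m.2 ∈ comp C.L (Sum.inl d) :=
    mem_of_edge_l hYc hmL (by rw [hm1]; exact hdY)
  have h2Y : 2 ≤ (comp C.L (Sum.inl d)).ncard := by
    have hsub : ({Sum.inl d, Sum.inr m.2} : Set (D ⊕ H)) ⊆ comp C.L (Sum.inl d) := by
      rintro w (rfl | rfl)
      · exact hdY
      · exact hmY
    calc (2 : ℕ) = ({Sum.inl d, Sum.inr m.2} : Set (D ⊕ H)).ncard :=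
          (Set.ncard_pair (by simp)).symm
      _ ≤ _ := Set.ncard_le_ncard hsub (Set.toFinite _)
  have hdleaf : d ∈ C.I.leafSet C.R (comp C.L (Sum.inl d)) := by
    refine ⟨hdY, ?_⟩
    show (edgesD C.L d).ncard = 1
    rw [hLsing]
    exact Set.ncard_singleton m
  obtain ⟨hDHeq, hleafcard⟩ := C.comp_P hYc h2Y hdleaf
  have hPstar : C.I.memPstar C.R (comp C.L (Sum.inl d)) := ⟨⟨⟨hYc, h2Y⟩, hDHeq⟩, hleafcard⟩
  have hleafeq : C.I.leafSet C.R (comp C.L (Sum.inl d)) = {d} := by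
    obtain ⟨a, ha⟩ := Set.ncard_eq_one.mp hleafcard
    have hda : d = a := by
      rw [ha] at hdleaf
      exact hdleaf
    rw [ha, hda]
  exact ⟨m, hμm, hmL, hm1, hm2ne, hstrict, hLsing, hEpair.2, hμσ, hdleaf, hPstar, hleafeq⟩

end Ctx

end SSMCaux
namespace SSMCaux

open SSMC

variable {D H : Type} [Fintype D] [Fintype H]

/-- invariant carried along the cascade. -/
def Good (C : Ctx D H) (X₀ Y : Set (D ⊕ H)) (d : D) (h' : H) : Prop :=
  Relation.ReflTransGen (C.I.arc C.R C.mu) X₀ Y ∧ isComponent C.L Y ∧ Sum.inl d ∈ Y ∧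
    muD C.sg d = some (d, h') ∧ (d, h') ∉ C.L

namespace Ctx

variable (C : Ctx D H)

lemma step (X₀ : Set (D ⊕ H))
    (hno : ¬ ∃ Z, C.I.memVminus C.R Z ∧ Relation.ReflTransGen (C.I.arc C.R C.mu) X₀ Z)
    {Y : Set (D ⊕ H)} {d : D} {h' : H} (hg : Good C X₀ Y d h') :
    ∃ (Y₂ : Set (D ⊕ H)) (d₂ : D) (h₂ : H), Good C X₀ Y₂ d₂ h₂ ∧ Sum.inr h₂ ∈ Y := by
  obtain ⟨hreach, hYc, hdY, hσd, hdL⟩ := hg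
  have heσ : (d, h') ∈ C.sg := (muD_spec hσd).1
  obtain ⟨m, hμm, hmL, hm1, hm2ne, hstr, hLsing, hdeg2, hσd', hleafm, hPstarm, hleafeqm⟩ :=
    C.bleaf heσ hdL
  have hYeq : Y = comp C.L (Sum.inl d) := isComponent_eq_comp hYc hdY
  rw [← hYeq] at hleafm hPstarm hleafeqm
  have hmY : Sum.inr m.2 ∈ Y := mem_of_edge_l hYc hmL (by rw [hm1]; exact hdY)
  have hmσ : m ∉ C.sg := by
    intro hc
    have h2 := muD_eq_some C.sg_matchD hc
    rw [hm1, hσd] at h2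
    have h3 : (d, h') = m := Option.some_injective _ h2
    exact hdL (h3 ▸ hmL)
  have hstrσ : C.I.strictD m.1 (some m) (muD C.sg m.1) := by
    rw [hm1, hσd]
    exact hstr
  rcases C.stabA (C.L_sub_E hmL) hmσ (C.L_pref_sg hmL) hstrσ with
    ⟨hSc, hnone⟩ | ⟨w, hwmu, hwσ, hw2, hwstr⟩
  · exfalso
    apply hno
    refine ⟨Y, ⟨hPstarm, d, ?_, m.2, ?_, hSc⟩, hreach⟩
    · rw [hleafeqm]; rfl
    · have hpm : ((d : D), m.2) = m := Prod.ext hm1.symm rfl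
      rw [hpm]; exact hmL
  · have hwL : w ∉ C.L := by
      intro hwLm
      exact hwstr.2 (C.L_prefH hmL hwLm hw2)
    have hwpσ : ((w.1 : D), w.2) ∈ C.sg := by rw [Prod.mk.eta]; exact hwσ
    have hwpL : ((w.1 : D), w.2) ∉ C.L := by rw [Prod.mk.eta]; exact hwL
    obtain ⟨m₂, hμm₂, hm₂L, hm₂1, hm₂2ne, hstr₂, hLsing₂, hdeg₂2, hσw, hleafm₂, hPstar₂, hleafeq₂⟩ :=
      C.bleaf hwpσ hwpL
    have hwd : w.1 ≠ d := by
      intro hc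
      rw [hc, hσd] at hσw
      have h3 : (d, h') = (d, w.2) := Option.some_injective _ hσw
      have h4 : h' = w.2 := congrArg Prod.snd h3
      rw [hw2] at h4
      exact hm2ne h4.symm
    have hw1Y : Sum.inl w.1 ∉ Y := by
      intro hmem
      have hlf : w.1 ∈ C.I.leafSet C.R Y := by
        refine ⟨hmem, ?_⟩
        show (edgesD C.L w.1).ncard = 1
        rw [hLsing₂]
        exact Set.ncard_singleton _
      rw [hleafeqm] at hlf
      exact hwd hlf
    have hYne : Y ≠ comp C.L (Sum.inl w.1) := by
      intro hc
      apply hw1Y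
      rw [hc]
      exact comp_mem_self _ _
    have hp2 : ((w.1 : D), m₂.2) = m₂ := Prod.ext hm₂1.symm rfl
    have hpw : ((w.1 : D), m.2) = w := Prod.ext rfl hw2.symm
    have hpm : ((d : D), m.2) = m := Prod.ext hm1.symm rfl
    have harc : C.I.arc C.R C.mu Y (comp C.L (Sum.inl w.1)) := by
      refine ⟨Or.inl hPstarm, Or.inl hPstar₂, hYne, hPstar₂,
        w.1, m₂.2, m.2, hleafm₂, ?_, ?_, ?_, hdeg₂2, hmY, ?_, ?_, ?_, ?_⟩
      · rw [hp2]; exact hm₂L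
      · intro hc
        rw [← hw2] at hc
        exact hm₂2ne hc.symm
      · rw [hpw]; exact C.sg_sub hwσ
      · rw [hp2, hpw]; exact hstr₂
      · intro hPX
        exact ⟨d, m.2, by rw [hleafeqm]; rfl, by rw [hpm]; exact hmL, rfl,
          by rw [hpw, hpm]; exact hwstr⟩
      · intro hQX
        exact absurd hPstarm.1.2 (Nat.ne_of_lt hQX.2)
      · intro hRX
        obtain ⟨-, hh, hXeq, -, -⟩ := hRX
        have h2c := hPstarm.1.1.2
        rw [hXeq, Set.ncard_singleton] at h2c
        omega
    refine ⟨comp C.L (Sum.inl w.1), w.1, w.2,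
      ⟨hreach.tail harc, isComponent_comp _ _, comp_mem_self _ _, hσw, hwpL⟩, ?_⟩
    rw [hw2]
    exact hmY

lemma baseQ {X : Set (D ⊕ H)} (hQ : C.I.memQ C.R X)
    (hS : ∀ h ∈ Hside X, h ∉ C.I.S) :
    ∃ (Y : Set (D ⊕ H)) (d : D) (h' : H),
      C.I.arc C.R C.mu X Y ∧ isComponent C.L Y ∧ Sum.inl d ∈ Y ∧
      muD C.sg d = some (d, h') ∧ (d, h') ∉ C.L ∧ Sum.inr h' ∈ X := by
  obtain ⟨⟨hXc, h2⟩, hlt⟩ := hQ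
  have hmatched : ∀ h ∈ Hside X, ∃ w, muH C.sg h = some w ∧ w ∈ C.sg ∧ w.2 = h := by
    intro h hh
    obtain ⟨e₀, he₀L, he₀2, -⟩ := C.Hside_edge hXc h2 hh
    have hSo : e₀.2 ∉ C.I.S := by rw [he₀2]; exact hS h hh
    obtain ⟨w, hw1, hw2, hw3, -⟩ := C.L_hosp he₀L hSo
    rw [he₀2] at hw1 hw3
    exact ⟨w, hw1, hw2, hw3⟩
  by_cases hall : ∀ h ∈ Hside X, ∀ w, muH C.sg h = some w → w ∈ C.L
  · exfalso
    obtain ⟨d₀, hd₀⟩ := C.comp_has_doctor hXc h2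
    have hle : (Hside X).ncard ≤ (Dside X).ncard := by
      apply Set.ncard_le_ncard_of_injOn (fun h => (muH C.sg h).elim d₀ Prod.fst)
      · intro h hh
        obtain ⟨w, hw1, hw2, hw3⟩ := hmatched h hh
        have hwL := hall h hh w hw1
        show ((muH C.sg h).elim d₀ Prod.fst) ∈ Dside X
        rw [hw1]
        show Sum.inl w.1 ∈ X
        exact mem_of_edge_r hXc hwL (by rw [hw3]; exact hh)
      · intro h₁ hh₁ h₂ hh₂ heq
        obtain ⟨w₁, hw11, hw12, hw13⟩ := hmatched h₁ hh₁
        obtain ⟨w₂, hw21, hw22, hw23⟩ := hmatched h₂ hh₂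
        have heq' : (muH C.sg h₁).elim d₀ Prod.fst = (muH C.sg h₂).elim d₀ Prod.fst := heq
        rw [hw11, hw21] at heq'
        have hww : w₁.1 = w₂.1 := heq'
        have hww' := C.sg_matchD w₁ hw12 w₂ hw22 hww
        rw [← hw13, ← hw23, hww']
    omega
  · push_neg at hall
    obtain ⟨h', hh', w, hmuw, hwnL⟩ := hall
    obtain ⟨hwσ, hw2⟩ := muH_spec hmuw
    have hwpσ : ((w.1 : D), w.2) ∈ C.sg := by rw [Prod.mk.eta]; exact hwσ
    have hwpL : ((w.1 : D), w.2) ∉ C.L := by rw [Prod.mk.eta]; exact hwnL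
    obtain ⟨m₂, hμm₂, hm₂L, hm₂1, hm₂2ne, hstr₂, hLsing₂, hdeg₂2, hσw, hleafm₂, hPstar₂, hleafeq₂⟩ :=
      C.bleaf hwpσ hwpL
    have hw1X : Sum.inl w.1 ∉ X := by
      intro hmem
      have hlf : w.1 ∈ C.I.leafSet C.R X := by
        refine ⟨hmem, ?_⟩
        show (edgesD C.L w.1).ncard = 1
        rw [hLsing₂]
        exact Set.ncard_singleton _
      have hDH := (C.comp_P hXc h2 hlf).1
      omega
    have hXne : X ≠ comp C.L (Sum.inl w.1) := by
      intro hc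
      apply hw1X
      rw [hc]
      exact comp_mem_self _ _
    have hp2 : ((w.1 : D), m₂.2) = m₂ := Prod.ext hm₂1.symm rfl
    have hw2X : Sum.inr w.2 ∈ X := by rw [hw2]; exact hh'
    have harc : C.I.arc C.R C.mu X (comp C.L (Sum.inl w.1)) := by
      refine ⟨Or.inr (Or.inl ⟨⟨hXc, h2⟩, hlt⟩), Or.inl hPstar₂, hXne, hPstar₂,
        w.1, m₂.2, w.2, hleafm₂, ?_, ?_, ?_, hdeg₂2, hw2X, ?_, ?_, ?_, ?_⟩
      · rw [hp2]; exact hm₂L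
      · exact Ne.symm hm₂2ne
      · rw [Prod.mk.eta]; exact C.sg_sub hwσ
      · rw [hp2]; exact hstr₂
      · intro hPX
        exact absurd hPX.1.2 (Nat.ne_of_lt hlt)
      · intro hQX
        obtain ⟨e₀, he₀L, he₀2, -⟩ := C.Hside_edge hXc h2 hh'
        have hSo : e₀.2 ∉ C.I.S := by rw [he₀2]; exact hS h' hh'
        obtain ⟨w', hw1', hw2', hw3', hw4'⟩ := C.L_hosp he₀L hSo
        rw [he₀2, hmuw] at hw1'
        obtain rfl : w = w' := Option.some_injective _ hw1'
        refine ⟨e₀, he₀L, he₀2.trans hw2.symm, ?_⟩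
        rw [Prod.mk.eta]
        have hx : C.I.prefH h' (some w) (some e₀) := by rw [← he₀2]; exact hw4'
        rw [hw2]
        exact hx
      · intro hRX
        obtain ⟨-, hh, hXeq, -, -⟩ := hRX
        rw [hXeq, Set.ncard_singleton] at h2
        omega
    exact ⟨comp C.L (Sum.inl w.1), w.1, w.2, harc, isComponent_comp _ _,
      comp_mem_self _ _, hσw, hwpL, hw2X⟩

lemma baseR {X : Set (D ⊕ H)} (hRc : C.I.memRcal C.R X) :
    ∃ (Y : Set (D ⊕ H)) (d : D) (h' : H),
      C.I.arc C.R C.mu X Y ∧ isComponent C.L Y ∧ Sum.inl d ∈ Y ∧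
      muD C.sg d = some (d, h') ∧ (d, h') ∉ C.L ∧ Sum.inr h' ∈ X := by
  obtain ⟨hXc, h₀, hXeq, hS₀, e₀, he₀R, he₀2⟩ := hRc
  have hinrX : Sum.inr h₀ ∈ X := by rw [hXeq]; rfl
  have hLempty : ∀ e ∈ C.L, e.2 ≠ h₀ := by
    intro e heL hc
    have hmem : Sum.inl e.1 ∈ X := mem_of_edge_r hXc heL (by rw [hc]; exact hinrX)
    rw [hXeq, Set.mem_singleton_iff] at hmem
    exact Sum.inl_ne_inr hmem
  have hSo : e₀.2 ∉ C.I.S := by rw [he₀2]; exact hS₀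
  obtain ⟨w, hw1, hwσ, hw3, hw4, hw5⟩ := C.R_hosp he₀R hSo
  have hwh : w.2 = h₀ := hw3.trans he₀2
  have hwnL : w ∉ C.L := fun hc => hLempty w hc hwh
  have hwpσ : ((w.1 : D), w.2) ∈ C.sg := by rw [Prod.mk.eta]; exact hwσ
  have hwpL : ((w.1 : D), w.2) ∉ C.L := by rw [Prod.mk.eta]; exact hwnL
  obtain ⟨m₂, hμm₂, hm₂L, hm₂1, hm₂2ne, hstr₂, hLsing₂, hdeg₂2, hσw, hleafm₂, hPstar₂, hleafeq₂⟩ :=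
    C.bleaf hwpσ hwpL
  have hXne : X ≠ comp C.L (Sum.inl w.1) := by
    intro hc
    have hmem : Sum.inl w.1 ∈ X := by rw [hc]; exact comp_mem_self _ _
    rw [hXeq, Set.mem_singleton_iff] at hmem
    exact Sum.inl_ne_inr hmem
  have hp2 : ((w.1 : D), m₂.2) = m₂ := Prod.ext hm₂1.symm rfl
  have hw2X : Sum.inr w.2 ∈ X := by rw [hwh]; exact hinrX
  have hmuHw : muH C.sg w.2 = some w := muH_eq_some C.sg_matchH hwσ
  have hcard1 : X.ncard = 1 := by rw [hXeq]; exact Set.ncard_singleton _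
  have harc : C.I.arc C.R C.mu X (comp C.L (Sum.inl w.1)) := by
    refine ⟨Or.inr (Or.inr ⟨hXc, h₀, hXeq, hS₀, e₀, he₀R, he₀2⟩), Or.inl hPstar₂, hXne, hPstar₂,
      w.1, m₂.2, w.2, hleafm₂, ?_, ?_, ?_, hdeg₂2, hw2X, ?_, ?_, ?_, ?_⟩
    · rw [hp2]; exact hm₂L
    · exact Ne.symm hm₂2ne
    · rw [Prod.mk.eta]; exact C.sg_sub hwσ
    · rw [hp2]; exact hstr₂
    · intro hPX
      have h2c := hPX.1.1.2
      omega
    · intro hQX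
      have h2c := hQX.1.2
      omega
    · intro hRX
      intro e heR he2
      have hSe : e.2 ∉ C.I.S := by rw [he2, hwh]; exact hS₀
      obtain ⟨we, hwe1, hweσ, hwe3, hwe4, hwe5⟩ := C.R_hosp heR hSe
      rw [he2, hmuHw] at hwe1
      obtain rfl : w = we := Option.some_injective _ hwe1
      constructor
      · intro hsim
        rw [Prod.mk.eta]
        have hx := hwe4
        rw [he2] at hx
        exact hx
      · intro hstrμe
        rw [Prod.mk.eta]
        have hx := hwe5 hstrμe
        rw [he2] at hx
        exact hx
  exact ⟨comp C.L (Sum.inl w.1), w.1, w.2, harc, isComponent_comp _ _,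
    comp_mem_self _ _, hσw, hwpL, hw2X⟩

end Ctx

end SSMCaux
namespace SSMCaux

namespace Ctx

variable {D H : Type} [Fintype D] [Fintype H]

lemma main (C : Ctx D H) (X : Set (D ⊕ H)) (hX : C.I.memVplus C.R X) :
    ∃ Y, C.I.memVminus C.R Y ∧ Relation.ReflTransGen (C.I.arc C.R C.mu) X Y := by
  by_contra hno
  have hXc : isComponent C.L X := by
    rcases hX with ⟨hQ, -⟩ | hRc
    · exact hQ.1.1
    · exact hRc.1
  have hXnotP : ¬ C.I.memPstar C.R X := by
    rcases hX with ⟨hQ, -⟩ | hRc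
    · intro hP
      exact absurd hP.1.2 (Nat.ne_of_lt hQ.2)
    · intro hP
      obtain ⟨-, h₀, hXeq, -, -⟩ := hRc
      have h2c := hP.1.1.2
      rw [hXeq, Set.ncard_singleton] at h2c
      omega
  obtain ⟨Y₁, d₁, h₁, harc₁, hc₁, hm₁, hσ₁, hL₁, hlink₁⟩ : ∃ Y d h',
      C.I.arc C.R C.mu X Y ∧ isComponent C.L Y ∧ Sum.inl d ∈ Y ∧
      muD C.sg d = some (d, h') ∧ (d, h') ∉ C.L ∧ Sum.inr h' ∈ X := by
    rcases hX with ⟨hQ, hS⟩ | hRc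
    · exact C.baseQ hQ hS
    · exact C.baseR hRc
  have hg₁ : Good C X Y₁ d₁ h₁ :=
    ⟨Relation.ReflTransGen.single harc₁, hc₁, hm₁, hσ₁, hL₁⟩
  let T := {t : (Set (D ⊕ H)) × D × H // Good C X t.1 t.2.1 t.2.2}
  have hstepT : ∀ t : T, ∃ t' : T, Sum.inr t'.val.2.2 ∈ t.val.1 := by
    rintro ⟨⟨Y, d, h'⟩, hg⟩
    obtain ⟨Y₂, d₂, h₂, hg₂, hl⟩ := C.step X hno hg
    exact ⟨⟨⟨Y₂, d₂, h₂⟩, hg₂⟩, hl⟩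
  choose next hnext using hstepT
  let g : ℕ → T := fun n => Nat.rec (⟨⟨Y₁, d₁, h₁⟩, hg₁⟩ : T) (fun _ t => next t) n
  let c : ℕ → Set (D ⊕ H) := fun n => Nat.rec X (fun k _ => (g k).val.1) n
  have hc0 : c 0 = X := rfl
  have hcS : ∀ n, c (n + 1) = (g n).val.1 := fun _ => rfl
  have hcomps : ∀ n, isComponent C.L (c n) := by
    intro n
    cases n with
    | zero => exact hXc
    | succ k => exact (g k).2.2.1
  have hlinks : ∀ n, Sum.inr ((g n).val.2.2) ∈ c n := by
    intro n
    cases n with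
    | zero => exact hlink₁
    | succ k => exact hnext (g k)
  have hdata : ∀ n, C.I.memPstar C.R (c (n + 1)) ∧
      C.I.leafSet C.R (c (n + 1)) = {(g n).val.2.1} ∧
      muD C.sg ((g n).val.2.1) = some ((g n).val.2.1, (g n).val.2.2) := by
    intro n
    obtain ⟨hre, hcp, hmem, hσd, hnL⟩ := (g n).2
    obtain ⟨m, -, -, -, -, -, -, -, -, -, hPstar, hleafeq⟩ := C.bleaf (muD_spec hσd).1 hnL
    have hYe : (g n).val.1 = comp C.L (Sum.inl ((g n).val.2.1)) :=
      isComponent_eq_comp hcp hmem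
    refine ⟨?_, ?_, hσd⟩
    · rw [hcS n, hYe]; exact hPstar
    · rw [hcS n, hYe]; exact hleafeq
  have key : ∀ i, ∀ k, c i ≠ c (i + k + 1) := by
    intro i
    induction i with
    | zero =>
      intro k heq
      have h0 : (0 + k + 1) = k + 1 := by omega
      rw [h0, hc0] at heq
      apply hXnotP
      rw [heq]
      exact (hdata k).1
    | succ i ih =>
      intro k heq
      have h0 : (i + 1 + k + 1) = (i + k + 1) + 1 := by omega
      rw [h0] at heq
      have hd1 := (hdata i).2.1
      have hd2 := (hdata (i + k + 1)).2.1
      rw [heq, hd2] at hd1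
      have hdd : (g (i + k + 1)).val.2.1 = (g i).val.2.1 :=
        Set.singleton_eq_singleton_iff.mp hd1
      have hσ1 := (hdata i).2.2
      have hσ2 := (hdata (i + k + 1)).2.2
      rw [hdd, hσ1] at hσ2
      have hpp := Option.some_injective _ hσ2
      have hhh : (g i).val.2.2 = (g (i + k + 1)).val.2.2 := (Prod.ext_iff.mp hpp).2
      have hl1 := hlinks i
      have hl2 := hlinks (i + k + 1)
      rw [← hhh] at hl2
      exact ih k (component_eq (hcomps i) (hcomps (i + k + 1)) hl1 hl2)
  obtain ⟨i, j, hne, hcc⟩ := Finite.exists_ne_map_eq_of_infinite c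
  rcases Nat.lt_or_ge i j with hlt | hge
  · exact key i (j - i - 1) (by rw [show i + (j - i - 1) + 1 = j from by omega]; exact hcc)
  · have hlt : j < i := Nat.lt_of_le_of_ne hge hne.symm
    exact key j (i - j - 1) (by rw [show j + (i - j - 1) + 1 = i from by omega]; exact hcc.symm)

end Ctx

end SSMCaux

/-- in the bounded-degree setting with a critical hospital, if
there exists a stable matching in `G`, then every `X ∈ 𝓥⁺` has a directed path
in `𝐃` to some `Y ∈ 𝓥⁻`. -/
theorem stable_implies_paths {D H : Type} [Fintype D] [Fintype H]
    (I : SSMC D H) (hdeg : ∀ d : D, (edgesD I.E d).ncard ≤ 2)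
    (R μ : Set (D × H)) (hpre : I.preproc R μ)
    (hcrit : ∃ h : H, I.critical R μ h)
    (hstab : ∃ σ : Set (D × H), I.stable σ) :
    ∀ X : Set (D ⊕ H), I.memVplus R X →
      ∃ Y : Set (D ⊕ H), I.memVminus R Y ∧
        Relation.ReflTransGen (I.arc R μ) X Y := by
  obtain ⟨σ, hσ⟩ := hstab
  intro X hX
  exact SSMCaux.Ctx.main ⟨I, R, μ, σ, hdeg, hpre, hσ⟩ X hX
end

section
/- Let L be the edge set of a finite bipartite graph between a doctor side D and a hospital side H, let N be the inclusion-wise minimal minimizer of ρ_L over subsets of D[L], and let T be a nonempty proper subset of N with |T| ≤ |Γ_L(T)|. Then there exists a doctor d ∈ N \ T such that Γ_L(d) ∩ Γ_L(T) ≠ ∅. -/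
/-- `Γ_L(X)`: hospitals joined by an edge of `L` to a doctor of `X`. -/
def nbr {D H : Type} (L : Set (D × H)) (X : Set D) : Set H :=
  {h | ∃ d ∈ X, (d, h) ∈ L}

/-- `ρ_L(X) = |Γ_L(X)| − |X|`. -/
noncomputable def rhoL {D H : Type} (L : Set (D × H)) (X : Set D) : ℤ :=
  ((nbr L X).ncard : ℤ) - (X.ncard : ℤ)

/-- if `N` is the inclusion-wise minimal minimizer of `ρ_L` over
subsets of `D[L]` and `T` is a nonempty proper subset of `N` with
`|T| ≤ |Γ_L(T)|`, then some doctor `d ∈ N \ T` has `Γ_L(d) ∩ Γ_L(T) ≠ ∅`. -/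
theorem minimal_minimizer_neighbor {D H : Type} [Fintype D] [Fintype H]
    (L : Set (D × H)) (N T : Set D)
    (hNsub : N ⊆ {d | ∃ e ∈ L, e.1 = d})
    (hmin : ∀ X ⊆ {d : D | ∃ e ∈ L, e.1 = d}, rhoL L N ≤ rhoL L X)
    (hminimal : ∀ X ⊆ {d : D | ∃ e ∈ L, e.1 = d}, rhoL L X = rhoL L N → N ⊆ X)
    (hT : T.Nonempty) (hTN : T ⊂ N) (hcard : T.ncard ≤ (nbr L T).ncard) :
    ∃ d ∈ N \ T, (nbr L {d} ∩ nbr L T).Nonempty := by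
  by_contra hcon
  push_neg at hcon
  -- disjointness of neighborhoods
  have hdisj : nbr L (N \ T) ∩ nbr L T = ∅ := by
    ext h
    simp only [Set.mem_inter_iff, Set.mem_empty_iff_false, iff_false]
    rintro ⟨⟨d, hd, hdh⟩, hT'⟩
    have := hcon d hd
    have : h ∈ nbr L {d} ∩ nbr L T := ⟨⟨d, rfl, hdh⟩, hT'⟩
    simp_all
  have hunion : nbr L N = nbr L (N \ T) ∪ nbr L T := by
    ext h
    constructor
    · rintro ⟨d, hd, hdh⟩
      by_cases hdT : d ∈ T
      · exact Or.inr ⟨d, hdT, hdh⟩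
      · exact Or.inl ⟨d, ⟨hd, hdT⟩, hdh⟩
    · rintro (⟨d, hd, hdh⟩ | ⟨d, hd, hdh⟩)
      · exact ⟨d, hd.1, hdh⟩
      · exact ⟨d, hTN.1 hd, hdh⟩
  have hNfin : N.Finite := Set.toFinite N
  have hTfin : T.Finite := Set.toFinite T
  have hcardN : N.ncard = (N \ T).ncard + T.ncard := by
    rw [← Set.ncard_diff_add_ncard_of_subset hTN.1]
  have hcardNbr : (nbr L N).ncard = (nbr L (N \ T)).ncard + (nbr L T).ncard := by
    rw [hunion, Set.ncard_union_eq (Set.disjoint_iff_inter_eq_empty.2 hdisj)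
      (Set.toFinite _) (Set.toFinite _)]
  have hsub : N \ T ⊆ {d : D | ∃ e ∈ L, e.1 = d} := fun d hd => hNsub hd.1
  have h1 : rhoL L N ≤ rhoL L (N \ T) := hmin _ hsub
  have h2 : rhoL L (N \ T) ≤ rhoL L N := by
    unfold rhoL
    rw [hcardN, hcardNbr]
    push_cast
    omega
  have heq : rhoL L (N \ T) = rhoL L N := le_antisymm h2 h1
  have hsub2 : N ⊆ N \ T := hminimal _ hsub heq
  obtain ⟨t, ht⟩ := hT
  exact (hsub2 (hTN.1 ht)).2 ht
end

section
/- Consider the reduced instance of the strongly stable matching problem with closures obtained from an instance of the envy-free matching problem. For every D-perfect matching σ in G and every pair of distinct doctors d, d′ ∈ D with (d, p_σ(d′)) ∈ E, we have p_σ(d′) >_d p_σ(d) if and only if the edge (d, p_σ(d′)) blocks σ in the reduced instance; consequently, a D-perfect matching is envy-free if and only if it is a stable matching of the reduced instance. -/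
open Classical

variable {D H : Type}

/-- in the reduced instance of the strongly stable matching
problem with closures obtained from an envy-free matching instance
(`S = H`, doctor preferences induced by `≳_d`, hospitals indifferent among all
incident edges), for every `D`-perfect matching `σ` and distinct doctors
`d, d'` with `(d, p_σ(d')) ∈ E`, we have `p_σ(d') >_d p_σ(d)` iff the edge
`(d, p_σ(d'))` blocks `σ`; consequently, a `D`-perfect matching is envy-free
iff it is stable in the reduced instance. -/
theorem envy_free_iff_stable {D H : Type} [Fintype D] [Fintype H]
    (E : Set (D × H)) (gd : D → H → H → Prop)
    (hg_total : ∀ d h h', (d, h) ∈ E → (d, h') ∈ E → gd d h h' ∨ gd d h' h)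
    (hg_trans : ∀ d h h' h'', (d, h) ∈ E → (d, h') ∈ E → (d, h'') ∈ E →
      gd d h h' → gd d h' h'' → gd d h h'')
    (I : SSMC D H) (hIE : I.E = E) (hIS : I.S = Set.univ)
    (hIpd : ∀ d h h', (d, h) ∈ E → (d, h') ∈ E →
      (I.prefD d (some (d, h)) (some (d, h')) ↔ gd d h h'))
    (hIph : ∀ (h : H) (e f : D × H), e ∈ E → f ∈ E → e.2 = h → f.2 = h →
      I.prefH h (some e) (some f))
    (σ : Set (D × H)) (hm : I.isMatching σ) (hperf : σ.ncard = Fintype.card D) :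
    (∀ (d d' : D) (h h' : H), d ≠ d' → (d, h) ∈ σ → (d', h') ∈ σ →
        (d, h') ∈ E → ((gd d h' h ∧ ¬ gd d h h') ↔ I.blocks σ (d, h'))) ∧
    ((∀ (d d' : D) (h h' : H), d ≠ d' → (d, h) ∈ σ → (d', h') ∈ σ →
        (d, h') ∈ E → ¬ (gd d h' h ∧ ¬ gd d h h')) ↔ I.stable σ) := by
  obtain ⟨hσE, hinj1, hinj2⟩ := hm
  -- every doctor is matched
  have hall : ∀ d : D, ∃ h, (d, h) ∈ σ := by
    have himg : (Prod.fst '' σ) = Set.univ := by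
      apply Set.eq_of_subset_of_ncard_le (Set.subset_univ _)
      rw [Set.ncard_univ, Nat.card_eq_fintype_card,
        Set.ncard_image_of_injOn (fun e he f hf hef => hinj1 e he f hf hef), hperf]
    intro d
    have hd : d ∈ Prod.fst '' σ := by rw [himg]; trivial
    obtain ⟨e, he, he1⟩ := hd
    exact ⟨e.2, by rwa [← he1, Prod.mk.eta]⟩
  have hmuD : ∀ d h, (d, h) ∈ σ → muD σ d = some (d, h) := by
    intro d h hdh
    have hex : ∃ e, e ∈ σ ∧ e.1 = d := ⟨(d, h), hdh, rfl⟩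
    rw [muD, dif_pos hex]
    exact congrArg some (hinj1 _ hex.choose_spec.1 _ hdh (by rw [hex.choose_spec.2]))
  have hmuH : ∀ d h, (d, h) ∈ σ → muH σ h = some (d, h) := by
    intro d h hdh
    have hex : ∃ e, e ∈ σ ∧ e.2 = h := ⟨(d, h), hdh, rfl⟩
    rw [muH, dif_pos hex]
    exact congrArg some (hinj2 _ hex.choose_spec.1 _ hdh (by rw [hex.choose_spec.2]))
  have part1 : ∀ (d d' : D) (h h' : H), d ≠ d' → (d, h) ∈ σ → (d', h') ∈ σ →
      (d, h') ∈ E → ((gd d h' h ∧ ¬ gd d h h') ↔ I.blocks σ (d, h')) := by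
    intro d d' h h' hdd' hdh hd'h' hE
    have hdhE : (d, h) ∈ E := hIE ▸ hσE hdh
    have hd'h'E : (d', h') ∈ E := hIE ▸ hσE hd'h'
    constructor
    · rintro ⟨hg1, hg2⟩
      have hhh : h ≠ h' := by
        rintro rfl; exact hg2 hg1
      have hnot : (d, h') ∉ σ := by
        intro hc
        exact hhh (congrArg Prod.snd (hinj1 _ hdh _ hc rfl))
      have hpd : I.prefD d (some (d, h')) (muD σ d) := by
        rw [hmuD d h hdh]; exact (hIpd d h' h hE hdhE).mpr hg1
      refine ⟨hIE ▸ hE, hnot, hpd, ?_, Or.inl ⟨hpd, ?_⟩⟩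
      · rw [hmuH d' h' hd'h']
        exact ⟨hIph h' (d, h') (d', h') hE hd'h'E rfl rfl, fun _ => by simp⟩
      · rw [hmuD d h hdh]
        intro hc
        exact hg2 ((hIpd d h h' hdhE hE).mp hc)
    · rintro ⟨_, hnot, hpd, _, hstr⟩
      rw [hmuD d h hdh] at hpd
      refine ⟨(hIpd d h' h hE hdhE).mp hpd, ?_⟩
      rcases hstr with ⟨_, hnpd⟩ | ⟨⟨_, hnph⟩, _⟩
      · rw [hmuD d h hdh] at hnpd
        intro hc
        exact hnpd ((hIpd d h h' hdhE hE).mpr hc)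
      · exfalso
        apply hnph
        rw [hmuH d' h' hd'h']
        exact hIph h' (d', h') (d, h') hd'h'E hE rfl rfl
  refine ⟨part1, ?_, ?_⟩
  · intro hnoenvy
    refine ⟨⟨hσE, hinj1, hinj2⟩, ?_⟩
    rintro e ⟨heE, henot, hpd, ⟨hph, hne⟩, hstr⟩
    obtain ⟨h, hdh⟩ := hall e.1
    have hS : e.2 ∈ I.S := by rw [hIS]; trivial
    have hmne := hne hS
    have hex : ∃ f, f ∈ σ ∧ f.2 = e.2 := by
      by_contra hc
      exact hmne (by rw [muH, dif_neg hc])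
    obtain ⟨f, hf, hf2⟩ := hex
    have hne' : e.1 ≠ f.1 := by
      intro heq
      have hfe : f = (e.1, h) := hinj1 _ hf _ hdh heq.symm
      apply henot
      have h2 : e.2 = h := by rw [← hf2, hfe]
      have : e = (e.1, h) := by rw [← h2, Prod.mk.eta]
      rw [this]; exact hdh
    have hfσ : (f.1, e.2) ∈ σ := by rwa [← hf2, Prod.mk.eta]
    have heE' : (e.1, e.2) ∈ E := by rw [Prod.mk.eta]; exact hIE ▸ heE
    have hblk : I.blocks σ (e.1, e.2) := by
      rw [Prod.mk.eta]; exact ⟨heE, henot, hpd, ⟨hph, hne⟩, hstr⟩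
    exact hnoenvy e.1 f.1 h e.2 hne' hdh hfσ heE'
      ((part1 e.1 f.1 h e.2 hne' hdh hfσ heE').mpr hblk)
  · intro hst d d' h h' hdd' hdh hd'h' hE henvy
    exact hst.2 (d, h') ((part1 d d' h h' hdd' hdh hd'h' hE).mp henvy)
end
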